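/- arXiv:2006.14446 — 4 statements merged into one kernel-verified Lean document; each statement's English description precedes it below -/
import Mathlib

section
/- Let Λ be a discrete group with a proper, integer-valued length function L, and set C_n := {γ ∈ Λ : L(γ) = n} (each C_n is finite by properness). Let (B,ν) be a probability space carrying a measurable Λ-action leaving ν quasi-invariant, with Koopman representation π and Harish-Chandra function Ξ. Assume: (1) there is a polynomial P with real coefficients such that for every n with C_n ≠ ∅ one has sup_{γ∈C_n} Ξ(γ) ≤ P(n)/√|C_n|; and (2) there is M ∈ ℝ such that for every n with C_n ≠ ∅, the operator (1/|C_n|) Σ_{γ∈C_n} π(γ)/Ξ(γ) on L²(B,ν) has operator norm at most M. Then Λ has radial rapid decay with respect to L: there is a polynomial Q such that for every radial finitely supported f : Λ → ℂ, the convolution operator norm satisfies ⦀f⦀ ≤ Q(L(f))·‖f‖₂. -/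
set_option linter.unusedSectionVars false
set_option linter.unusedVariables false
set_option maxHeartbeats 1000000


open MeasureTheory
open scoped ENNReal

namespace Stmt0

variable {G : Type*} [Group G]

/-- Convolution of a finitely supported function with an arbitrary function. -/
noncomputable def conv (f : G →₀ ℂ) (ξ : G → ℂ) : G → ℂ :=
  fun g => ∑ h ∈ f.support, f h * ξ (h⁻¹ * g)

/-- The operator norm of the convolution operator `ξ ↦ f * ξ` on `ℓ²(G)` is at most `C`. -/
noncomputable def ConvOpNormLE (f : G →₀ ℂ) (C : ℝ) : Prop :=
  ∀ ξ : lp (fun _ : G => ℂ) 2, ∃ hmem : Memℓp (conv f (ξ : ∀ _ : G, ℂ)) 2,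
    ‖(⟨conv f (ξ : ∀ _ : G, ℂ), hmem⟩ : lp (fun _ : G => ℂ) 2)‖ ≤ C * ‖ξ‖

/-- The ℓ²-norm of a finitely supported function. -/
noncomputable def l2norm (f : G →₀ ℂ) : ℝ :=
  Real.sqrt (∑ g ∈ f.support, ‖f g‖ ^ 2)

/-- `L(f) = max {L g : f g ≠ 0}`. -/
noncomputable def lenOf (L : G → ℝ) (f : G →₀ ℂ) : ℝ :=
  sSup (L '' {g | f g ≠ 0})

def IsLengthFun (L : G → ℝ) : Prop :=
  L 1 = 0 ∧ (∀ g, 0 ≤ L g) ∧ (∀ g, L g⁻¹ = L g) ∧ ∀ g h, L (g * h) ≤ L g + L h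

def Radial (L : G → ℝ) (f : G →₀ ℂ) : Prop :=
  ∀ g₁ g₂, L g₁ = L g₂ → f g₁ = f g₂

/-- Radial rapid decay with respect to `L`. -/
def HasRRD (L : G → ℝ) : Prop :=
  ∃ Q : Polynomial ℝ, ∀ f : G →₀ ℂ, Radial L f →
    ConvOpNormLE f (Q.eval (lenOf L f) * l2norm f)

end Stmt0


open MeasureTheory
open scoped ENNReal

namespace RRDAux

variable {Λ : Type*} [Group Λ] {B : Type*} [MeasurableSpace B]
  (ν : Measure B) [IsProbabilityMeasure ν] [MulAction Λ B]

/-- The Radon–Nikodym cocycle. -/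
noncomputable def cc (g : Λ) (b : B) : ℝ≥0∞ :=
  (ν.map (fun b' : B => g • b')).rnDeriv ν b

/-- The smul map as a measurable equivalence. -/
noncomputable def smulEquiv (hmeas : ∀ γ : Λ, Measurable fun b : B => γ • b) (γ : Λ) :
    B ≃ᵐ B where
  toFun := fun b => γ • b
  invFun := fun b => γ⁻¹ • b
  left_inv := fun b => inv_smul_smul γ b
  right_inv := fun b => smul_inv_smul γ b
  measurable_toFun := hmeas γ
  measurable_invFun := hmeas γ⁻¹

lemma prob_map (hmeas : ∀ γ : Λ, Measurable fun b : B => γ • b) (γ : Λ) :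
    IsProbabilityMeasure (ν.map (fun b : B => γ • b)) :=
  Measure.isProbabilityMeasure_map (hmeas γ).aemeasurable

lemma cc_meas (g : Λ) : Measurable (cc ν g) :=
  Measure.measurable_rnDeriv _ _

lemma cc_lintegral (hmeas : ∀ γ : Λ, Measurable fun b : B => γ • b)
    (hqinv : ∀ γ : Λ, ν.map (fun b : B => γ • b) ≪ ν) (g : Λ) :
    ∫⁻ b, cc ν g b ∂ν = 1 := by
  haveI := prob_map ν hmeas g
  unfold cc
  rw [Measure.lintegral_rnDeriv (hqinv g)]
  exact measure_univ

lemma cc_lt_top (hmeas : ∀ γ : Λ, Measurable fun b : B => γ • b) (g : Λ) :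
    ∀ᵐ b ∂ν, cc ν g b < ∞ := by
  haveI := prob_map ν hmeas g
  exact Measure.rnDeriv_lt_top _ _

lemma ae_smul (hmeas : ∀ γ : Λ, Measurable fun b : B => γ • b)
    (hqinv : ∀ γ : Λ, ν.map (fun b : B => γ • b) ≪ ν) (γ : Λ) {p : B → Prop}
    (h : ∀ᵐ b ∂ν, p b) : ∀ᵐ b ∂ν, p (γ • b) := by
  rw [ae_iff] at h ⊢
  set s : Set B := {b | ¬ p b} with hs
  have hsub : {b | ¬ p (γ • b)} ⊆ (fun b : B => γ • b) ⁻¹' (toMeasurable ν s) := by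
    intro b hb
    exact subset_toMeasurable ν s hb
  refine measure_mono_null hsub ?_
  have hmap : ν ((fun b : B => γ • b) ⁻¹' (toMeasurable ν s))
      = (ν.map (fun b : B => γ • b)) (toMeasurable ν s) := by
    rw [Measure.map_apply (hmeas γ) (measurableSet_toMeasurable ν s)]
  rw [hmap]
  refine hqinv γ ?_
  rw [measure_toMeasurable]
  exact h

@[simp] lemma smulEquiv_coe (hmeas : ∀ γ : Λ, Measurable fun b : B => γ • b) (γ : Λ) :
    ⇑(smulEquiv (B := B) hmeas γ) = fun b : B => γ • b := rfl

lemma cc_cocycle (hmeas : ∀ γ : Λ, Measurable fun b : B => γ • b)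
    (hqinv : ∀ γ : Λ, ν.map (fun b : B => γ • b) ≪ ν) (γ x : Λ) :
    (fun b => cc ν (γ * x) b) =ᵐ[ν] fun b => cc ν γ b * cc ν x (γ⁻¹ • b) := by
  haveI := prob_map ν hmeas γ
  haveI := prob_map ν hmeas x
  haveI := prob_map ν hmeas (γ * x)
  have e := (smulEquiv (B := B) hmeas γ).measurableEmbedding
  have h1 : (ν.map (fun b : B => x • b)).map (fun b : B => γ • b)
      = ν.map (fun b : B => (γ * x) • b) := by
    rw [Measure.map_map (hmeas γ) (hmeas x)]
    congr 1
    funext b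
    simp [mul_smul]
  have h2 := e.rnDeriv_map (ν.map (fun b : B => x • b)) ν
  rw [smulEquiv_coe] at h2
  rw [h1] at h2
  -- h2 : (fun b => rnDeriv κ(γx) κγ (γ • b)) =ᵐ[ν] rnDeriv κx ν
  have h2b : (fun b : B => (ν.map (fun b' : B => (γ * x) • b')).rnDeriv
      (ν.map (fun b' : B => γ • b')) b) =ᵐ[ν] fun b => cc ν x (γ⁻¹ • b) := by
    have h2a := ae_smul ν hmeas hqinv γ⁻¹ h2
    filter_upwards [h2a] with b hb
    simp only [smul_inv_smul] at hb
    exact hb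
  have h3 : ν.map (fun b : B => (γ * x) • b) ≪ ν.map (fun b : B => γ • b) := by
    rw [← h1]
    have := e.absolutelyContinuous_map (hqinv x)
    rw [smulEquiv_coe] at this
    exact this
  have h4 := Measure.rnDeriv_mul_rnDeriv (κ := ν) h3
  filter_upwards [h2b, h4] with b hb1 hb2
  show cc ν (γ * x) b = cc ν γ b * cc ν x (γ⁻¹ • b)
  unfold cc
  rw [← hb2]
  show _ * (ν.map (fun b' : B => γ • b')).rnDeriv ν b = _
  rw [hb1, mul_comm]
  rfl

lemma sqrt_le_one_add {t : ℝ} (h : 0 ≤ t) : Real.sqrt t ≤ 1 + t := by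
  nlinarith [Real.sq_sqrt h, Real.sqrt_nonneg t]

lemma sqrt_cc_integrable (hmeas : ∀ γ : Λ, Measurable fun b : B => γ • b)
    (hqinv : ∀ γ : Λ, ν.map (fun b : B => γ • b) ≪ ν) (g : Λ) :
    Integrable (fun b => Real.sqrt ((cc ν g b).toReal)) ν := by
  refine ⟨((cc_meas ν g).ennreal_toReal.sqrt).aestronglyMeasurable, ?_⟩
  show (∫⁻ b, (‖Real.sqrt ((cc ν g b).toReal)‖₊ : ℝ≥0∞) ∂ν) < ∞
  have hb : ∀ b, (‖Real.sqrt ((cc ν g b).toReal)‖₊ : ℝ≥0∞) ≤ 1 + cc ν g b := by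
    intro b
    have h0 : (0:ℝ) ≤ Real.sqrt ((cc ν g b).toReal) := Real.sqrt_nonneg _
    rw [← enorm_eq_nnnorm, Real.enorm_eq_ofReal h0]
    rcases eq_or_ne (cc ν g b) ∞ with h | h
    · rw [h]; exact le_top.trans_eq (by simp)
    · calc ENNReal.ofReal (Real.sqrt ((cc ν g b).toReal))
          ≤ ENNReal.ofReal (1 + (cc ν g b).toReal) :=
            ENNReal.ofReal_le_ofReal (sqrt_le_one_add ENNReal.toReal_nonneg)
        _ = 1 + cc ν g b := by
            rw [ENNReal.ofReal_add zero_le_one ENNReal.toReal_nonneg]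
            rw [ENNReal.ofReal_one, ENNReal.ofReal_toReal h]
  calc ∫⁻ b, (‖Real.sqrt ((cc ν g b).toReal)‖₊ : ℝ≥0∞) ∂ν ≤ ∫⁻ b, (1 + cc ν g b) ∂ν :=
        lintegral_mono hb
    _ = 1 + 1 := by
        rw [lintegral_add_left measurable_const, cc_lintegral ν hmeas hqinv g]
        simp
    _ < ∞ := by norm_num

lemma xi_pos (hmeas : ∀ γ : Λ, Measurable fun b : B => γ • b)
    (hqinv : ∀ γ : Λ, ν.map (fun b : B => γ • b) ≪ ν)
    (Ξ : Λ → ℝ)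
    (hΞ : ∀ γ : Λ,
      Ξ γ = ∫ b, Real.sqrt (((ν.map (fun b' : B => γ • b')).rnDeriv ν b).toReal) ∂ν)
    (γ : Λ) : 0 < Ξ γ := by
  have hX : Ξ γ = ∫ b, Real.sqrt ((cc ν γ b).toReal) ∂ν := hΞ γ
  have hnn : 0 ≤ Ξ γ := by
    rw [hX]; exact integral_nonneg fun b => Real.sqrt_nonneg _
  rcases hnn.lt_or_eq with h | h
  · exact h
  exfalso
  have hzero : (fun b => Real.sqrt ((cc ν γ b).toReal)) =ᵐ[ν] 0 := by
    rw [← integral_eq_zero_iff_of_nonneg (fun b => Real.sqrt_nonneg _)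
      (sqrt_cc_integrable ν hmeas hqinv γ)]
    rw [← hX]
    exact h.symm
  have hcc0 : (fun b => cc ν γ b) =ᵐ[ν] 0 := by
    filter_upwards [hzero, cc_lt_top ν hmeas γ] with b hb1 hb2
    have hble : (cc ν γ b).toReal ≤ 0 := Real.sqrt_eq_zero'.mp hb1
    have h0 : (0:ℝ) ≤ (cc ν γ b).toReal := ENNReal.toReal_nonneg
    have : (cc ν γ b).toReal = 0 := le_antisymm hble h0
    show cc ν γ b = 0
    exact (ENNReal.toReal_eq_zero_iff _).mp this |>.resolve_right hb2.ne
  have : ∫⁻ b, cc ν γ b ∂ν = 0 := by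
    rw [lintegral_congr_ae hcc0]; simp
  rw [cc_lintegral ν hmeas hqinv γ] at this
  simp at this

lemma lintegral_ofReal_toReal_cc (hmeas : ∀ γ : Λ, Measurable fun b : B => γ • b)
    (hqinv : ∀ γ : Λ, ν.map (fun b : B => γ • b) ≪ ν) (g : Λ) :
    ∫⁻ b, ENNReal.ofReal ((cc ν g b).toReal) ∂ν = 1 := by
  have : (fun b => ENNReal.ofReal ((cc ν g b).toReal)) =ᵐ[ν] fun b => cc ν g b := by
    filter_upwards [cc_lt_top ν hmeas g] with b hb
    exact ENNReal.ofReal_toReal hb.ne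
  rw [lintegral_congr_ae this, cc_lintegral ν hmeas hqinv g]

lemma meas_sqrt_sum (A : Finset Λ) (w : Λ → ℝ) :
    Measurable (fun b => Real.sqrt (∑ x ∈ A, w x ^ 2 * (cc ν x b).toReal)) := by
  refine Measurable.sqrt ?_
  exact Finset.measurable_sum A fun x _ => ((cc_meas ν x).ennreal_toReal.const_mul _)

lemma eLpNorm_sqrt_sum (hmeas : ∀ γ : Λ, Measurable fun b : B => γ • b)
    (hqinv : ∀ γ : Λ, ν.map (fun b : B => γ • b) ≪ ν)
    (A : Finset Λ) (w : Λ → ℝ) :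
    eLpNorm (fun b => Real.sqrt (∑ x ∈ A, w x ^ 2 * (cc ν x b).toReal)) 2 ν
      = ENNReal.ofReal (Real.sqrt (∑ x ∈ A, w x ^ 2)) := by
  have hs : ∀ b, (0:ℝ) ≤ ∑ x ∈ A, w x ^ 2 * (cc ν x b).toReal := fun b =>
    Finset.sum_nonneg fun x _ => mul_nonneg (sq_nonneg _) ENNReal.toReal_nonneg
  have hSS : (0:ℝ) ≤ ∑ x ∈ A, w x ^ 2 := Finset.sum_nonneg fun x _ => sq_nonneg _
  rw [eLpNorm_eq_lintegral_rpow_enorm_toReal (by norm_num) (by norm_num)]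
  simp only [enorm_eq_nnnorm]
  have hint : ∫⁻ b, (‖Real.sqrt (∑ x ∈ A, w x ^ 2 * (cc ν x b).toReal)‖₊ : ℝ≥0∞)
      ^ (2:ℝ≥0∞).toReal ∂ν = ENNReal.ofReal (∑ x ∈ A, w x ^ 2) := by
    have hpt : ∀ b, (‖Real.sqrt (∑ x ∈ A, w x ^ 2 * (cc ν x b).toReal)‖₊ : ℝ≥0∞)
        ^ (2:ℝ≥0∞).toReal = ENNReal.ofReal (∑ x ∈ A, w x ^ 2 * (cc ν x b).toReal) := by
      intro b
      rw [← enorm_eq_nnnorm, Real.enorm_eq_ofReal (Real.sqrt_nonneg _),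
        ENNReal.ofReal_rpow_of_nonneg (Real.sqrt_nonneg _) ENNReal.toReal_nonneg]
      congr 1
      rw [show ((2:ℝ≥0∞).toReal) = ((2:ℕ):ℝ) by norm_num, Real.rpow_natCast]
      rw [sq, Real.mul_self_sqrt (hs b)]
    simp only [hpt]
    rw [show (fun b => ENNReal.ofReal (∑ x ∈ A, w x ^ 2 * (cc ν x b).toReal))
        = fun b => ∑ x ∈ A, ENNReal.ofReal (w x ^ 2 * (cc ν x b).toReal) by
      funext b
      exact ENNReal.ofReal_sum_of_nonneg fun x _ =>
        mul_nonneg (sq_nonneg _) ENNReal.toReal_nonneg]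
    rw [lintegral_finset_sum _ fun x _ => by
      exact ((cc_meas ν x).ennreal_toReal.const_mul _).ennreal_ofReal]
    have : ∀ x ∈ A, ∫⁻ b, ENNReal.ofReal (w x ^ 2 * (cc ν x b).toReal) ∂ν
        = ENNReal.ofReal (w x ^ 2) := by
      intro x _
      have hpt2 : ∀ b, ENNReal.ofReal (w x ^ 2 * (cc ν x b).toReal)
          = ENNReal.ofReal (w x ^ 2) * ENNReal.ofReal ((cc ν x b).toReal) := fun b =>
        ENNReal.ofReal_mul (sq_nonneg _)
      simp only [hpt2]
      rw [lintegral_const_mul _ ((cc_meas ν x).ennreal_toReal.ennreal_ofReal)]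
      rw [lintegral_ofReal_toReal_cc ν hmeas hqinv x, mul_one]
    rw [Finset.sum_congr rfl this]
    exact (ENNReal.ofReal_sum_of_nonneg fun x _ => sq_nonneg _).symm
  rw [hint]
  rw [← Real.mul_self_sqrt hSS, ← sq, ENNReal.ofReal_pow (Real.sqrt_nonneg _)]
  rw [← ENNReal.rpow_natCast _ 2, ← ENNReal.rpow_mul]
  norm_num

lemma eLpNorm2_eq (f : B → ℝ) (h0 : ∀ b, 0 ≤ f b) :
    eLpNorm f 2 ν = (∫⁻ b, ENNReal.ofReal (f b) ^ (2:ℝ) ∂ν) ^ ((1:ℝ)/2) := by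
  rw [eLpNorm_eq_lintegral_rpow_enorm_toReal (by norm_num) (by norm_num)]
  simp only [ENNReal.toReal_ofNat]
  congr 1
  refine lintegral_congr fun b => ?_
  rw [Real.enorm_eq_ofReal (h0 b)]

lemma lintegral_mul_le_eLpNorm2 (f g : B → ℝ) (hf : Measurable f) (hg : Measurable g)
    (hf0 : ∀ b, 0 ≤ f b) (hg0 : ∀ b, 0 ≤ g b) :
    ∫⁻ b, ENNReal.ofReal (f b) * ENNReal.ofReal (g b) ∂ν
      ≤ eLpNorm f 2 ν * eLpNorm g 2 ν := by
  have hconj : (2:ℝ).HolderConjugate 2 := Real.HolderConjugate.two_two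
  have h := ENNReal.lintegral_mul_le_Lp_mul_Lq ν hconj
    (hf.ennreal_ofReal.aemeasurable) (hg.ennreal_ofReal.aemeasurable)
  rw [eLpNorm2_eq ν f hf0, eLpNorm2_eq ν g hg0]
  exact h

/-- The core bilinear estimate. -/
lemma coreA (hmeas : ∀ γ : Λ, Measurable fun b : B => γ • b)
    (hqinv : ∀ γ : Λ, ν.map (fun b : B => γ • b) ≪ ν)
    {L : Λ → ℝ} (hfin : ∀ n : ℕ, {γ : Λ | L γ = n}.Finite)
    (Ξ : Λ → ℝ)
    (hΞ : ∀ γ : Λ,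
      Ξ γ = ∫ b, Real.sqrt (((ν.map (fun b' : B => γ • b')).rnDeriv ν b).toReal) ∂ν)
    (P : Polynomial ℝ)
    (h1 : ∀ n : ℕ, ∀ γ ∈ (hfin n).toFinset,
      Ξ γ ≤ P.eval (n : ℝ) / Real.sqrt ((hfin n).toFinset.card))
    (M : ℝ)
    (h2 : ∀ n : ℕ, ((hfin n).toFinset).Nonempty → ∀ h : B → ℂ, MemLp h 2 ν →
      eLpNorm (fun b : B =>
          (((hfin n).toFinset.card : ℂ))⁻¹ *
            ∑ γ ∈ (hfin n).toFinset,
              ((Real.sqrt (((ν.map (fun b' : B => γ • b')).rnDeriv ν b).toReal) : ℂ) *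
                  h (γ⁻¹ • b)) / ((Ξ γ : ℝ) : ℂ))
        2 ν ≤ ENNReal.ofReal M * eLpNorm h 2 ν)
    (n : ℕ) (hne : ((hfin n).toFinset).Nonempty)
    (u v : Λ → ℝ) (hu : ∀ x, 0 ≤ u x) (hv : ∀ x, 0 ≤ v x)
    (F E : Finset Λ)
    (hE : ∀ γ ∈ (hfin n).toFinset, ∀ g ∈ F, γ⁻¹ * g ∈ E) :
    ∑ γ ∈ (hfin n).toFinset, ∑ g ∈ F, u (γ⁻¹ * g) * v g ≤
      max M 0 * P.eval (n : ℝ) * Real.sqrt ((hfin n).toFinset.card) *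
        Real.sqrt (∑ x ∈ E, u x ^ 2) * Real.sqrt (∑ g ∈ F, v g ^ 2) := by
  classical
  set Cn := (hfin n).toFinset with hCnDef
  set card : ℝ := (Cn.card : ℝ) with hcardDef
  have hcard_pos : (0:ℝ) < card := by
    have h := Finset.card_pos.mpr hne
    rw [hcardDef]
    exact_mod_cast h
  have hscard_pos : (0:ℝ) < Real.sqrt card := Real.sqrt_pos.mpr hcard_pos
  set U : ℝ := Real.sqrt (∑ x ∈ E, u x ^ 2) with hUdef
  set V : ℝ := Real.sqrt (∑ g ∈ F, v g ^ 2) with hVdef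
  have hU0 : 0 ≤ U := Real.sqrt_nonneg _
  have hV0 : 0 ≤ V := Real.sqrt_nonneg _
  have hXpos : ∀ γ : Λ, 0 < Ξ γ := xi_pos ν hmeas hqinv Ξ hΞ
  set M' : ℝ := max M 0 with hM'def
  have hM'0 : 0 ≤ M' := le_max_right _ _
  -- positivity of P.eval n
  have hPn_pos : 0 < P.eval (n:ℝ) := by
    obtain ⟨γ₀, hγ₀⟩ := hne
    have h1' := h1 n γ₀ hγ₀
    have := (hXpos γ₀).trans_le h1'
    have := mul_pos this hscard_pos
    rw [div_mul_cancel₀] at this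
    · exact this
    · exact hscard_pos.ne'
  set H1 : B → ℝ := fun b => Real.sqrt (∑ x ∈ E, u x ^ 2 * (cc ν x b).toReal) with hH1def
  set H2 : B → ℝ := fun b => Real.sqrt (∑ g ∈ F, v g ^ 2 * (cc ν g b).toReal) with hH2def
  have hH1m : Measurable H1 := meas_sqrt_sum ν E u
  have hH2m : Measurable H2 := meas_sqrt_sum ν F v
  have hH1nn : ∀ b, 0 ≤ H1 b := fun b => Real.sqrt_nonneg _
  have hH2nn : ∀ b, 0 ≤ H2 b := fun b => Real.sqrt_nonneg _
  have hH1norm : eLpNorm H1 2 ν = ENNReal.ofReal U := eLpNorm_sqrt_sum ν hmeas hqinv E u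
  have hH2norm : eLpNorm H2 2 ν = ENNReal.ofReal V := eLpNorm_sqrt_sum ν hmeas hqinv F v
  -- Step K1: pointwise Cauchy-Schwarz estimate
  have hK1 : ∀ γ ∈ Cn, ∀ᵐ b ∂ν,
      (∑ g ∈ F, u (γ⁻¹ * g) * v g * (cc ν g b).toReal)
        ≤ Real.sqrt ((cc ν γ b).toReal) * H1 (γ⁻¹ • b) * H2 b := by
    intro γ hγ
    have hco : ∀ᵐ b ∂ν, ∀ x ∈ (E:Set Λ), cc ν (γ * x) b = cc ν γ b * cc ν x (γ⁻¹ • b) := by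
      rw [ae_ball_iff E.countable_toSet]
      intro x _
      exact cc_cocycle ν hmeas hqinv γ x
    filter_upwards [hco] with b hb
    have hstep1 : Real.sqrt ((cc ν γ b).toReal) * H1 (γ⁻¹ • b)
        = Real.sqrt (∑ x ∈ E, u x ^ 2 * (cc ν (γ * x) b).toReal) := by
      rw [hH1def]
      simp only
      rw [← Real.sqrt_mul ENNReal.toReal_nonneg]
      congr 1
      rw [Finset.mul_sum]
      refine Finset.sum_congr rfl fun x hx => ?_
      rw [hb x hx, ENNReal.toReal_mul]
      ring
    have hstep4 : (∑ g ∈ F, u (γ⁻¹ * g) ^ 2 * (cc ν g b).toReal)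
        ≤ ∑ x ∈ E, u x ^ 2 * (cc ν (γ * x) b).toReal := by
      have hinj : ∀ x ∈ F, ∀ y ∈ F, γ⁻¹ * x = γ⁻¹ * y → x = y := by
        intro x _ y _ h
        exact mul_left_cancel h
      calc (∑ g ∈ F, u (γ⁻¹ * g) ^ 2 * (cc ν g b).toReal)
          = ∑ g ∈ F, u (γ⁻¹ * g) ^ 2 * (cc ν (γ * (γ⁻¹ * g)) b).toReal := by
            refine Finset.sum_congr rfl fun g _ => ?_
            rw [mul_inv_cancel_left]
        _ = ∑ x ∈ F.image (fun g => γ⁻¹ * g), u x ^ 2 * (cc ν (γ * x) b).toReal := by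
            rw [Finset.sum_image hinj]
        _ ≤ ∑ x ∈ E, u x ^ 2 * (cc ν (γ * x) b).toReal := by
            refine Finset.sum_le_sum_of_subset_of_nonneg ?_ fun x _ _ =>
              mul_nonneg (sq_nonneg _) ENNReal.toReal_nonneg
            intro x hx
            obtain ⟨g, hg, rfl⟩ := Finset.mem_image.mp hx
            exact hE γ hγ g hg
    have hCS : (∑ g ∈ F, u (γ⁻¹ * g) * v g * (cc ν g b).toReal)
        ≤ Real.sqrt (∑ g ∈ F, u (γ⁻¹ * g) ^ 2 * (cc ν g b).toReal)
          * Real.sqrt (∑ g ∈ F, v g ^ 2 * (cc ν g b).toReal) := by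
      have hh := Finset.sum_mul_sq_le_sq_mul_sq F
        (fun g => u (γ⁻¹ * g) * Real.sqrt ((cc ν g b).toReal))
        (fun g => v g * Real.sqrt ((cc ν g b).toReal))
      have hterm : (∑ g ∈ F, (u (γ⁻¹ * g) * Real.sqrt ((cc ν g b).toReal))
          * (v g * Real.sqrt ((cc ν g b).toReal)))
          = ∑ g ∈ F, u (γ⁻¹ * g) * v g * (cc ν g b).toReal := by
        refine Finset.sum_congr rfl fun g _ => ?_
        have hss : Real.sqrt ((cc ν g b).toReal) * Real.sqrt ((cc ν g b).toReal)
            = (cc ν g b).toReal := Real.mul_self_sqrt ENNReal.toReal_nonneg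
        calc (u (γ⁻¹ * g) * Real.sqrt ((cc ν g b).toReal))
            * (v g * Real.sqrt ((cc ν g b).toReal))
            = u (γ⁻¹ * g) * v g * (Real.sqrt ((cc ν g b).toReal)
              * Real.sqrt ((cc ν g b).toReal)) := by ring
          _ = u (γ⁻¹ * g) * v g * (cc ν g b).toReal := by rw [hss]
      have hsq1 : (∑ g ∈ F, (u (γ⁻¹ * g) * Real.sqrt ((cc ν g b).toReal)) ^ 2)
          = ∑ g ∈ F, u (γ⁻¹ * g) ^ 2 * (cc ν g b).toReal := by
        refine Finset.sum_congr rfl fun g _ => ?_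
        rw [mul_pow, sq (Real.sqrt _), Real.mul_self_sqrt ENNReal.toReal_nonneg]
      have hsq2 : (∑ g ∈ F, (v g * Real.sqrt ((cc ν g b).toReal)) ^ 2)
          = ∑ g ∈ F, v g ^ 2 * (cc ν g b).toReal := by
        refine Finset.sum_congr rfl fun g _ => ?_
        rw [mul_pow, sq (Real.sqrt _), Real.mul_self_sqrt ENNReal.toReal_nonneg]
      rw [hterm, hsq1, hsq2] at hh
      have hAnn : 0 ≤ ∑ g ∈ F, u (γ⁻¹ * g) * v g * (cc ν g b).toReal :=
        Finset.sum_nonneg fun g _ => mul_nonneg (mul_nonneg (hu _) (hv _))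
          ENNReal.toReal_nonneg
      calc (∑ g ∈ F, u (γ⁻¹ * g) * v g * (cc ν g b).toReal)
          = Real.sqrt ((∑ g ∈ F, u (γ⁻¹ * g) * v g * (cc ν g b).toReal) ^ 2) :=
            (Real.sqrt_sq hAnn).symm
        _ ≤ Real.sqrt ((∑ g ∈ F, u (γ⁻¹ * g) ^ 2 * (cc ν g b).toReal)
              * ∑ g ∈ F, v g ^ 2 * (cc ν g b).toReal) := Real.sqrt_le_sqrt hh
        _ = _ := Real.sqrt_mul (Finset.sum_nonneg fun g _ =>
              mul_nonneg (sq_nonneg _) ENNReal.toReal_nonneg) _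
    calc (∑ g ∈ F, u (γ⁻¹ * g) * v g * (cc ν g b).toReal)
        ≤ Real.sqrt (∑ g ∈ F, u (γ⁻¹ * g) ^ 2 * (cc ν g b).toReal) * H2 b := hCS
      _ ≤ Real.sqrt (∑ x ∈ E, u x ^ 2 * (cc ν (γ * x) b).toReal) * H2 b := by
          refine mul_le_mul_of_nonneg_right (Real.sqrt_le_sqrt hstep4) (hH2nn b)
      _ = Real.sqrt ((cc ν γ b).toReal) * H1 (γ⁻¹ • b) * H2 b := by rw [hstep1]
  -- the averaged function φ
  set φ : B → ℝ := fun b => ∑ γ ∈ Cn, Real.sqrt ((cc ν γ b).toReal) * H1 (γ⁻¹ • b) / Ξ γ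
    with hφdef
  have hφm : Measurable φ := by
    refine Finset.measurable_sum _ fun γ _ => ?_
    exact (((cc_meas ν γ).ennreal_toReal.sqrt).mul (hH1m.comp (hmeas γ⁻¹))).div_const _
  have hφnn : ∀ b, 0 ≤ φ b := fun b => Finset.sum_nonneg fun γ _ =>
    div_nonneg (mul_nonneg (Real.sqrt_nonneg _) (hH1nn _)) (hXpos γ).le
  -- membership of H1 in L²
  have hH1cnorm : eLpNorm (fun b => ((H1 b : ℝ) : ℂ)) 2 ν = eLpNorm H1 2 ν := by
    rw [← eLpNorm_norm (fun b => ((H1 b : ℝ) : ℂ)), ← eLpNorm_norm H1]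
    refine eLpNorm_congr_ae (Filter.Eventually.of_forall fun b => ?_)
    simp
  have hmem : MemLp (fun b => ((H1 b : ℝ) : ℂ)) 2 ν := by
    constructor
    · exact (Complex.measurable_ofReal.comp hH1m).aestronglyMeasurable
    · rw [hH1cnorm, hH1norm]
      exact ENNReal.ofReal_lt_top
  have hG := h2 n hne (fun b => ((H1 b : ℝ) : ℂ)) hmem
  -- rewrite the h2 function as a real one
  have heq : (fun b : B =>
      ((Cn.card : ℂ))⁻¹ *
        ∑ γ ∈ Cn,
          ((Real.sqrt (((ν.map (fun b' : B => γ • b')).rnDeriv ν b).toReal) : ℂ) *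
              (fun b => ((H1 b : ℝ) : ℂ)) (γ⁻¹ • b)) / ((Ξ γ : ℝ) : ℂ))
      = fun b : B => ((card⁻¹ * φ b : ℝ) : ℂ) := by
    funext b
    rw [hφdef]
    simp only
    unfold cc
    push_cast
    rw [Finset.mul_sum, Finset.mul_sum]
    rfl
  have hGnorm : eLpNorm (fun b : B => ((card⁻¹ * φ b : ℝ) : ℂ)) 2 ν
      ≤ ENNReal.ofReal M * ENNReal.ofReal U := by
    rw [← heq]
    refine hG.trans ?_
    rw [hH1cnorm, hH1norm]
  -- convert to a bound on eLpNorm φ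
  have hφbound : ENNReal.ofReal (card⁻¹) * eLpNorm φ 2 ν
      ≤ ENNReal.ofReal M * ENNReal.ofReal U := by
    have e1 : eLpNorm (fun b : B => ((card⁻¹ * φ b : ℝ) : ℂ)) 2 ν
        = eLpNorm (fun b => card⁻¹ * φ b) 2 ν := by
      rw [← eLpNorm_norm (fun b : B => ((card⁻¹ * φ b : ℝ) : ℂ)),
        ← eLpNorm_norm (fun b => card⁻¹ * φ b)]
      refine eLpNorm_congr_ae (Filter.Eventually.of_forall fun b => ?_)
      simp
    have e2 : eLpNorm (fun b => card⁻¹ * φ b) 2 ν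
        = ENNReal.ofReal (card⁻¹) * eLpNorm φ 2 ν := by
      have hsm : (fun b => card⁻¹ * φ b) = (card⁻¹ : ℝ) • φ := rfl
      rw [hsm, eLpNorm_const_smul]
      rw [Real.enorm_eq_ofReal (inv_nonneg.mpr hcard_pos.le)]
    rw [← e2, ← e1]
    exact hGnorm
  have hφ2 : eLpNorm φ 2 ν
      ≤ ENNReal.ofReal card * (ENNReal.ofReal M' * ENNReal.ofReal U) := by
    have hid : eLpNorm φ 2 ν
        = ENNReal.ofReal card * (ENNReal.ofReal (card⁻¹) * eLpNorm φ 2 ν) := by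
      rw [← mul_assoc, ← ENNReal.ofReal_mul hcard_pos.le,
        mul_inv_cancel₀ hcard_pos.ne', ENNReal.ofReal_one, one_mul]
    rw [hid]
    refine mul_le_mul_right (hφbound.trans ?_) _
    exact mul_le_mul_left (ENNReal.ofReal_le_ofReal (le_max_left M 0)) _
  -- Hölder
  have hHold : ∫⁻ b, ENNReal.ofReal (φ b) * ENNReal.ofReal (H2 b) ∂ν
      ≤ ENNReal.ofReal card * (ENNReal.ofReal M' * ENNReal.ofReal U)
        * ENNReal.ofReal V := by
    refine (lintegral_mul_le_eLpNorm2 ν φ H2 hφm hH2m hφnn hH2nn).trans ?_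
    rw [hH2norm]
    exact mul_le_mul_left hφ2 _
  -- lower bound for the integral
  set S : ℝ := ∑ γ ∈ Cn, ∑ g ∈ F, u (γ⁻¹ * g) * v g with hSdef
  have hSnn_terms : ∀ γ ∈ Cn, (0:ℝ) ≤ ∑ g ∈ F, u (γ⁻¹ * g) * v g := fun γ _ =>
    Finset.sum_nonneg fun g _ => mul_nonneg (hu _) (hv _)
  have hSnn : 0 ≤ S := Finset.sum_nonneg hSnn_terms
  have htermmeas : ∀ γ : Λ, Measurable fun b =>
      ENNReal.ofReal ((Real.sqrt ((cc ν γ b).toReal) * H1 (γ⁻¹ • b) / Ξ γ) * H2 b) := by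
    intro γ
    exact (((((cc_meas ν γ).ennreal_toReal.sqrt).mul
      (hH1m.comp (hmeas γ⁻¹))).div_const _).mul hH2m).ennreal_ofReal
  have hlow : ENNReal.ofReal (Real.sqrt card / P.eval (n:ℝ)) * ENNReal.ofReal S
      ≤ ∫⁻ b, ENNReal.ofReal (φ b) * ENNReal.ofReal (H2 b) ∂ν := by
    have hexp : ∀ b, ENNReal.ofReal (φ b) * ENNReal.ofReal (H2 b)
        = ∑ γ ∈ Cn, ENNReal.ofReal
            ((Real.sqrt ((cc ν γ b).toReal) * H1 (γ⁻¹ • b) / Ξ γ) * H2 b) := by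
      intro b
      rw [← ENNReal.ofReal_mul (hφnn b), hφdef]
      simp only
      rw [Finset.sum_mul]
      exact ENNReal.ofReal_sum_of_nonneg fun γ _ => mul_nonneg
        (div_nonneg (mul_nonneg (Real.sqrt_nonneg _) (hH1nn _)) (hXpos γ).le) (hH2nn b)
    rw [lintegral_congr fun b => hexp b]
    rw [lintegral_finset_sum _ fun γ _ => htermmeas γ]
    have hterm : ∀ γ ∈ Cn,
        ENNReal.ofReal (Real.sqrt card / P.eval (n:ℝ))
          * ENNReal.ofReal (∑ g ∈ F, u (γ⁻¹ * g) * v g)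
        ≤ ∫⁻ b, ENNReal.ofReal
            ((Real.sqrt ((cc ν γ b).toReal) * H1 (γ⁻¹ • b) / Ξ γ) * H2 b) ∂ν := by
      intro γ hγ
      have hAnn : ∀ b, (0:ℝ) ≤ ∑ g ∈ F, u (γ⁻¹ * g) * v g * (cc ν g b).toReal := fun b =>
        Finset.sum_nonneg fun g _ => mul_nonneg (mul_nonneg (hu _) (hv _))
          ENNReal.toReal_nonneg
      have hptwise : ∀ᵐ b ∂ν,
          ENNReal.ofReal ((∑ g ∈ F, u (γ⁻¹ * g) * v g * (cc ν g b).toReal) / Ξ γ)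
          ≤ ENNReal.ofReal
              ((Real.sqrt ((cc ν γ b).toReal) * H1 (γ⁻¹ • b) / Ξ γ) * H2 b) := by
        filter_upwards [hK1 γ hγ] with b hb
        refine ENNReal.ofReal_le_ofReal ?_
        rw [div_mul_eq_mul_div]
        gcongr
        exact (hXpos γ).le
      have hint_low : ∫⁻ b,
          ENNReal.ofReal ((∑ g ∈ F, u (γ⁻¹ * g) * v g * (cc ν g b).toReal) / Ξ γ) ∂ν
          = ENNReal.ofReal ((Ξ γ)⁻¹)
            * ENNReal.ofReal (∑ g ∈ F, u (γ⁻¹ * g) * v g) := by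
        have hpt : ∀ b,
            ENNReal.ofReal ((∑ g ∈ F, u (γ⁻¹ * g) * v g * (cc ν g b).toReal) / Ξ γ)
            = ENNReal.ofReal ((Ξ γ)⁻¹)
              * ∑ g ∈ F, ENNReal.ofReal (u (γ⁻¹ * g) * v g)
                * ENNReal.ofReal ((cc ν g b).toReal) := by
          intro b
          rw [div_eq_mul_inv, mul_comm, ENNReal.ofReal_mul (inv_nonneg.mpr (hXpos γ).le)]
          congr 1
          rw [ENNReal.ofReal_sum_of_nonneg fun g _ => mul_nonneg
            (mul_nonneg (hu _) (hv _)) ENNReal.toReal_nonneg]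
          refine Finset.sum_congr rfl fun g _ => ?_
          rw [ENNReal.ofReal_mul (mul_nonneg (hu _) (hv _))]
        simp only [hpt]
        rw [lintegral_const_mul _ (Finset.measurable_sum _ fun g _ =>
          ((cc_meas ν g).ennreal_toReal.ennreal_ofReal.const_mul _))]
        congr 1
        rw [lintegral_finset_sum _ fun g _ =>
          ((cc_meas ν g).ennreal_toReal.ennreal_ofReal.const_mul _)]
        rw [ENNReal.ofReal_sum_of_nonneg fun g _ => mul_nonneg (hu _) (hv _)]
        refine Finset.sum_congr rfl fun g _ => ?_
        rw [lintegral_const_mul _ ((cc_meas ν g).ennreal_toReal.ennreal_ofReal)]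
        rw [lintegral_ofReal_toReal_cc ν hmeas hqinv g, mul_one]
      have hxi : ENNReal.ofReal (Real.sqrt card / P.eval (n:ℝ))
          ≤ ENNReal.ofReal ((Ξ γ)⁻¹) := by
        refine ENNReal.ofReal_le_ofReal ?_
        have h1' := h1 n γ hγ
        have := one_div_le_one_div_of_le (hXpos γ) h1'
        rw [one_div, one_div, inv_div] at this
        exact this
      calc ENNReal.ofReal (Real.sqrt card / P.eval (n:ℝ))
            * ENNReal.ofReal (∑ g ∈ F, u (γ⁻¹ * g) * v g)
          ≤ ENNReal.ofReal ((Ξ γ)⁻¹) * ENNReal.ofReal (∑ g ∈ F, u (γ⁻¹ * g) * v g) :=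
            mul_le_mul_left hxi _
        _ = ∫⁻ b, ENNReal.ofReal
              ((∑ g ∈ F, u (γ⁻¹ * g) * v g * (cc ν g b).toReal) / Ξ γ) ∂ν :=
            hint_low.symm
        _ ≤ _ := lintegral_mono_ae hptwise
    calc ENNReal.ofReal (Real.sqrt card / P.eval (n:ℝ)) * ENNReal.ofReal S
        = ∑ γ ∈ Cn, ENNReal.ofReal (Real.sqrt card / P.eval (n:ℝ))
            * ENNReal.ofReal (∑ g ∈ F, u (γ⁻¹ * g) * v g) := by
          rw [hSdef, ENNReal.ofReal_sum_of_nonneg hSnn_terms, Finset.mul_sum]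
      _ ≤ _ := Finset.sum_le_sum hterm
  -- combine everything
  have hmain : ENNReal.ofReal (Real.sqrt card / P.eval (n:ℝ) * S)
      ≤ ENNReal.ofReal (card * M' * U * V) := by
    rw [ENNReal.ofReal_mul (le_of_lt (div_pos hscard_pos hPn_pos))]
    refine (hlow.trans hHold).trans_eq ?_
    rw [ENNReal.ofReal_mul (by positivity), ENNReal.ofReal_mul (by positivity),
      ENNReal.ofReal_mul hcard_pos.le]
    ring
  have hreal : Real.sqrt card / P.eval (n:ℝ) * S ≤ card * M' * U * V :=
    (ENNReal.ofReal_le_ofReal_iff (by positivity)).mp hmain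
  have h := mul_le_mul_of_nonneg_left hreal (le_of_lt (div_pos hPn_pos hscard_pos))
  have hL : P.eval (n:ℝ) / Real.sqrt card * (Real.sqrt card / P.eval (n:ℝ) * S) = S := by
    field_simp
  have hR : P.eval (n:ℝ) / Real.sqrt card * (card * M' * U * V)
      = M' * P.eval (n:ℝ) * Real.sqrt card * U * V := by
    have hcs : Real.sqrt card * Real.sqrt card = card := Real.mul_self_sqrt hcard_pos.le
    field_simp
    linear_combination - M' * U * V * hcs
  rw [hL, hR] at h
  exact h

/-- positivity of the polynomial bound -/
lemma Ppos (hmeas : ∀ γ : Λ, Measurable fun b : B => γ • b)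
    (hqinv : ∀ γ : Λ, ν.map (fun b : B => γ • b) ≪ ν)
    {L : Λ → ℝ} (hfin : ∀ n : ℕ, {γ : Λ | L γ = n}.Finite)
    (Ξ : Λ → ℝ)
    (hΞ : ∀ γ : Λ,
      Ξ γ = ∫ b, Real.sqrt (((ν.map (fun b' : B => γ • b')).rnDeriv ν b).toReal) ∂ν)
    (P : Polynomial ℝ)
    (h1 : ∀ n : ℕ, ∀ γ ∈ (hfin n).toFinset,
      Ξ γ ≤ P.eval (n : ℝ) / Real.sqrt ((hfin n).toFinset.card))
    (n : ℕ) (hne : ((hfin n).toFinset).Nonempty) : 0 < P.eval (n:ℝ) := by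
  obtain ⟨γ₀, hγ₀⟩ := hne
  have hcard_pos : (0:ℝ) < ((hfin n).toFinset.card : ℝ) := by
    have h := Finset.card_pos.mpr ⟨γ₀, hγ₀⟩
    exact_mod_cast h
  have hscard_pos : (0:ℝ) < Real.sqrt ((hfin n).toFinset.card : ℝ) :=
    Real.sqrt_pos.mpr hcard_pos
  have h1' := h1 n γ₀ hγ₀
  have hx := (xi_pos ν hmeas hqinv Ξ hΞ γ₀).trans_le h1'
  have h2 := mul_pos hx hscard_pos
  rw [div_mul_cancel₀] at h2
  · exact h2
  · exact hscard_pos.ne'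

end RRDAux

namespace RRDPoly

/-- The coefficient-wise absolute value dominating polynomial. -/
noncomputable def Pabs (P : Polynomial ℝ) : Polynomial ℝ :=
  ∑ i ∈ P.support, Polynomial.C |P.coeff i| * Polynomial.X ^ i

lemma Pabs_eval (P : Polynomial ℝ) (t : ℝ) :
    (Pabs P).eval t = ∑ i ∈ P.support, |P.coeff i| * t ^ i := by
  rw [Pabs, Polynomial.eval_finset_sum]
  simp

lemma abs_eval_le_Pabs (P : Polynomial ℝ) {t : ℝ} (ht : 0 ≤ t) :
    |P.eval t| ≤ (Pabs P).eval t := by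
  rw [Pabs_eval, Polynomial.eval_eq_sum, Polynomial.sum]
  refine (Finset.abs_sum_le_sum_abs _ _).trans ?_
  refine Finset.sum_le_sum fun i _ => ?_
  rw [abs_mul, abs_pow, abs_of_nonneg ht]

lemma Pabs_mono (P : Polynomial ℝ) {s t : ℝ} (hs : 0 ≤ s) (hst : s ≤ t) :
    (Pabs P).eval s ≤ (Pabs P).eval t := by
  rw [Pabs_eval, Pabs_eval]
  exact Finset.sum_le_sum fun i _ =>
    mul_le_mul_of_nonneg_left (pow_le_pow_left₀ hs hst i) (abs_nonneg _)

lemma Pabs_nonneg (P : Polynomial ℝ) {t : ℝ} (ht : 0 ≤ t) : 0 ≤ (Pabs P).eval t := by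
  rw [Pabs_eval]
  exact Finset.sum_nonneg fun i _ => mul_nonneg (abs_nonneg _) (pow_nonneg ht i)

end RRDPoly


/-- **Dynamical criterion for radial rapid decay.**
`Λ` is a discrete group with a proper integer-valued length function `L`;
`(B,ν)` is a probability space with a measurable quasi-invariant `Λ`-action.
`Ξ` is the Harish-Chandra function of the Koopman representation
`(π(γ)h)(b) = c(γ⁻¹,b)^{1/2} h(γ⁻¹ b)` where `c(γ⁻¹,·) = d(γ_*ν)/dν`.
If (1) `sup_{γ ∈ C_n} Ξ(γ) ≤ P(n)/√|C_n|` and (2) the averages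
`(1/|C_n|) Σ_{γ∈C_n} π(γ)/Ξ(γ)` are uniformly bounded in operator norm on `L²(B,ν)`,
then `Λ` has radial rapid decay with respect to `L`. -/
theorem statement0
    {Λ : Type*} [Group Λ] (L : Λ → ℝ)
    (hlen : Stmt0.IsLengthFun L)
    (hint : ∀ γ : Λ, ∃ n : ℕ, L γ = n)
    (hproper : ∀ t : ℝ, {γ : Λ | L γ ≤ t}.Finite)
    (hfin : ∀ n : ℕ, {γ : Λ | L γ = n}.Finite)
    {B : Type*} [MeasurableSpace B] (ν : Measure B) [IsProbabilityMeasure ν]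
    [MulAction Λ B] (hmeas : ∀ γ : Λ, Measurable fun b : B => γ • b)
    (hqinv : ∀ γ : Λ, ν.map (fun b : B => γ • b) ≪ ν)
    (Ξ : Λ → ℝ)
    (hΞ : ∀ γ : Λ,
      Ξ γ = ∫ b, Real.sqrt (((ν.map (fun b' : B => γ • b')).rnDeriv ν b).toReal) ∂ν)
    (P : Polynomial ℝ)
    (h1 : ∀ n : ℕ, ∀ γ ∈ (hfin n).toFinset,
      Ξ γ ≤ P.eval (n : ℝ) / Real.sqrt ((hfin n).toFinset.card))
    (M : ℝ)
    (h2 : ∀ n : ℕ, ((hfin n).toFinset).Nonempty → ∀ h : B → ℂ, MemLp h 2 ν →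
      eLpNorm (fun b : B =>
          (((hfin n).toFinset.card : ℂ))⁻¹ *
            ∑ γ ∈ (hfin n).toFinset,
              ((Real.sqrt (((ν.map (fun b' : B => γ • b')).rnDeriv ν b).toReal) : ℂ) *
                  h (γ⁻¹ • b)) / ((Ξ γ : ℝ) : ℂ))
        2 ν ≤ ENNReal.ofReal M * eLpNorm h 2 ν) :
    Stmt0.HasRRD L := by
  classical
  set M' : ℝ := max M 0 with hM'def
  have hM'0 : 0 ≤ M' := le_max_right _ _
  refine ⟨Polynomial.C M' * (Polynomial.X + 1) * RRDPoly.Pabs P, ?_⟩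
  intro f hrad
  by_cases hf0 : f.support = ∅
  · -- trivial case : f = 0
    intro ξ
    have hconv : Stmt0.conv f (⇑ξ) = fun _ => (0:ℂ) := by
      funext g
      rw [Stmt0.conv]
      rw [hf0]
      simp
    have hl2 : Stmt0.l2norm f = 0 := by
      rw [Stmt0.l2norm, hf0]
      simp
    have hmem : Memℓp (Stmt0.conv f (⇑ξ)) 2 := by
      rw [hconv]
      exact zero_memℓp
    refine ⟨hmem, ?_⟩
    rw [hl2]
    have hzero : (⟨Stmt0.conv f (⇑ξ), hmem⟩ : lp (fun _ : Λ => ℂ) 2) = 0 := by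
      ext g
      simp [hconv]
    rw [hzero, norm_zero, mul_zero, zero_mul]
  -- main case
  obtain ⟨g₀, hg₀⟩ := Finset.nonempty_iff_ne_empty.mpr hf0
  have hnof : ∀ g : Λ, L g = ((hint g).choose : ℝ) := fun g => (hint g).choose_spec
  set nof : Λ → ℕ := fun g => (hint g).choose with hnofdef
  set S : Finset ℕ := f.support.image nof with hSdef
  have hSne : S.Nonempty := ⟨nof g₀, Finset.mem_image_of_mem _ hg₀⟩
  set N₀ : ℕ := S.max' hSne with hN₀def
  have hCn_mem : ∀ (n : ℕ) (γ : Λ), γ ∈ (hfin n).toFinset ↔ L γ = n := fun n γ =>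
    (hfin n).mem_toFinset
  have hsupp_sub : ∀ g ∈ f.support, g ∈ (hfin (nof g)).toFinset := fun g _ =>
    (hCn_mem _ _).mpr (hnof g)
  have hsupp_eq : f.support = S.biUnion (fun n => (hfin n).toFinset) := by
    ext γ
    simp only [Finset.mem_biUnion]
    constructor
    · intro hγ
      exact ⟨nof γ, Finset.mem_image_of_mem _ hγ, hsupp_sub γ hγ⟩
    · rintro ⟨n, hn, hγ⟩
      obtain ⟨g, hg, rfl⟩ := Finset.mem_image.mp hn
      have hLγ : L γ = L g := by rw [(hCn_mem (nof g) γ).mp hγ, hnof g]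
      have hval := hrad γ g hLγ
      rw [Finsupp.mem_support_iff] at hg ⊢
      rw [hval]
      exact hg
  have hpd : Set.PairwiseDisjoint (↑S) (fun n : ℕ => (hfin n).toFinset) := by
    intro n _ m _ hnm
    rw [Function.onFun, Finset.disjoint_left]
    intro γ hγn hγm
    have : (n:ℝ) = (m:ℝ) := ((hCn_mem n γ).mp hγn).symm.trans ((hCn_mem m γ).mp hγm)
    exact hnm (by exact_mod_cast this)
  -- value of f on each sphere
  set aval : ℕ → ℝ := fun n =>
    if h : ((hfin n).toFinset).Nonempty then ‖f h.choose‖ else 0 with havaldef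
  have haval_nn : ∀ n, 0 ≤ aval n := by
    intro n
    by_cases h : ((hfin n).toFinset).Nonempty
    · rw [havaldef]; simp only [dif_pos h]; exact norm_nonneg _
    · rw [havaldef]; simp only [dif_neg h]; exact le_rfl
  have hconst : ∀ n : ℕ, ∀ γ ∈ (hfin n).toFinset, ‖f γ‖ = aval n := by
    intro n γ hγ
    have hne : ((hfin n).toFinset).Nonempty := ⟨γ, hγ⟩
    rw [havaldef]
    simp only [dif_pos hne]
    congr 1
    refine hrad γ hne.choose ?_
    rw [(hCn_mem n γ).mp hγ, (hCn_mem n _).mp hne.choose_spec]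
  -- length of f
  have hlen_eq : Stmt0.lenOf L f = (N₀ : ℝ) := by
    rw [Stmt0.lenOf]
    have hset : {g : Λ | f g ≠ 0} = (↑f.support : Set Λ) := by
      ext g; simp [Finsupp.mem_support_iff]
    rw [hset, ← Finset.coe_image]
    have hLne : (f.support.image L).Nonempty := ⟨L g₀, Finset.mem_image_of_mem _ hg₀⟩
    rw [hLne.csSup_eq_max']
    refine le_antisymm ?_ ?_
    · refine Finset.max'_le _ _ _ ?_
      intro y hy
      obtain ⟨g, hg, rfl⟩ := Finset.mem_image.mp hy
      rw [hnof g]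
      exact_mod_cast S.le_max' (nof g) (Finset.mem_image_of_mem _ hg)
    · have hN₀S : N₀ ∈ S := by rw [hN₀def]; exact S.max'_mem hSne
      obtain ⟨g, hg, hgn⟩ := Finset.mem_image.mp hN₀S
      have hgN : (N₀:ℝ) = L g := by rw [hnof g]; exact_mod_cast hgn.symm
      rw [hgN]
      exact Finset.le_max' _ _ (Finset.mem_image_of_mem _ hg)
  have hNmem : ∀ n ∈ S, ((hfin n).toFinset).Nonempty := by
    intro n hn
    obtain ⟨g, hg, rfl⟩ := Finset.mem_image.mp hn
    exact ⟨g, hsupp_sub g hg⟩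
  have hPpos : ∀ n ∈ S, 0 < P.eval (n:ℝ) := fun n hn =>
    RRDAux.Ppos ν hmeas hqinv hfin Ξ hΞ P h1 n (hNmem n hn)
  have hnleN : ∀ n ∈ S, (n:ℝ) ≤ (N₀:ℝ) := by
    intro n hn
    exact_mod_cast S.le_max' n hn
  have hPabsN0 : (0:ℝ) ≤ (RRDPoly.Pabs P).eval (N₀:ℝ) :=
    RRDPoly.Pabs_nonneg P (Nat.cast_nonneg _)
  have hPle : ∀ n ∈ S, |P.eval (n:ℝ)| ≤ (RRDPoly.Pabs P).eval (N₀:ℝ) := fun n hn =>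
    (RRDPoly.abs_eval_le_Pabs P (Nat.cast_nonneg n)).trans
      (RRDPoly.Pabs_mono P (Nat.cast_nonneg n) (hnleN n hn))
  have hl2def : Stmt0.l2norm f = Real.sqrt (∑ g ∈ f.support, ‖f g‖ ^ 2) := rfl
  have hl2nn : 0 ≤ Stmt0.l2norm f := Real.sqrt_nonneg _
  intro ξ
  -- bound on finite pieces of ξ
  have hξbound : ∀ (E : Finset Λ),
      Real.sqrt (∑ x ∈ E, ‖(ξ : ∀ _ : Λ, ℂ) x‖ ^ 2) ≤ ‖ξ‖ := by
    intro E
    have h := lp.sum_rpow_le_norm_rpow (p := 2) (by norm_num) ξ E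
    have hconv : ∀ r : ℝ, r ^ ((2:ℝ≥0∞).toReal) = r ^ 2 := by
      intro r
      rw [ENNReal.toReal_ofNat, show (2:ℝ) = ((2:ℕ):ℝ) by norm_num, Real.rpow_natCast]
    simp only [hconv] at h
    calc Real.sqrt (∑ x ∈ E, ‖(ξ : ∀ _ : Λ, ℂ) x‖ ^ 2)
        ≤ Real.sqrt (‖ξ‖ ^ 2) := Real.sqrt_le_sqrt h
      _ = ‖ξ‖ := Real.sqrt_sq (norm_nonneg _)
  -- the key bilinear estimate
  have hkey : ∀ (F : Finset Λ) (v : Λ → ℝ), (∀ g, 0 ≤ v g) →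
      ∑ g ∈ F, ‖Stmt0.conv f (⇑ξ) g‖ * v g ≤
        (M' * ((N₀:ℝ)+1) * (RRDPoly.Pabs P).eval (N₀:ℝ) * Stmt0.l2norm f) * ‖ξ‖
          * Real.sqrt (∑ g ∈ F, v g ^ 2) := by
    intro F v hv
    have hstep0 : ∀ g : Λ, ‖Stmt0.conv f (⇑ξ) g‖
        ≤ ∑ h ∈ f.support, ‖f h‖ * ‖(ξ : ∀ _ : Λ, ℂ) (h⁻¹ * g)‖ := by
      intro g
      rw [Stmt0.conv]
      refine (norm_sum_le _ _).trans (le_of_eq ?_)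
      exact Finset.sum_congr rfl fun h _ => norm_mul _ _
    set V : ℝ := Real.sqrt (∑ g ∈ F, v g ^ 2) with hVdef
    have hV0 : 0 ≤ V := Real.sqrt_nonneg _
    have hMxV : 0 ≤ M' * ‖ξ‖ * V := mul_nonneg (mul_nonneg hM'0 (norm_nonneg _)) hV0
    have hinner : ∀ n ∈ S,
        ∑ γ ∈ (hfin n).toFinset, ∑ g ∈ F, ‖f γ‖ * ‖(ξ : ∀ _ : Λ, ℂ) (γ⁻¹ * g)‖ * v g
          ≤ ((aval n * Real.sqrt (((hfin n).toFinset.card : ℝ))) * P.eval (n:ℝ))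
            * (M' * ‖ξ‖ * V) := by
      intro n hn
      have hCne := hNmem n hn
      set E : Finset Λ := Finset.image (fun p : Λ × Λ => p.1⁻¹ * p.2)
        (((hfin n).toFinset) ×ˢ F) with hEdef
      have hE : ∀ γ ∈ (hfin n).toFinset, ∀ g ∈ F, γ⁻¹ * g ∈ E := by
        intro γ hγ g hg
        rw [hEdef]
        exact Finset.mem_image.mpr ⟨(γ, g), Finset.mem_product.mpr ⟨hγ, hg⟩, rfl⟩
      have hcore := RRDAux.coreA ν hmeas hqinv hfin Ξ hΞ P h1 M h2 n hCne
        (fun x => ‖(ξ : ∀ _ : Λ, ℂ) x‖) v (fun x => norm_nonneg _) hv F E hE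
      have hpull : ∑ γ ∈ (hfin n).toFinset, ∑ g ∈ F,
          ‖f γ‖ * ‖(ξ : ∀ _ : Λ, ℂ) (γ⁻¹ * g)‖ * v g
          = aval n * ∑ γ ∈ (hfin n).toFinset, ∑ g ∈ F,
              ‖(ξ : ∀ _ : Λ, ℂ) (γ⁻¹ * g)‖ * v g := by
        rw [Finset.mul_sum]
        refine Finset.sum_congr rfl fun γ hγ => ?_
        rw [Finset.mul_sum]
        refine Finset.sum_congr rfl fun g hg => ?_
        rw [hconst n γ hγ]
        ring
      rw [hpull]
      have hb1 : ∑ γ ∈ (hfin n).toFinset, ∑ g ∈ F, ‖(ξ : ∀ _ : Λ, ℂ) (γ⁻¹ * g)‖ * v g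
          ≤ M' * P.eval (n:ℝ) * Real.sqrt (((hfin n).toFinset.card : ℝ)) * ‖ξ‖ * V := by
        refine hcore.trans ?_
        rw [hVdef]
        have hMP : 0 ≤ M' * P.eval (n:ℝ) * Real.sqrt (((hfin n).toFinset.card : ℝ)) :=
          mul_nonneg (mul_nonneg hM'0 (hPpos n hn).le) (Real.sqrt_nonneg _)
        refine mul_le_mul_of_nonneg_right ?_ (Real.sqrt_nonneg _)
        exact mul_le_mul_of_nonneg_left (hξbound E) hMP
      calc aval n * ∑ γ ∈ (hfin n).toFinset, ∑ g ∈ F,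
            ‖(ξ : ∀ _ : Λ, ℂ) (γ⁻¹ * g)‖ * v g
          ≤ aval n * (M' * P.eval (n:ℝ) * Real.sqrt (((hfin n).toFinset.card : ℝ))
              * ‖ξ‖ * V) := mul_le_mul_of_nonneg_left hb1 (haval_nn n)
        _ = ((aval n * Real.sqrt (((hfin n).toFinset.card : ℝ))) * P.eval (n:ℝ))
              * (M' * ‖ξ‖ * V) := by ring
    have hCSn : ∑ n ∈ S, (aval n * Real.sqrt (((hfin n).toFinset.card : ℝ))) * P.eval (n:ℝ)
        ≤ Stmt0.l2norm f * (((N₀:ℝ)+1) * (RRDPoly.Pabs P).eval (N₀:ℝ)) := by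
      have hcs := Finset.sum_mul_sq_le_sq_mul_sq S
        (fun n => aval n * Real.sqrt (((hfin n).toFinset.card : ℝ))) (fun n => P.eval (n:ℝ))
      have hterm1 : ∑ n ∈ S, (aval n * Real.sqrt (((hfin n).toFinset.card : ℝ))) ^ 2
          = ∑ g ∈ f.support, ‖f g‖ ^ 2 := by
        rw [hsupp_eq, Finset.sum_biUnion hpd]
        refine Finset.sum_congr rfl fun n hn => ?_
        have hc : ∀ γ ∈ (hfin n).toFinset, ‖f γ‖ ^ 2 = aval n ^ 2 := fun γ hγ => by
          rw [hconst n γ hγ]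
        rw [Finset.sum_congr rfl hc, Finset.sum_const, nsmul_eq_mul]
        rw [mul_pow, Real.sq_sqrt (Nat.cast_nonneg _)]
        ring
      have hterm1nn : (0:ℝ) ≤ ∑ n ∈ S,
          (aval n * Real.sqrt (((hfin n).toFinset.card : ℝ))) ^ 2 :=
        Finset.sum_nonneg fun n _ => sq_nonneg _
      have hterm2 : ∑ n ∈ S, P.eval (n:ℝ) ^ 2
          ≤ (((N₀:ℝ)+1) * (RRDPoly.Pabs P).eval (N₀:ℝ)) ^ 2 := by
        calc ∑ n ∈ S, P.eval (n:ℝ) ^ 2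
            ≤ ∑ n ∈ S, (RRDPoly.Pabs P).eval (N₀:ℝ) ^ 2 := by
              refine Finset.sum_le_sum fun n hn => ?_
              obtain ⟨ha, hb⟩ := abs_le.mp (hPle n hn)
              exact sq_le_sq' ha hb
          _ = (S.card : ℝ) * (RRDPoly.Pabs P).eval (N₀:ℝ) ^ 2 := by
              rw [Finset.sum_const, nsmul_eq_mul]
          _ ≤ ((N₀:ℝ)+1) * (RRDPoly.Pabs P).eval (N₀:ℝ) ^ 2 := by
              refine mul_le_mul_of_nonneg_right ?_ (sq_nonneg _)
              have hsub : S ⊆ Finset.range (N₀+1) := by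
                intro n hn
                rw [Finset.mem_range]
                exact Nat.lt_succ_of_le (S.le_max' n hn)
              have hcard := Finset.card_le_card hsub
              rw [Finset.card_range] at hcard
              exact_mod_cast hcard
          _ ≤ (((N₀:ℝ)+1) * (RRDPoly.Pabs P).eval (N₀:ℝ)) ^ 2 := by
              rw [mul_pow]
              refine mul_le_mul_of_nonneg_right ?_ (sq_nonneg _)
              nlinarith [(Nat.cast_nonneg N₀ : (0:ℝ) ≤ (N₀:ℝ))]
      have hLnn : (0:ℝ) ≤ ∑ n ∈ S,
          (aval n * Real.sqrt (((hfin n).toFinset.card : ℝ))) * P.eval (n:ℝ) :=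
        Finset.sum_nonneg fun n hn => mul_nonneg
          (mul_nonneg (haval_nn n) (Real.sqrt_nonneg _)) (hPpos n hn).le
      have hprod_nn : (0:ℝ) ≤ ((N₀:ℝ)+1) * (RRDPoly.Pabs P).eval (N₀:ℝ) :=
        mul_nonneg (by positivity) hPabsN0
      calc ∑ n ∈ S, (aval n * Real.sqrt (((hfin n).toFinset.card : ℝ))) * P.eval (n:ℝ)
          = Real.sqrt ((∑ n ∈ S,
              (aval n * Real.sqrt (((hfin n).toFinset.card : ℝ))) * P.eval (n:ℝ)) ^ 2) :=
            (Real.sqrt_sq hLnn).symm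
        _ ≤ Real.sqrt ((∑ n ∈ S,
              (aval n * Real.sqrt (((hfin n).toFinset.card : ℝ))) ^ 2)
              * ((((N₀:ℝ)+1) * (RRDPoly.Pabs P).eval (N₀:ℝ)) ^ 2)) := by
            refine Real.sqrt_le_sqrt (hcs.trans ?_)
            exact mul_le_mul_of_nonneg_left hterm2 hterm1nn
        _ = Real.sqrt (∑ n ∈ S,
              (aval n * Real.sqrt (((hfin n).toFinset.card : ℝ))) ^ 2)
              * (((N₀:ℝ)+1) * (RRDPoly.Pabs P).eval (N₀:ℝ)) := by
            rw [Real.sqrt_mul hterm1nn, Real.sqrt_sq hprod_nn]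
        _ = Stmt0.l2norm f * (((N₀:ℝ)+1) * (RRDPoly.Pabs P).eval (N₀:ℝ)) := by
            rw [hterm1, hl2def]
    calc ∑ g ∈ F, ‖Stmt0.conv f (⇑ξ) g‖ * v g
        ≤ ∑ g ∈ F, (∑ h ∈ f.support, ‖f h‖ * ‖(ξ : ∀ _ : Λ, ℂ) (h⁻¹ * g)‖) * v g :=
          Finset.sum_le_sum fun g _ => mul_le_mul_of_nonneg_right (hstep0 g) (hv g)
      _ = ∑ g ∈ F, ∑ h ∈ f.support, ‖f h‖ * ‖(ξ : ∀ _ : Λ, ℂ) (h⁻¹ * g)‖ * v g := by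
          refine Finset.sum_congr rfl fun g _ => ?_
          rw [Finset.sum_mul]
      _ = ∑ h ∈ f.support, ∑ g ∈ F, ‖f h‖ * ‖(ξ : ∀ _ : Λ, ℂ) (h⁻¹ * g)‖ * v g :=
          Finset.sum_comm
      _ = ∑ n ∈ S, ∑ γ ∈ (hfin n).toFinset, ∑ g ∈ F,
            ‖f γ‖ * ‖(ξ : ∀ _ : Λ, ℂ) (γ⁻¹ * g)‖ * v g := by
          rw [hsupp_eq, Finset.sum_biUnion hpd]
      _ ≤ ∑ n ∈ S, ((aval n * Real.sqrt (((hfin n).toFinset.card : ℝ))) * P.eval (n:ℝ))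
            * (M' * ‖ξ‖ * V) := Finset.sum_le_sum hinner
      _ = (∑ n ∈ S, (aval n * Real.sqrt (((hfin n).toFinset.card : ℝ))) * P.eval (n:ℝ))
            * (M' * ‖ξ‖ * V) := by rw [Finset.sum_mul]
      _ ≤ (Stmt0.l2norm f * (((N₀:ℝ)+1) * (RRDPoly.Pabs P).eval (N₀:ℝ)))
            * (M' * ‖ξ‖ * V) := mul_le_mul_of_nonneg_right hCSn hMxV
      _ = (M' * ((N₀:ℝ)+1) * (RRDPoly.Pabs P).eval (N₀:ℝ) * Stmt0.l2norm f) * ‖ξ‖ * V := by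
          ring
  set K : ℝ := M' * ((N₀:ℝ)+1) * (RRDPoly.Pabs P).eval (N₀:ℝ) * Stmt0.l2norm f * ‖ξ‖
    with hKdef
  have hK0 : 0 ≤ K := by
    have h1 : (0:ℝ) ≤ ((N₀:ℝ)+1) := by positivity
    have := mul_nonneg (mul_nonneg (mul_nonneg (mul_nonneg hM'0 h1) hPabsN0) hl2nn)
      (norm_nonneg ξ)
    exact this
  have hsum : ∀ F : Finset Λ, ∑ g ∈ F, ‖Stmt0.conv f (⇑ξ) g‖ ^ 2 ≤ K ^ 2 := by
    intro F
    have h := hkey F (fun g => ‖Stmt0.conv f (⇑ξ) g‖) (fun g => norm_nonneg _)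
    have hT0 : (0:ℝ) ≤ ∑ g ∈ F, ‖Stmt0.conv f (⇑ξ) g‖ ^ 2 :=
      Finset.sum_nonneg fun g _ => sq_nonneg _
    have h' : ∑ g ∈ F, ‖Stmt0.conv f (⇑ξ) g‖ ^ 2
        ≤ K * Real.sqrt (∑ g ∈ F, ‖Stmt0.conv f (⇑ξ) g‖ ^ 2) := by
      refine le_trans (le_of_eq ?_) h
      exact Finset.sum_congr rfl fun g _ => pow_two _
    set T : ℝ := ∑ g ∈ F, ‖Stmt0.conv f (⇑ξ) g‖ ^ 2
    have hsT : Real.sqrt T ≤ K := by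
      rcases hT0.lt_or_eq with hT | hT
      · have hsTpos : 0 < Real.sqrt T := Real.sqrt_pos.mpr hT
        have : Real.sqrt T * Real.sqrt T ≤ K * Real.sqrt T := by
          rw [Real.mul_self_sqrt hT0]
          exact h'
        exact le_of_mul_le_mul_right this hsTpos
      · rw [← hT, Real.sqrt_zero]
        exact hK0
    calc T = Real.sqrt T ^ 2 := (Real.sq_sqrt hT0).symm
      _ ≤ K ^ 2 := pow_le_pow_left₀ (Real.sqrt_nonneg _) hsT 2
  have hexp2 : ∀ r : ℝ, r ^ ((2:ℝ≥0∞).toReal) = r ^ 2 := by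
    intro r
    rw [ENNReal.toReal_ofNat, show (2:ℝ) = ((2:ℕ):ℝ) by norm_num, Real.rpow_natCast]
  have hmem : Memℓp (Stmt0.conv f (⇑ξ)) 2 := by
    refine memℓp_gen' (C := K ^ 2) ?_
    intro s
    calc ∑ i ∈ s, ‖Stmt0.conv f (⇑ξ) i‖ ^ (2:ℝ≥0∞).toReal
        = ∑ i ∈ s, ‖Stmt0.conv f (⇑ξ) i‖ ^ 2 := Finset.sum_congr rfl fun i _ => hexp2 _
      _ ≤ K ^ 2 := hsum s
  refine ⟨hmem, ?_⟩
  have hnorm : ‖(⟨Stmt0.conv f (⇑ξ), hmem⟩ : lp (fun _ : Λ => ℂ) 2)‖ ≤ K := by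
    refine lp.norm_le_of_forall_sum_le (by norm_num) hK0 ?_
    intro s
    calc ∑ i ∈ s, ‖Stmt0.conv f (⇑ξ) i‖ ^ (2:ℝ≥0∞).toReal
        = ∑ i ∈ s, ‖Stmt0.conv f (⇑ξ) i‖ ^ 2 := Finset.sum_congr rfl fun i _ => hexp2 _
      _ ≤ K ^ 2 := hsum s
      _ = K ^ (2:ℝ≥0∞).toReal := (hexp2 K).symm
  refine hnorm.trans (le_of_eq ?_)
  rw [hKdef, hlen_eq]
  simp only [Polynomial.eval_mul, Polynomial.eval_C, Polynomial.eval_add,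
    Polynomial.eval_X, Polynomial.eval_one]
end

section
/- Let G be a locally compact group with left Haar measure μ_G and a proper, integer-valued length function 𝓛; set C^G_n := {g ∈ G : 𝓛(g) = n}. Let B be a compact Hausdorff space with a continuous G-action and ν a quasi-invariant Borel probability measure on B, such that the Radon–Nikodym cocycle c(g,b) := (d((g⁻¹)_*ν)/dν)(b) admits a continuous version and the Harish-Chandra function Ξ(g) := ∫_B c(g⁻¹,b)^{1/2} dν(b) is continuous. Assume the subgroup G₀ := {g ∈ G : 𝓛(g) = 0} is compact and open, acts transitively on B, and leaves ν invariant. Let Λ be a discrete subgroup of G, let L := 𝓛|_Λ and C^Λ_n := {γ ∈ Λ : L(γ) = n} (finite by properness), and assume there is c ∈ ℝ such that for all sufficiently large n, μ_G(C^G_n) ≤ c·|C^Λ_n|. Let π be the Koopman representation of Λ on L²(B,ν). Then there is M ∈ ℝ such that for every n with C^Λ_n ≠ ∅, the operator (1/|C^Λ_n|) Σ_{γ∈C^Λ_n} π(γ)/Ξ(γ) on L²(B,ν) has operator norm at most M. -/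
open MeasureTheory
open scoped ENNReal
set_option linter.unusedSectionVars false
set_option linter.unusedVariables false
set_option linter.unnecessarySimpa false
set_option maxHeartbeats 1000000

namespace Stmt1

def IsLengthFun {G : Type*} [Group G] (L : G → ℝ) : Prop :=
  L 1 = 0 ∧ (∀ g, 0 ≤ L g) ∧ (∀ g, L g⁻¹ = L g) ∧ ∀ g h, L (g * h) ≤ L g + L h

end Stmt1

namespace St1Aux

variable {G : Type*} [Group G] [TopologicalSpace G] [IsTopologicalGroup G]
    [MeasurableSpace G] [BorelSpace G]
variable {B : Type*} [TopologicalSpace B] [CompactSpace B] [T2Space B]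
    [MeasurableSpace B] [BorelSpace B]
variable {ν : Measure B} [IsProbabilityMeasure ν] [MulAction G B]

lemma cont_smul (hact : Continuous fun p : G × B => p.1 • p.2) (g : G) :
    Continuous fun b : B => g • b :=
  hact.comp (continuous_const.prodMk continuous_id)

lemma meas_smul (hact : Continuous fun p : G × B => p.1 • p.2) (g : G) :
    Measurable fun b : B => g • b := (cont_smul hact g).measurable

lemma openPos (hact : Continuous fun p : G × B => p.1 • p.2)
    (htrans : ∀ b b' : B, ∃ g : G, (ν.map (fun x : B => g⁻¹ • x) = ν) ∧ g • b = b') :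
    ν.IsOpenPosMeasure := by
  constructor
  intro U hU hne h0
  obtain ⟨u, hu⟩ := hne
  choose gf hinv hsmul using fun b => htrans u b
  set V : B → Set B := fun b => (fun x : B => (gf b)⁻¹ • x) ⁻¹' U with hV
  have hVopen : ∀ b, IsOpen (V b) := fun b => hU.preimage (cont_smul hact _)
  have hmem : ∀ b : B, b ∈ V b := by
    intro b
    have : (gf b)⁻¹ • b = u := inv_smul_eq_iff.2 (hsmul b).symm
    simpa [V, this] using hu
  have hcover : (Set.univ : Set B) ⊆ ⋃ b : B, V b := fun x _ =>
    Set.mem_iUnion.2 ⟨x, hmem x⟩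
  obtain ⟨t, ht⟩ := isCompact_univ.elim_finite_subcover V hVopen hcover
  have hz : ∀ b : B, ν (V b) = 0 := by
    intro b
    have : ν (V b) = (ν.map (fun x : B => (gf b)⁻¹ • x)) U := by
      rw [Measure.map_apply (meas_smul hact _) hU.measurableSet]
    rw [this, hinv b, h0]
  have : ν (Set.univ : Set B) = 0 := by
    refine le_antisymm ?_ zero_le
    calc ν Set.univ ≤ ν (⋃ b ∈ t, V b) := measure_mono ht
      _ ≤ ∑ b ∈ t, ν (V b) := measure_biUnion_finset_le t V
      _ = 0 := by simp [hz]
  simp [measure_univ] at this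

lemma map_eq_withDensity (hact : Continuous fun p : G × B => p.1 • p.2)
    (hqinv : ∀ g : G, ν.map (fun b : B => g • b) ≪ ν)
    {c : G → B → ℝ}
    (hc_rn : ∀ g : G,
      (fun b => ENNReal.ofReal (c g b)) =ᵐ[ν] (ν.map (fun b : B => g⁻¹ • b)).rnDeriv ν)
    (g : G) :
    ν.map (fun b : B => g⁻¹ • b) = ν.withDensity (fun b => ENNReal.ofReal (c g b)) := by
  haveI : IsProbabilityMeasure (ν.map (fun b : B => g⁻¹ • b)) :=
    Measure.isProbabilityMeasure_map (meas_smul hact g⁻¹).aemeasurable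
  rw [withDensity_congr_ae (hc_rn g)]
  exact (Measure.withDensity_rnDeriv_eq _ _ (hqinv g⁻¹)).symm

lemma cont_c {c : G → B → ℝ} (hc_cont : Continuous fun p : G × B => c p.1 p.2) (g : G) :
    Continuous fun b : B => c g b :=
  hc_cont.comp (continuous_const.prodMk continuous_id)

lemma withDensity_ofReal_eq (hsupp : ν.IsOpenPosMeasure) {f g : B → ℝ}
    (hf : Continuous f) (hg : Continuous g)
    (hf0 : ∀ b, 0 ≤ f b) (hg0 : ∀ b, 0 ≤ g b)
    (h : ν.withDensity (fun b => ENNReal.ofReal (f b))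
       = ν.withDensity (fun b => ENNReal.ofReal (g b))) :
    f = g := by
  have hfm : Measurable fun b => ENNReal.ofReal (f b) :=
    (ENNReal.continuous_ofReal.comp hf).measurable
  have hgm : Measurable fun b => ENNReal.ofReal (g b) :=
    (ENNReal.continuous_ofReal.comp hg).measurable
  have h1 : (fun b => ENNReal.ofReal (f b)) =ᵐ[ν] (fun b => ENNReal.ofReal (g b)) := by
    have e1 := Measure.rnDeriv_withDensity ν hfm
    have e2 := Measure.rnDeriv_withDensity ν hgm
    rw [h] at e1
    exact e1.symm.trans e2
  have h2 : f =ᵐ[ν] g := by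
    filter_upwards [h1] with b hb
    exact (ENNReal.ofReal_eq_ofReal_iff (hf0 b) (hg0 b)).1 hb
  exact (Continuous.ae_eq_iff_eq ν hf hg).1 h2

lemma map_withDensity_smul (hact : Continuous fun p : G × B => p.1 • p.2)
    (hqinv : ∀ g : G, ν.map (fun b : B => g • b) ≪ ν)
    {c : G → B → ℝ}
    (hc_rn : ∀ g : G,
      (fun b => ENNReal.ofReal (c g b)) =ᵐ[ν] (ν.map (fun b : B => g⁻¹ • b)).rnDeriv ν)
    (hc_cont : Continuous fun p : G × B => c p.1 p.2)
    (g : G) {F : B → ℝ≥0∞} (hF : Measurable F) :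
    (ν.withDensity F).map (fun b : B => g⁻¹ • b)
      = ν.withDensity (fun b => ENNReal.ofReal (c g b) * F (g • b)) := by
  ext A hA
  rw [Measure.map_apply (meas_smul hact g⁻¹) hA,
    withDensity_apply _ ((meas_smul hact g⁻¹) hA), withDensity_apply _ hA]
  set K : B → ℝ≥0∞ := fun b => A.indicator (fun x => F (g • x)) b with hK
  have hKmeas : Measurable K := (hF.comp (meas_smul hact g)).indicator hA
  have h1 : ∫⁻ b in (fun b : B => g⁻¹ • b) ⁻¹' A, F b ∂ν = ∫⁻ b, K (g⁻¹ • b) ∂ν := by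
    rw [← lintegral_indicator ((meas_smul hact g⁻¹) hA)]
    congr 1; funext b
    by_cases hb : g⁻¹ • b ∈ A
    · have hb' : b ∈ (fun b : B => g⁻¹ • b) ⁻¹' A := hb
      rw [Set.indicator_of_mem hb', hK]
      simp only [Set.indicator_of_mem hb, smul_inv_smul]
    · have hb' : b ∉ (fun b : B => g⁻¹ • b) ⁻¹' A := hb
      rw [Set.indicator_of_notMem hb', hK]
      simp only [Set.indicator_of_notMem hb]
  have hcg : Measurable fun b => ENNReal.ofReal (c g b) :=
    (ENNReal.continuous_ofReal.comp (cont_c hc_cont g)).measurable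
  rw [h1, ← lintegral_map hKmeas (meas_smul hact g⁻¹),
    map_eq_withDensity hact hqinv hc_rn g,
    lintegral_withDensity_eq_lintegral_mul _ hcg hKmeas,
    ← lintegral_indicator hA]
  congr 1; funext b
  by_cases hb : b ∈ A
  · simp only [Pi.mul_apply, hK, Set.indicator_of_mem hb]
  · simp only [Pi.mul_apply, hK, Set.indicator_of_notMem hb, mul_zero]

lemma cocycle (hact : Continuous fun p : G × B => p.1 • p.2)
    (hqinv : ∀ g : G, ν.map (fun b : B => g • b) ≪ ν)
    {c : G → B → ℝ} (hc_pos : ∀ g b, 0 < c g b)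
    (hc_cont : Continuous fun p : G × B => c p.1 p.2)
    (hc_rn : ∀ g : G,
      (fun b => ENNReal.ofReal (c g b)) =ᵐ[ν] (ν.map (fun b : B => g⁻¹ • b)).rnDeriv ν)
    (hsupp : ν.IsOpenPosMeasure)
    (g₁ g₂ : G) (b : B) :
    c (g₁ * g₂) b = c g₁ (g₂ • b) * c g₂ b := by
  have hcg1 : Measurable fun b => ENNReal.ofReal (c g₁ b) :=
    (ENNReal.continuous_ofReal.comp (cont_c hc_cont g₁)).measurable
  have hm : ν.withDensity (fun b => ENNReal.ofReal (c (g₁ * g₂) b))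
      = ν.withDensity (fun b => ENNReal.ofReal (c g₂ b * c g₁ (g₂ • b))) := by
    calc ν.withDensity (fun b => ENNReal.ofReal (c (g₁ * g₂) b))
        = ν.map (fun b : B => (g₁ * g₂)⁻¹ • b) :=
          (map_eq_withDensity hact hqinv hc_rn (g₁ * g₂)).symm
      _ = (ν.map (fun b : B => g₁⁻¹ • b)).map (fun b : B => g₂⁻¹ • b) := by
          rw [Measure.map_map (meas_smul hact g₂⁻¹) (meas_smul hact g₁⁻¹)]
          congr 1; funext x
          simp [Function.comp, mul_inv_rev, mul_smul]
      _ = (ν.withDensity (fun b => ENNReal.ofReal (c g₁ b))).map (fun b : B => g₂⁻¹ • b) := by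
          rw [map_eq_withDensity hact hqinv hc_rn g₁]
      _ = ν.withDensity (fun b => ENNReal.ofReal (c g₂ b) * ENNReal.ofReal (c g₁ (g₂ • b))) :=
          map_withDensity_smul hact hqinv hc_rn hc_cont g₂ hcg1
      _ = ν.withDensity (fun b => ENNReal.ofReal (c g₂ b * c g₁ (g₂ • b))) := by
          congr 1; funext x
          rw [ENNReal.ofReal_mul (hc_pos g₂ x).le]
  have heq := withDensity_ofReal_eq hsupp (cont_c hc_cont (g₁ * g₂))
    (((cont_c hc_cont g₂)).mul ((cont_c hc_cont g₁).comp (cont_smul hact g₂)))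
    (fun b => (hc_pos _ b).le)
    (fun b => mul_nonneg (hc_pos _ b).le (hc_pos _ _).le) hm
  have := congrFun heq b
  simpa [mul_comm] using this

lemma c_eq_one (hact : Continuous fun p : G × B => p.1 • p.2)
    (hqinv : ∀ g : G, ν.map (fun b : B => g • b) ≪ ν)
    {c : G → B → ℝ} (hc_pos : ∀ g b, 0 < c g b)
    (hc_cont : Continuous fun p : G × B => c p.1 p.2)
    (hc_rn : ∀ g : G,
      (fun b => ENNReal.ofReal (c g b)) =ᵐ[ν] (ν.map (fun b : B => g⁻¹ • b)).rnDeriv ν)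
    (hsupp : ν.IsOpenPosMeasure)
    {k : G} (hk : ν.map (fun b : B => k⁻¹ • b) = ν) (b : B) :
    c k b = 1 := by
  have hm : ν.withDensity (fun b => ENNReal.ofReal (c k b))
      = ν.withDensity (fun _ => ENNReal.ofReal (1 : ℝ)) := by
    rw [← map_eq_withDensity hact hqinv hc_rn k, hk]
    simp
  have heq := withDensity_ofReal_eq hsupp (cont_c hc_cont k) continuous_const
    (fun b => (hc_pos _ b).le) (fun _ => zero_le_one) hm
  exact congrFun heq b

lemma B_nonempty' (μ0 : Measure B) [IsProbabilityMeasure μ0] : Nonempty B := by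
  by_contra hB
  have h0 : μ0 Set.univ = 0 := by
    rw [Set.univ_eq_empty_iff.2 (not_nonempty_iff.1 hB)]
    exact measure_empty
  rw [measure_univ] at h0
  exact one_ne_zero h0

lemma cont_integrable {f : B → ℝ} (hf : Continuous f) : Integrable f ν := by
  have h : IntegrableOn f Set.univ ν :=
    ContinuousOn.integrableOn_compact (μ := ν) isCompact_univ hf.continuousOn
  rwa [integrableOn_univ] at h

lemma sqrt_key (hact : Continuous fun p : G × B => p.1 • p.2)
    (hqinv : ∀ g : G, ν.map (fun b : B => g • b) ≪ ν)
    {c : G → B → ℝ} (hc_pos : ∀ g b, 0 < c g b)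
    (hc_cont : Continuous fun p : G × B => c p.1 p.2)
    (hc_rn : ∀ g : G,
      (fun b => ENNReal.ofReal (c g b)) =ᵐ[ν] (ν.map (fun b : B => g⁻¹ • b)).rnDeriv ν)
    (hsupp : ν.IsOpenPosMeasure) (g : G) (b : B) :
    c g b * Real.sqrt (c g⁻¹ (g • b)) = Real.sqrt (c g b) := by
  have hone : c (1 : G) b = 1 := by
    refine c_eq_one hact hqinv hc_pos hc_cont hc_rn hsupp ?_ b
    have : (fun b : B => (1 : G)⁻¹ • b) = id := by funext x; simp
    rw [this, Measure.map_id]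
  have hco := cocycle hact hqinv hc_pos hc_cont hc_rn hsupp g⁻¹ g b
  rw [inv_mul_cancel, hone] at hco
  have hinv : c g⁻¹ (g • b) = (c g b)⁻¹ := eq_inv_of_mul_eq_one_left hco.symm
  have hpos := hc_pos g b
  have hs : Real.sqrt (c g b) ≠ 0 := by positivity
  rw [hinv, Real.sqrt_inv]
  nth_rewrite 1 [← Real.mul_self_sqrt hpos.le]
  exact mul_inv_cancel_right₀ hs _

lemma Xi_lintegral {c : G → B → ℝ} (hc_pos : ∀ g b, 0 < c g b)
    (hc_cont : Continuous fun p : G × B => c p.1 p.2)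
    {Ξ : G → ℝ} (hΞ : ∀ g : G, Ξ g = ∫ b, Real.sqrt (c g⁻¹ b) ∂ν) (g : G) :
    ENNReal.ofReal (Ξ g) = ∫⁻ b, ENNReal.ofReal (Real.sqrt (c g⁻¹ b)) ∂ν := by
  rw [hΞ g]
  refine ofReal_integral_eq_lintegral_ofReal ?_ ?_
  · exact cont_integrable ((cont_c hc_cont g⁻¹).sqrt)
  · exact Filter.Eventually.of_forall fun b => Real.sqrt_nonneg _

lemma Xi_pos {c : G → B → ℝ} (hc_pos : ∀ g b, 0 < c g b)
    (hc_cont : Continuous fun p : G × B => c p.1 p.2)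
    {Ξ : G → ℝ} (hΞ : ∀ g : G, Ξ g = ∫ b, Real.sqrt (c g⁻¹ b) ∂ν) (g : G) :
    0 < Ξ g := by
  haveI : Nonempty B := B_nonempty' ν
  obtain ⟨b₀, _, hb₀⟩ := (isCompact_univ (X := B)).exists_isMinOn Set.univ_nonempty
    ((cont_c hc_cont g⁻¹).sqrt.continuousOn)
  set ε := Real.sqrt (c g⁻¹ b₀) with hε
  have hεpos : 0 < ε := Real.sqrt_pos.2 (hc_pos _ _)
  have hle : ∀ b : B, ε ≤ Real.sqrt (c g⁻¹ b) := fun b => hb₀ (Set.mem_univ b)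
  have : (ε : ℝ) = ∫ _b, ε ∂ν := by simp
  rw [hΞ g]
  calc (0 : ℝ) < ε := hεpos
    _ = ∫ _b, ε ∂ν := this
    _ ≤ ∫ b, Real.sqrt (c g⁻¹ b) ∂ν :=
        integral_mono (integrable_const ε)
          (cont_integrable ((cont_c hc_cont g⁻¹).sqrt)) hle

variable {c : G → B → ℝ}

lemma c_mul_right (hact : Continuous fun p : G × B => p.1 • p.2)
    (hqinv : ∀ g : G, ν.map (fun b : B => g • b) ≪ ν)
    (hc_pos : ∀ g b, 0 < c g b)
    (hc_cont : Continuous fun p : G × B => c p.1 p.2)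
    (hc_rn : ∀ g : G,
      (fun b => ENNReal.ofReal (c g b)) =ᵐ[ν] (ν.map (fun b : B => g⁻¹ • b)).rnDeriv ν)
    (hsupp : ν.IsOpenPosMeasure)
    {u : G} (hu : ν.map (fun b : B => u • b) = ν) (γ : G) (b : B) :
    c (γ * u)⁻¹ b = c γ⁻¹ b := by
  have h1 : c u⁻¹ b = 1 :=
    c_eq_one hact hqinv hc_pos hc_cont hc_rn hsupp (by simpa using hu) b
  rw [mul_inv_rev, cocycle hact hqinv hc_pos hc_cont hc_rn hsupp u⁻¹ γ⁻¹ b]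
  have h2 : c u⁻¹ (γ⁻¹ • b) = 1 :=
    c_eq_one hact hqinv hc_pos hc_cont hc_rn hsupp (by simpa using hu) _
  rw [h2, one_mul]

lemma c_mul_left (hact : Continuous fun p : G × B => p.1 • p.2)
    (hqinv : ∀ g : G, ν.map (fun b : B => g • b) ≪ ν)
    (hc_pos : ∀ g b, 0 < c g b)
    (hc_cont : Continuous fun p : G × B => c p.1 p.2)
    (hc_rn : ∀ g : G,
      (fun b => ENNReal.ofReal (c g b)) =ᵐ[ν] (ν.map (fun b : B => g⁻¹ • b)).rnDeriv ν)
    (hsupp : ν.IsOpenPosMeasure)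
    {k : G} (hk : ν.map (fun b : B => k • b) = ν) (g : G) (b : B) :
    c (k * g)⁻¹ b = c g⁻¹ (k⁻¹ • b) := by
  rw [mul_inv_rev, cocycle hact hqinv hc_pos hc_cont hc_rn hsupp g⁻¹ k⁻¹ b]
  have h2 : c k⁻¹ b = 1 :=
    c_eq_one hact hqinv hc_pos hc_cont hc_rn hsupp (by simpa using hk) b
  rw [h2, mul_one]

lemma Xi_mul_right (hact : Continuous fun p : G × B => p.1 • p.2)
    (hqinv : ∀ g : G, ν.map (fun b : B => g • b) ≪ ν)
    (hc_pos : ∀ g b, 0 < c g b)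
    (hc_cont : Continuous fun p : G × B => c p.1 p.2)
    (hc_rn : ∀ g : G,
      (fun b => ENNReal.ofReal (c g b)) =ᵐ[ν] (ν.map (fun b : B => g⁻¹ • b)).rnDeriv ν)
    (hsupp : ν.IsOpenPosMeasure)
    {Ξ : G → ℝ} (hΞ : ∀ g : G, Ξ g = ∫ b, Real.sqrt (c g⁻¹ b) ∂ν)
    {u : G} (hu : ν.map (fun b : B => u • b) = ν) (γ : G) :
    Ξ (γ * u) = Ξ γ := by
  rw [hΞ (γ * u), hΞ γ]
  refine integral_congr_ae (Filter.Eventually.of_forall fun b => ?_)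
  simp only []
  rw [c_mul_right hact hqinv hc_pos hc_cont hc_rn hsupp hu γ b]

lemma Xi_mul_left (hact : Continuous fun p : G × B => p.1 • p.2)
    (hqinv : ∀ g : G, ν.map (fun b : B => g • b) ≪ ν)
    (hc_pos : ∀ g b, 0 < c g b)
    (hc_cont : Continuous fun p : G × B => c p.1 p.2)
    (hc_rn : ∀ g : G,
      (fun b => ENNReal.ofReal (c g b)) =ᵐ[ν] (ν.map (fun b : B => g⁻¹ • b)).rnDeriv ν)
    (hsupp : ν.IsOpenPosMeasure)
    {Ξ : G → ℝ} (hΞ : ∀ g : G, Ξ g = ∫ b, Real.sqrt (c g⁻¹ b) ∂ν)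
    {k : G} (hk1 : ν.map (fun b : B => k • b) = ν)
    (hk2 : ν.map (fun b : B => k⁻¹ • b) = ν) (g : G) :
    Ξ (k * g) = Ξ g := by
  rw [hΞ (k * g), hΞ g]
  have h1 : ∫ b, Real.sqrt (c (k * g)⁻¹ b) ∂ν
      = ∫ b, Real.sqrt (c g⁻¹ (k⁻¹ • b)) ∂ν := by
    refine integral_congr_ae (Filter.Eventually.of_forall fun b => ?_)
    simp only []
    rw [c_mul_left hact hqinv hc_pos hc_cont hc_rn hsupp hk1 g b]
  have h2 := integral_map (μ := ν) (φ := fun b : B => k⁻¹ • b)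
    (meas_smul hact k⁻¹).aemeasurable
    (f := fun x => Real.sqrt (c g⁻¹ x))
    ((cont_c hc_cont g⁻¹).sqrt.aestronglyMeasurable)
  rw [hk2] at h2
  rw [h1, ← h2]

lemma change_var (hact : Continuous fun p : G × B => p.1 • p.2)
    (hqinv : ∀ g : G, ν.map (fun b : B => g • b) ≪ ν)
    (hc_pos : ∀ g b, 0 < c g b)
    (hc_cont : Continuous fun p : G × B => c p.1 p.2)
    (hc_rn : ∀ g : G,
      (fun b => ENNReal.ofReal (c g b)) =ᵐ[ν] (ν.map (fun b : B => g⁻¹ • b)).rnDeriv ν)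
    (hsupp : ν.IsOpenPosMeasure)
    (γ : G) {m : B → ℝ≥0∞} (hm : AEMeasurable m ν) :
    ∫⁻ b, ENNReal.ofReal (Real.sqrt (c γ⁻¹ b)) * m (γ⁻¹ • b) ∂ν
      = ∫⁻ b, ENNReal.ofReal (Real.sqrt (c γ b)) * m b ∂ν := by
  set Q : B → ℝ≥0∞ := fun x => ENNReal.ofReal (Real.sqrt (c γ⁻¹ (γ • x))) * m x with hQ
  have hQm : AEMeasurable Q (ν.map (fun b : B => γ⁻¹ • b)) := by
    refine AEMeasurable.mul ?_ (hm.mono_ac (hqinv γ⁻¹))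
    exact (ENNReal.continuous_ofReal.comp
      ((cont_c hc_cont γ⁻¹).sqrt.comp (cont_smul hact γ))).measurable.aemeasurable
  have h1 : ∫⁻ b, ENNReal.ofReal (Real.sqrt (c γ⁻¹ b)) * m (γ⁻¹ • b) ∂ν
      = ∫⁻ b, Q (γ⁻¹ • b) ∂ν := by
    congr 1; funext b; rw [hQ]; simp only [smul_inv_smul]
  have hcm : AEMeasurable (fun b => ENNReal.ofReal (c γ b)) ν :=
    (ENNReal.continuous_ofReal.comp (cont_c hc_cont γ)).measurable.aemeasurable
  have hQm' : AEMeasurable Q (ν.withDensity fun b => ENNReal.ofReal (c γ b)) := by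
    rw [← map_eq_withDensity hact hqinv hc_rn γ]; exact hQm
  rw [h1, ← lintegral_map' hQm (meas_smul hact γ⁻¹).aemeasurable,
    map_eq_withDensity hact hqinv hc_rn γ,
    lintegral_withDensity_eq_lintegral_mul₀' hcm hQm']
  congr 1; funext b
  rw [hQ]
  simp only [Pi.mul_apply]
  rw [← mul_assoc, ← ENNReal.ofReal_mul (hc_pos γ b).le,
    sqrt_key hact hqinv hc_pos hc_cont hc_rn hsupp γ b]

lemma Xi_inv (hact : Continuous fun p : G × B => p.1 • p.2)
    (hqinv : ∀ g : G, ν.map (fun b : B => g • b) ≪ ν)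
    (hc_pos : ∀ g b, 0 < c g b)
    (hc_cont : Continuous fun p : G × B => c p.1 p.2)
    (hc_rn : ∀ g : G,
      (fun b => ENNReal.ofReal (c g b)) =ᵐ[ν] (ν.map (fun b : B => g⁻¹ • b)).rnDeriv ν)
    (hsupp : ν.IsOpenPosMeasure)
    {Ξ : G → ℝ} (hΞ : ∀ g : G, Ξ g = ∫ b, Real.sqrt (c g⁻¹ b) ∂ν) (g : G) :
    Ξ g⁻¹ = Ξ g := by
  have key : ∫⁻ b, ENNReal.ofReal (Real.sqrt (c g⁻¹ b)) * (1 : ℝ≥0∞) ∂ν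
      = ∫⁻ b, ENNReal.ofReal (Real.sqrt (c g b)) * (1 : ℝ≥0∞) ∂ν :=
    change_var hact hqinv hc_pos hc_cont hc_rn hsupp g aemeasurable_const
  simp only [mul_one] at key
  have h1 : ENNReal.ofReal (Ξ g⁻¹) = ENNReal.ofReal (Ξ g) := by
    rw [Xi_lintegral hc_pos hc_cont hΞ g⁻¹, Xi_lintegral hc_pos hc_cont hΞ g, inv_inv]
    exact key.symm
  exact (ENNReal.ofReal_eq_ofReal_iff
    (Xi_pos hc_pos hc_cont hΞ g⁻¹).le (Xi_pos hc_pos hc_cont hΞ g).le).1 h1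



section Swap

variable {X Y : Type*} [TopologicalSpace X] [MeasurableSpace X] [BorelSpace X]
    [TopologicalSpace Y] [MeasurableSpace Y] [BorelSpace Y]

lemma unif_nbhd {ψ : X → Y → ℝ} (hψ : Continuous fun p : X × Y => ψ p.1 p.2)
    {C' : Set Y} (hC' : IsCompact C') {ε : ℝ} (hε : 0 < ε) (x : X) :
    ∃ W : Set X, IsOpen W ∧ x ∈ W ∧ ∀ x' ∈ W, ∀ y ∈ C', |ψ x' y - ψ x y| ≤ ε := by
  have key : ∀ y : Y, ∃ (U : Set X) (V : Set Y), IsOpen U ∧ IsOpen V ∧ x ∈ U ∧ y ∈ V ∧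
      ∀ x' ∈ U, ∀ y' ∈ V, |ψ x' y' - ψ x y| < ε / 2 := by
    intro y
    have hopen : IsOpen {p : X × Y | |ψ p.1 p.2 - ψ x y| < ε / 2} := by
      have hcont : Continuous fun p : X × Y => |ψ p.1 p.2 - ψ x y| :=
        (hψ.sub continuous_const).abs
      exact isOpen_lt hcont continuous_const
    have hmem : (x, y) ∈ {p : X × Y | |ψ p.1 p.2 - ψ x y| < ε / 2} := by
      simp [half_pos hε]
    obtain ⟨U, V, hU, hV, hxU, hyV, hUV⟩ := isOpen_prod_iff.1 hopen x y hmem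
    exact ⟨U, V, hU, hV, hxU, hyV, fun x' hx' y' hy' => hUV (Set.mk_mem_prod hx' hy')⟩
  choose U V hU hV hxU hyV hUV using key
  obtain ⟨t, ht⟩ := hC'.elim_finite_subcover V hV (fun y hy => Set.mem_iUnion.2 ⟨y, hyV y⟩)
  refine ⟨⋂ y ∈ t, U y, isOpen_biInter_finset (fun y _ => hU y), ?_, ?_⟩
  · exact Set.mem_biInter fun y _ => hxU y
  · intro x' hx' y hy
    obtain ⟨y₀, hy₀t, hyV₀⟩ := Set.mem_iUnion₂.1 (ht hy)
    have h1 : |ψ x' y - ψ x y₀| < ε / 2 :=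
      hUV y₀ x' (Set.mem_iInter₂.1 hx' y₀ hy₀t) y hyV₀
    have h2 : |ψ x y - ψ x y₀| < ε / 2 := hUV y₀ x (hxU y₀) y hyV₀
    calc |ψ x' y - ψ x y| ≤ |ψ x' y - ψ x y₀| + |ψ x y₀ - ψ x y| := abs_sub_le _ _ _
      _ = |ψ x' y - ψ x y₀| + |ψ x y - ψ x y₀| := by rw [abs_sub_comm (ψ x y₀)]
      _ ≤ ε / 2 + ε / 2 := by linarith
      _ = ε := by ring

lemma swap_le (ρ : Measure X) (σ : Measure Y) {A A' : Set X} {C C' : Set Y}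
    (hA : MeasurableSet A) (hA' : IsCompact A') (hAA : A ⊆ A') (hρ : ρ A ≠ ∞)
    (hC : MeasurableSet C) (hC' : IsCompact C') (hCC : C ⊆ C') (hσ : σ C ≠ ∞)
    {ψ : X → Y → ℝ} (hψ : Continuous fun p : X × Y => ψ p.1 p.2)
    (hψ0 : ∀ x y, 0 ≤ ψ x y) :
    ∫⁻ x in A, (∫⁻ y in C, ENNReal.ofReal (ψ x y) ∂σ) ∂ρ
      ≤ ∫⁻ y in C, (∫⁻ x in A, ENNReal.ofReal (ψ x y) ∂ρ) ∂σ := by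
  set I₁ := ∫⁻ x in A, (∫⁻ y in C, ENNReal.ofReal (ψ x y) ∂σ) ∂ρ with hI₁
  set I₂ := ∫⁻ y in C, (∫⁻ x in A, ENNReal.ofReal (ψ x y) ∂ρ) ∂σ with hI₂
  have main : ∀ ε : ℝ, 0 < ε →
      I₁ ≤ I₂ + 2 * ENNReal.ofReal ε * (ρ A * σ C) := by
    intro ε hε
    rcases Set.eq_empty_or_nonempty A' with hA'e | hA'ne
    · have hAe : A = ∅ := Set.eq_empty_of_subset_empty (hA'e ▸ hAA)
      have hz : I₁ = 0 := by rw [hI₁, hAe]; simp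
      rw [hz]; exact zero_le
    obtain ⟨x₀, _⟩ := hA'ne
    choose W hWopen hWmem hWprop using fun x : X => unif_nbhd hψ hC' hε x
    obtain ⟨t, ht⟩ := hA'.elim_finite_subcover W hWopen
      (fun x hx => Set.mem_iUnion.2 ⟨x, hWmem x⟩)
    set l := t.toList with hl
    set wseq : ℕ → Set X := fun i => if h : i < l.length then W (l.get ⟨i, h⟩) else ∅
      with hwseq
    set ctr : ℕ → X := fun i => if h : i < l.length then l.get ⟨i, h⟩ else x₀ with hctr
    have hwseq_meas : ∀ i, MeasurableSet (wseq i) := by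
      intro i
      simp only [hwseq]
      split
      · exact (hWopen _).measurableSet
      · exact MeasurableSet.empty
    have hcover : A ⊆ ⋃ i, wseq i := by
      intro x hx
      obtain ⟨x', hx't, hxW⟩ := Set.mem_iUnion₂.1 (ht (hAA hx))
      obtain ⟨⟨i, hi⟩, hget⟩ := List.mem_iff_get.1 (Finset.mem_toList.2 hx't)
      refine Set.mem_iUnion.2 ⟨i, ?_⟩
      simp only [hwseq]
      rw [dif_pos hi, hget]
      exact hxW
    set E : ℕ → Set X := fun i => A ∩ disjointed wseq i with hE
    have hEmeas : ∀ i, MeasurableSet (E i) := fun i =>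
      hA.inter (MeasurableSet.disjointed hwseq_meas i)
    have hEdisj : Pairwise (Function.onFun Disjoint E) := fun i j hij =>
      ((disjoint_disjointed wseq) hij).mono Set.inter_subset_right Set.inter_subset_right
    have hEunion : (⋃ i, E i) = A := by
      simp only [hE]
      rw [← Set.inter_iUnion, iUnion_disjointed, Set.inter_eq_left]
      exact hcover
    have hEsub : ∀ i, E i ⊆ wseq i := fun i =>
      (Set.inter_subset_right).trans (disjointed_subset wseq i)
    have happrox : ∀ i, ∀ x ∈ E i, ∀ y ∈ C', |ψ x y - ψ (ctr i) y| ≤ ε := by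
      intro i x hx y hy
      have hxw := hEsub i hx
      by_cases h : i < l.length
      · have hx2 : x ∈ W (l.get ⟨i, h⟩) := by simpa [hwseq, h] using hxw
        have := hWprop (l.get ⟨i, h⟩) x hx2 y hy
        simpa [hctr, h] using this
      · exfalso; simpa [hwseq, h] using hxw
    set Aj : ℕ → ℝ≥0∞ := fun i => ∫⁻ y in C, ENNReal.ofReal (ψ (ctr i) y) ∂σ with hAj
    set S : ℝ≥0∞ := ∑' i, ρ (E i) * Aj i with hS
    have hsum_meas : ∑' i, ρ (E i) = ρ A := by
      rw [← measure_iUnion hEdisj hEmeas, hEunion]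
    have hmeas_ctr : ∀ i, Measurable fun y => ENNReal.ofReal (ψ (ctr i) y) := fun i =>
      (ENNReal.continuous_ofReal.comp
        (hψ.comp (continuous_const.prodMk continuous_id))).measurable
    have claim1 : I₁ ≤ S + ENNReal.ofReal ε * (σ C * ρ A) := by
      have h1 : I₁ = ∑' i, ∫⁻ x in E i, (∫⁻ y in C, ENNReal.ofReal (ψ x y) ∂σ) ∂ρ := by
        rw [hI₁, ← hEunion, lintegral_iUnion hEmeas hEdisj]
      have h2 : ∀ i, ∫⁻ x in E i, (∫⁻ y in C, ENNReal.ofReal (ψ x y) ∂σ) ∂ρ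
          ≤ (Aj i + ENNReal.ofReal ε * σ C) * ρ (E i) := by
        intro i
        have hbx : ∀ x ∈ E i, (∫⁻ y in C, ENNReal.ofReal (ψ x y) ∂σ)
            ≤ Aj i + ENNReal.ofReal ε * σ C := by
          intro x hx
          have hpt : ∀ y ∈ C, ENNReal.ofReal (ψ x y)
              ≤ ENNReal.ofReal (ψ (ctr i) y) + ENNReal.ofReal ε := by
            intro y hy
            have habs := happrox i x hx y (hCC hy)
            have hle : ψ x y ≤ ψ (ctr i) y + ε := by
              have h := abs_le.1 habs; linarith [h.2]
            calc ENNReal.ofReal (ψ x y) ≤ ENNReal.ofReal (ψ (ctr i) y + ε) :=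
                  ENNReal.ofReal_le_ofReal hle
              _ ≤ _ := ENNReal.ofReal_add_le
          calc (∫⁻ y in C, ENNReal.ofReal (ψ x y) ∂σ)
              ≤ ∫⁻ y in C, (ENNReal.ofReal (ψ (ctr i) y) + ENNReal.ofReal ε) ∂σ :=
                lintegral_mono_ae ((ae_restrict_iff' hC).2
                  (Filter.Eventually.of_forall fun y hy => hpt y hy))
            _ = Aj i + ENNReal.ofReal ε * σ C := by
                rw [lintegral_add_right _ measurable_const, lintegral_const,
                  Measure.restrict_apply_univ]
        calc ∫⁻ x in E i, (∫⁻ y in C, ENNReal.ofReal (ψ x y) ∂σ) ∂ρ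
            ≤ ∫⁻ _x in E i, (Aj i + ENNReal.ofReal ε * σ C) ∂ρ :=
              lintegral_mono_ae ((ae_restrict_iff' (hEmeas i)).2
                (Filter.Eventually.of_forall hbx))
          _ = (Aj i + ENNReal.ofReal ε * σ C) * ρ (E i) := by
              rw [lintegral_const, Measure.restrict_apply_univ]
      calc I₁ ≤ ∑' i, (Aj i + ENNReal.ofReal ε * σ C) * ρ (E i) := by
            rw [h1]; exact ENNReal.tsum_le_tsum h2
        _ = ∑' i, (ρ (E i) * Aj i + ENNReal.ofReal ε * σ C * ρ (E i)) := by
            congr 1; funext i; ring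
        _ = S + ENNReal.ofReal ε * σ C * ρ A := by
            rw [ENNReal.tsum_add, ENNReal.tsum_mul_left, hsum_meas]
        _ = S + ENNReal.ofReal ε * (σ C * ρ A) := by rw [mul_assoc]
    have claim2 : S ≤ I₂ + ENNReal.ofReal ε * (ρ A * σ C) := by
      have hyb : ∀ y ∈ C, (∑' i, ρ (E i) * ENNReal.ofReal (ψ (ctr i) y))
          ≤ (∫⁻ x in A, ENNReal.ofReal (ψ x y) ∂ρ) + ENNReal.ofReal ε * ρ A := by
        intro y hy
        have h3 : ∀ i, ρ (E i) * ENNReal.ofReal (ψ (ctr i) y)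
            ≤ ∫⁻ x in E i, (ENNReal.ofReal (ψ x y) + ENNReal.ofReal ε) ∂ρ := by
          intro i
          have hpt : ∀ x ∈ E i, ENNReal.ofReal (ψ (ctr i) y)
              ≤ ENNReal.ofReal (ψ x y) + ENNReal.ofReal ε := by
            intro x hx
            have habs := happrox i x hx y (hCC hy)
            have hle : ψ (ctr i) y ≤ ψ x y + ε := by
              have h := abs_le.1 habs; linarith [h.1]
            calc ENNReal.ofReal (ψ (ctr i) y) ≤ ENNReal.ofReal (ψ x y + ε) :=
                  ENNReal.ofReal_le_ofReal hle
              _ ≤ _ := ENNReal.ofReal_add_le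
          calc ρ (E i) * ENNReal.ofReal (ψ (ctr i) y)
              = ∫⁻ _x in E i, ENNReal.ofReal (ψ (ctr i) y) ∂ρ := by
                rw [lintegral_const, Measure.restrict_apply_univ, mul_comm]
            _ ≤ _ := lintegral_mono_ae ((ae_restrict_iff' (hEmeas i)).2
                (Filter.Eventually.of_forall hpt))
        calc (∑' i, ρ (E i) * ENNReal.ofReal (ψ (ctr i) y))
            ≤ ∑' i, ∫⁻ x in E i, (ENNReal.ofReal (ψ x y) + ENNReal.ofReal ε) ∂ρ :=
              ENNReal.tsum_le_tsum h3
          _ = ∫⁻ x in A, (ENNReal.ofReal (ψ x y) + ENNReal.ofReal ε) ∂ρ := by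
              rw [← hEunion, lintegral_iUnion hEmeas hEdisj]
          _ = (∫⁻ x in A, ENNReal.ofReal (ψ x y) ∂ρ) + ENNReal.ofReal ε * ρ A := by
              rw [lintegral_add_right _ measurable_const, lintegral_const,
                Measure.restrict_apply_univ]
      have hSrep : S = ∫⁻ y in C, (∑' i, ρ (E i) * ENNReal.ofReal (ψ (ctr i) y)) ∂σ := by
        rw [lintegral_tsum (fun i => ((hmeas_ctr i).const_mul _).aemeasurable)]
        simp only [hS, hAj]
        congr 1; funext i
        rw [lintegral_const_mul _ (hmeas_ctr i)]
      calc S = _ := hSrep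
        _ ≤ ∫⁻ y in C, ((∫⁻ x in A, ENNReal.ofReal (ψ x y) ∂ρ) + ENNReal.ofReal ε * ρ A) ∂σ :=
            lintegral_mono_ae ((ae_restrict_iff' hC).2 (Filter.Eventually.of_forall hyb))
        _ = I₂ + ENNReal.ofReal ε * ρ A * σ C := by
            rw [lintegral_add_right' _ aemeasurable_const, lintegral_const,
              Measure.restrict_apply_univ, hI₂]
        _ = I₂ + ENNReal.ofReal ε * (ρ A * σ C) := by rw [mul_assoc]
    calc I₁ ≤ S + ENNReal.ofReal ε * (σ C * ρ A) := claim1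
      _ ≤ I₂ + ENNReal.ofReal ε * (ρ A * σ C) + ENNReal.ofReal ε * (σ C * ρ A) :=
          add_le_add_left claim2 _
      _ = I₂ + 2 * ENNReal.ofReal ε * (ρ A * σ C) := by
          rw [mul_comm (σ C) (ρ A)]; ring
  rcases eq_top_or_lt_top I₂ with h | h
  · rw [h]; exact le_top
  refine ENNReal.le_of_forall_pos_le_add fun δ hδ _ => ?_
  set R := (ρ A * σ C).toReal + 1 with hR
  have hRpos : 0 < R := by positivity
  have hRfin : ρ A * σ C ≤ ENNReal.ofReal R := by
    rw [hR]
    calc ρ A * σ C = ENNReal.ofReal ((ρ A * σ C).toReal) :=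
        (ENNReal.ofReal_toReal (ENNReal.mul_ne_top hρ hσ)).symm
      _ ≤ _ := ENNReal.ofReal_le_ofReal (by linarith)
  have hδR : (0 : ℝ) < (δ : ℝ) := hδ
  set ε := (δ : ℝ) / (2 * R) with hεdef
  have hεpos : 0 < ε := by positivity
  have key2 : 2 * ENNReal.ofReal ε * ENNReal.ofReal R = (δ : ℝ≥0∞) := by
    have h2εR : 2 * ε * R = (δ : ℝ) := by
      rw [hεdef]
      field_simp
    calc 2 * ENNReal.ofReal ε * ENNReal.ofReal R
        = ENNReal.ofReal 2 * ENNReal.ofReal ε * ENNReal.ofReal R := by norm_num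
      _ = ENNReal.ofReal (2 * ε * R) := by
          rw [← ENNReal.ofReal_mul (by norm_num : (0:ℝ) ≤ 2),
            ← ENNReal.ofReal_mul (by positivity : (0:ℝ) ≤ 2 * ε)]
      _ = ENNReal.ofReal (δ : ℝ) := by rw [h2εR]
      _ = (δ : ℝ≥0∞) := ENNReal.ofReal_coe_nnreal
  calc I₁ ≤ I₂ + 2 * ENNReal.ofReal ε * (ρ A * σ C) := main ε hεpos
    _ ≤ I₂ + 2 * ENNReal.ofReal ε * ENNReal.ofReal R := by gcongr
    _ = I₂ + δ := by rw [key2]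

lemma swap_eq (ρ : Measure X) (σ : Measure Y) {A A' : Set X} {C C' : Set Y}
    (hA : MeasurableSet A) (hA' : IsCompact A') (hAA : A ⊆ A') (hρ : ρ A ≠ ∞)
    (hC : MeasurableSet C) (hC' : IsCompact C') (hCC : C ⊆ C') (hσ : σ C ≠ ∞)
    {ψ : X → Y → ℝ} (hψ : Continuous fun p : X × Y => ψ p.1 p.2)
    (hψ0 : ∀ x y, 0 ≤ ψ x y) :
    ∫⁻ x in A, (∫⁻ y in C, ENNReal.ofReal (ψ x y) ∂σ) ∂ρ
      = ∫⁻ y in C, (∫⁻ x in A, ENNReal.ofReal (ψ x y) ∂ρ) ∂σ := by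
  refine le_antisymm
    (swap_le ρ σ hA hA' hAA hρ hC hC' hCC hσ hψ hψ0) ?_
  exact swap_le σ ρ hC hC' hCC hσ hA hA' hAA hρ
    (ψ := fun y x => ψ x y) (hψ.comp continuous_swap) (fun y x => hψ0 x y)

end Swap


section Haar

variable (𝓛 : G → ℝ)

lemma L_mul_left (hlen : Stmt1.IsLengthFun 𝓛) {k : G} (hk : 𝓛 k = 0) (x : G) :
    𝓛 (k * x) = 𝓛 x := by
  obtain ⟨h1, hnn, hinv, htri⟩ := hlen
  refine le_antisymm ?_ ?_
  · calc 𝓛 (k * x) ≤ 𝓛 k + 𝓛 x := htri k x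
      _ = 𝓛 x := by rw [hk, zero_add]
  · calc 𝓛 x = 𝓛 (k⁻¹ * (k * x)) := by rw [inv_mul_cancel_left]
      _ ≤ 𝓛 k⁻¹ + 𝓛 (k * x) := htri _ _
      _ = 𝓛 (k * x) := by rw [hinv, hk, zero_add]

lemma L_mul_right (hlen : Stmt1.IsLengthFun 𝓛) {u : G} (hu : 𝓛 u = 0) (x : G) :
    𝓛 (x * u) = 𝓛 x := by
  obtain ⟨h1, hnn, hinv, htri⟩ := hlen
  refine le_antisymm ?_ ?_
  · calc 𝓛 (x * u) ≤ 𝓛 x + 𝓛 u := htri x u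
      _ = 𝓛 x := by rw [hu, add_zero]
  · calc 𝓛 x = 𝓛 (x * u * u⁻¹) := by rw [mul_inv_cancel_right]
      _ ≤ 𝓛 (x * u) + 𝓛 u⁻¹ := htri _ _
      _ = 𝓛 (x * u) := by rw [hinv, hu, add_zero]

lemma L_inv (hlen : Stmt1.IsLengthFun 𝓛) (x : G) : 𝓛 x⁻¹ = 𝓛 x := hlen.2.2.1 x

lemma sphere_open (hlen : Stmt1.IsLengthFun 𝓛)
    (hG0_open : IsOpen {g : G | 𝓛 g = 0}) (t : ℝ) :
    IsOpen {g : G | 𝓛 g = t} := by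
  refine isOpen_iff_forall_mem_open.2 fun g hg => ?_
  refine ⟨(fun x => g⁻¹ * x) ⁻¹' {y : G | 𝓛 y = 0}, ?_, ?_, ?_⟩
  · intro x hx
    have hx' : 𝓛 (g⁻¹ * x) = 0 := hx
    have : 𝓛 (g * (g⁻¹ * x)) = 𝓛 g := L_mul_right 𝓛 hlen hx' g
    rw [mul_inv_cancel_left] at this
    rw [Set.mem_setOf_eq, this]; exact hg
  · exact hG0_open.preimage (continuous_const.mul continuous_id)
  · simp [hlen.1]

variable (μG : Measure G) [μG.IsHaarMeasure]

lemma avg_lemma (hact : Continuous fun p : G × B => p.1 • p.2)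
    (hlen : Stmt1.IsLengthFun 𝓛)
    (hG0_compact : IsCompact {g : G | 𝓛 g = 0})
    (hG0_open : IsOpen {g : G | 𝓛 g = 0})
    (hG0_trans : ∀ b b' : B, ∃ g : G, 𝓛 g = 0 ∧ g • b = b')
    (hG0_inv : ∀ g : G, 𝓛 g = 0 → ν.map (fun b : B => g • b) = ν)
    (hc_pos : ∀ g b, 0 < c g b)
    (hc_cont : Continuous fun p : G × B => c p.1 p.2)
    {Ξ : G → ℝ} (hΞ : ∀ g : G, Ξ g = ∫ b, Real.sqrt (c g⁻¹ b) ∂ν)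
    (g : G) (b : B) :
    ∫⁻ k in {x : G | 𝓛 x = 0}, ENNReal.ofReal (Real.sqrt (c g⁻¹ (k⁻¹ • b))) ∂μG
      = μG {x : G | 𝓛 x = 0} * ENNReal.ofReal (Ξ g) := by
  set G₀ : Set G := {x : G | 𝓛 x = 0} with hG₀
  have hG0m : MeasurableSet G₀ := hG0_open.measurableSet
  set F : B → ℝ≥0∞ := fun x => ENNReal.ofReal (Real.sqrt (c g⁻¹ x)) with hF
  have hFmeas : Measurable F :=
    (ENNReal.continuous_ofReal.comp (cont_c hc_cont g⁻¹).sqrt).measurable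
  set Φ : B → ℝ≥0∞ := fun x => ∫⁻ k in G₀, F (k⁻¹ • x) ∂μG with hΦ
  -- invariance of Φ
  have hinv : ∀ k₀ : G, 𝓛 k₀ = 0 → ∀ x : B, Φ (k₀ • x) = Φ x := by
    intro k₀ hk₀ x
    have e1 : Φ (k₀ • x)
        = ∫⁻ k, G₀.indicator (fun y : G => F ((y⁻¹ * k₀) • x)) k ∂μG := by
      simp only [hΦ]
      rw [← lintegral_indicator hG0m]
      congr 1; funext k
      by_cases hk : k ∈ G₀
      · rw [Set.indicator_of_mem hk, Set.indicator_of_mem hk, mul_smul]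
      · rw [Set.indicator_of_notMem hk, Set.indicator_of_notMem hk]
    rw [e1, ← lintegral_mul_left_eq_self
      (fun k => G₀.indicator (fun y : G => F ((y⁻¹ * k₀) • x)) k) k₀]
    simp only [hΦ]
    rw [← lintegral_indicator hG0m]
    congr 1; funext k
    have hmem : k₀ * k ∈ G₀ ↔ k ∈ G₀ := by
      simp only [hG₀, Set.mem_setOf_eq, L_mul_left 𝓛 hlen hk₀ k]
    by_cases hk : k ∈ G₀
    · rw [Set.indicator_of_mem (hmem.2 hk), Set.indicator_of_mem hk]
      congr 1
      rw [mul_inv_rev, mul_assoc, inv_mul_cancel, mul_one]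
    · rw [Set.indicator_of_notMem (fun hc => hk (hmem.1 hc)),
        Set.indicator_of_notMem hk]
  -- Φ is constant
  have hconst : ∀ x y : B, Φ x = Φ y := by
    intro x y
    obtain ⟨k₀, hk₀, hxy⟩ := hG0_trans x y
    rw [← hxy]; exact (hinv k₀ hk₀ x).symm
  -- integrate over ν
  haveI : IsFiniteMeasure (μG.restrict G₀) := by
    constructor
    rw [Measure.restrict_apply_univ]
    exact hG0_compact.measure_lt_top
  have hswap : ∫⁻ x, Φ x ∂ν
      = ∫⁻ k in G₀, (∫⁻ x, F (k⁻¹ • x) ∂ν) ∂μG := by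
    have hψc : Continuous fun p : B × G => Real.sqrt (c g⁻¹ (p.2⁻¹ • p.1)) :=
      ((cont_c hc_cont g⁻¹).comp
        (hact.comp ((continuous_snd.inv).prodMk continuous_fst))).sqrt
    have hsw := swap_eq (X := B) (Y := G) ν μG (A := Set.univ) (A' := Set.univ)
      (C := G₀) (C' := G₀) MeasurableSet.univ isCompact_univ (subset_refl _)
      (measure_ne_top ν _) hG0m hG0_compact (subset_refl _)
      hG0_compact.measure_lt_top.ne
      (ψ := fun x k => Real.sqrt (c g⁻¹ (k⁻¹ • x))) hψc
      (fun x k => Real.sqrt_nonneg _)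
    simp only [Measure.restrict_univ] at hsw
    rw [hΦ]
    exact hsw
  have hinner : ∫⁻ k in G₀, (∫⁻ x, F (k⁻¹ • x) ∂ν) ∂μG
      = ∫⁻ _k in G₀, ENNReal.ofReal (Ξ g) ∂μG := by
    refine setLIntegral_congr_fun hG0m (fun k hk => ?_)
    have h1 : ∫⁻ x, F (k⁻¹ • x) ∂ν = ∫⁻ x, F x ∂(ν.map (fun x : B => k⁻¹ • x)) :=
      (lintegral_map hFmeas (meas_smul hact k⁻¹)).symm
    have hk' : 𝓛 k⁻¹ = 0 := by rw [L_inv 𝓛 hlen]; exact hk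
    rw [h1, hG0_inv k⁻¹ hk', hF, ← Xi_lintegral hc_pos hc_cont hΞ g]
  have heval : ∫⁻ x, Φ x ∂ν = μG G₀ * ENNReal.ofReal (Ξ g) := by
    rw [hswap, hinner, setLIntegral_const, mul_comm]
  have hconst2 : ∫⁻ x, Φ x ∂ν = Φ b := by
    have : ∀ x, Φ x = Φ b := fun x => hconst x b
    calc ∫⁻ x, Φ x ∂ν = ∫⁻ _x, Φ b ∂ν := by
          congr 1; funext x; exact this x
      _ = Φ b * ν Set.univ := lintegral_const _
      _ = Φ b := by rw [measure_univ, mul_one]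
  calc ∫⁻ k in G₀, ENNReal.ofReal (Real.sqrt (c g⁻¹ (k⁻¹ • b))) ∂μG
      = Φ b := rfl
    _ = ∫⁻ x, Φ x ∂ν := hconst2.symm
    _ = μG G₀ * ENNReal.ofReal (Ξ g) := heval

lemma sphere_avg (hact : Continuous fun p : G × B => p.1 • p.2)
    (hqinv : ∀ g : G, ν.map (fun b : B => g • b) ≪ ν)
    (hlen : Stmt1.IsLengthFun 𝓛)
    (hproper : ∀ t : ℝ, IsCompact {g : G | 𝓛 g ≤ t})
    (hG0_compact : IsCompact {g : G | 𝓛 g = 0})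
    (hG0_open : IsOpen {g : G | 𝓛 g = 0})
    (hG0_trans : ∀ b b' : B, ∃ g : G, 𝓛 g = 0 ∧ g • b = b')
    (hG0_inv : ∀ g : G, 𝓛 g = 0 → ν.map (fun b : B => g • b) = ν)
    (hc_pos : ∀ g b, 0 < c g b)
    (hc_cont : Continuous fun p : G × B => c p.1 p.2)
    (hc_rn : ∀ g : G,
      (fun b => ENNReal.ofReal (c g b)) =ᵐ[ν] (ν.map (fun b : B => g⁻¹ • b)).rnDeriv ν)
    (hsupp : ν.IsOpenPosMeasure)
    {Ξ : G → ℝ} (hΞ : ∀ g : G, Ξ g = ∫ b, Real.sqrt (c g⁻¹ b) ∂ν)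
    (hΞ_cont : Continuous Ξ)
    (n : ℝ) (b : B) :
    ∫⁻ g in {x : G | 𝓛 x = n}, ENNReal.ofReal (Real.sqrt (c g⁻¹ b) / Ξ g) ∂μG
      = μG {x : G | 𝓛 x = n} := by
  have hXipos : ∀ g : G, 0 < Ξ g := Xi_pos hc_pos hc_cont hΞ
  set G₀ : Set G := {x : G | 𝓛 x = 0} with hG₀
  set Cn : Set G := {x : G | 𝓛 x = n} with hCn
  have hCno : IsOpen Cn := sphere_open 𝓛 hlen hG0_open n
  have hCnm : MeasurableSet Cn := hCno.measurableSet
  have hCnsub : Cn ⊆ {x : G | 𝓛 x ≤ n} := fun x hx => le_of_eq hx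
  have hCc : IsCompact {x : G | 𝓛 x ≤ n} := hproper n
  have hCfin : μG Cn ≠ ∞ := ((measure_mono hCnsub).trans_lt hCc.measure_lt_top).ne
  have hG0m : MeasurableSet G₀ := hG0_open.measurableSet
  have hG0fin : μG G₀ ≠ ∞ := hG0_compact.measure_lt_top.ne
  have hG0ne : μG G₀ ≠ 0 := hG0_open.measure_ne_zero μG ⟨1, hlen.1⟩
  set f : G → ℝ≥0∞ := fun g => ENNReal.ofReal (Real.sqrt (c g⁻¹ b) / Ξ g) with hf
  -- (a) left invariance of the sphere integral
  have ha : ∀ k₀ : G, 𝓛 k₀ = 0 →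
      ∫⁻ g in Cn, f (k₀ * g) ∂μG = ∫⁻ g in Cn, f g ∂μG := by
    intro k₀ hk₀
    have e1 : ∫⁻ g in Cn, f (k₀ * g) ∂μG
        = ∫⁻ g, Cn.indicator f (k₀ * g) ∂μG := by
      rw [← lintegral_indicator hCnm]
      congr 1; funext g
      by_cases hg : g ∈ Cn
      · have hg2 : k₀ * g ∈ Cn := by
          simp only [hCn, Set.mem_setOf_eq] at hg ⊢
          rw [L_mul_left 𝓛 hlen hk₀ g]; exact hg
        rw [Set.indicator_of_mem hg, Set.indicator_of_mem hg2]
      · have hg2 : k₀ * g ∉ Cn := by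
          simp only [hCn, Set.mem_setOf_eq] at hg ⊢
          rw [L_mul_left 𝓛 hlen hk₀ g]; exact hg
        rw [Set.indicator_of_notMem hg, Set.indicator_of_notMem hg2]
    rw [e1, lintegral_mul_left_eq_self (Cn.indicator f) k₀, lintegral_indicator hCnm]
  -- (b) integrate over k ∈ G₀
  have hb : ∫⁻ k in G₀, (∫⁻ g in Cn, f (k * g) ∂μG) ∂μG
      = (∫⁻ g in Cn, f g ∂μG) * μG G₀ := by
    calc ∫⁻ k in G₀, (∫⁻ g in Cn, f (k * g) ∂μG) ∂μG
        = ∫⁻ _k in G₀, (∫⁻ g in Cn, f g ∂μG) ∂μG :=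
          setLIntegral_congr_fun hG0m (fun k hk => ha k hk)
      _ = (∫⁻ g in Cn, f g ∂μG) * μG G₀ := by
          rw [lintegral_const, Measure.restrict_apply_univ]
  -- (c) swap
  have hψc : Continuous fun p : G × G => Real.sqrt (c (p.1 * p.2)⁻¹ b) / Ξ (p.1 * p.2) := by
    have hcb : Continuous fun g : G => c g b :=
      hc_cont.comp (continuous_id.prodMk continuous_const)
    exact ((hcb.comp (continuous_mul.inv)).sqrt).div (hΞ_cont.comp continuous_mul)
      (fun p => (hXipos _).ne')
  have hc : ∫⁻ k in G₀, (∫⁻ g in Cn, f (k * g) ∂μG) ∂μG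
      = ∫⁻ g in Cn, (∫⁻ k in G₀, f (k * g) ∂μG) ∂μG := by
    have hsw := swap_eq (X := G) (Y := G) μG μG (A := G₀) (A' := G₀)
      (C := Cn) (C' := {x : G | 𝓛 x ≤ n}) hG0m hG0_compact (subset_refl _) hG0fin
      hCnm hCc hCnsub hCfin
      (ψ := fun k g => Real.sqrt (c (k * g)⁻¹ b) / Ξ (k * g)) hψc
      (fun k g => div_nonneg (Real.sqrt_nonneg _) (hXipos _).le)
    exact hsw
  -- (d) inner integral over G₀
  have hd : ∀ g : G, ∫⁻ k in G₀, f (k * g) ∂μG = μG G₀ := by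
    intro g
    have e1 : ∫⁻ k in G₀, f (k * g) ∂μG
        = ∫⁻ k in G₀,
            ENNReal.ofReal (Real.sqrt (c g⁻¹ (k⁻¹ • b))) * ENNReal.ofReal (Ξ g)⁻¹ ∂μG := by
      refine setLIntegral_congr_fun hG0m (fun k hk => ?_)
      have hk0 : 𝓛 k = 0 := hk
      have hk0' : 𝓛 k⁻¹ = 0 := by rw [L_inv 𝓛 hlen]; exact hk0
      have h1 : c (k * g)⁻¹ b = c g⁻¹ (k⁻¹ • b) :=
        c_mul_left hact hqinv hc_pos hc_cont hc_rn hsupp (hG0_inv k hk0) g b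
      have h2 : Ξ (k * g) = Ξ g :=
        Xi_mul_left hact hqinv hc_pos hc_cont hc_rn hsupp hΞ
          (hG0_inv k hk0) (hG0_inv k⁻¹ hk0') g
      simp only [hf]
      rw [h1, h2, div_eq_mul_inv, ENNReal.ofReal_mul (Real.sqrt_nonneg _)]
    have hmeas : Measurable fun k : G => ENNReal.ofReal (Real.sqrt (c g⁻¹ (k⁻¹ • b))) := by
      refine (ENNReal.continuous_ofReal.comp ?_).measurable
      exact ((cont_c hc_cont g⁻¹).comp
        (hact.comp (continuous_inv.prodMk continuous_const))).sqrt
    rw [e1, lintegral_mul_const _ hmeas,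
      avg_lemma 𝓛 μG hact hlen hG0_compact hG0_open hG0_trans hG0_inv hc_pos hc_cont hΞ g b,
      mul_assoc, ← ENNReal.ofReal_mul (hXipos g).le, mul_inv_cancel₀ (hXipos g).ne',
      ENNReal.ofReal_one, mul_one]
  -- conclude
  have key : (∫⁻ g in Cn, f g ∂μG) * μG G₀ = μG Cn * μG G₀ := by
    rw [← hb, hc]
    calc ∫⁻ g in Cn, (∫⁻ k in G₀, f (k * g) ∂μG) ∂μG
        = ∫⁻ _g in Cn, μG G₀ ∂μG :=
          setLIntegral_congr_fun hCnm (fun g _ => hd g)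
      _ = μG G₀ * μG Cn := by rw [lintegral_const, Measure.restrict_apply_univ]
      _ = μG Cn * μG G₀ := mul_comm _ _
  have key2 : μG G₀ * (∫⁻ g in Cn, f g ∂μG) = μG G₀ * μG Cn := by
    rw [mul_comm, key, mul_comm]
  exact (ENNReal.mul_left_strictMono hG0ne hG0fin).injective key

lemma exists_U (hlen : Stmt1.IsLengthFun 𝓛) (hG0_open : IsOpen {g : G | 𝓛 g = 0})
    (Λ : Subgroup G) (hdisc : DiscreteTopology Λ) :
    ∃ U : Set G, IsOpen U ∧ (1 : G) ∈ U ∧ U ⊆ {g : G | 𝓛 g = 0} ∧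
      ∀ γ₁ γ₂ : Λ, γ₁ ≠ γ₂ →
        Disjoint ((fun x : G => (γ₁ : G)⁻¹ * x) ⁻¹' U)
          ((fun x : G => (γ₂ : G)⁻¹ * x) ⁻¹' U) := by
  have h1 : IsOpen ({1} : Set Λ) := isOpen_discrete _
  obtain ⟨V, hVopen, hVpre⟩ := isOpen_induced_iff.1 h1
  have h1V : (1 : G) ∈ V := by
    have : (1 : Λ) ∈ (Subtype.val ⁻¹' V : Set Λ) := by rw [hVpre]; rfl
    exact this
  set W : Set G := V ∩ {g : G | 𝓛 g = 0} with hW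
  have hWopen : IsOpen W := hVopen.inter hG0_open
  have h1W : (1 : G) ∈ W := ⟨h1V, hlen.1⟩
  obtain ⟨V₂, hV₂open, h1V₂, hV₂mul⟩ :=
    exists_open_nhds_one_mul_subset (hWopen.mem_nhds h1W)
  refine ⟨V₂ ∩ V₂⁻¹, hV₂open.inter hV₂open.inv, ⟨h1V₂, by simpa using h1V₂⟩, ?_, ?_⟩
  · intro u hu
    have : u * 1 ∈ W := hV₂mul (Set.mul_mem_mul hu.1 h1V₂)
    rw [mul_one] at this
    exact this.2
  · intro γ₁ γ₂ hne
    rw [Set.disjoint_left]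
    rintro x hx1 hx2
    set u₁ : G := (γ₁ : G)⁻¹ * x with hu₁
    set u₂ : G := (γ₂ : G)⁻¹ * x with hu₂
    have hu₁U : u₁ ∈ V₂ ∩ V₂⁻¹ := hx1
    have hu₂U : u₂ ∈ V₂ ∩ V₂⁻¹ := hx2
    have hδ : (γ₂ : G)⁻¹ * (γ₁ : G) = u₂ * u₁⁻¹ := by
      rw [hu₁, hu₂, mul_inv_rev, inv_inv]
      group
    have hδW : (γ₂ : G)⁻¹ * (γ₁ : G) ∈ W := by
      rw [hδ]
      refine hV₂mul (Set.mul_mem_mul hu₂U.1 ?_)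
      have := hu₁U.2
      simpa using this
    have hδΛ : (γ₂⁻¹ * γ₁ : Λ) ∈ (Subtype.val ⁻¹' V : Set Λ) := by
      simp only [Set.mem_preimage]
      push_cast
      exact hδW.1
    rw [hVpre] at hδΛ
    have : γ₂⁻¹ * γ₁ = (1 : Λ) := hδΛ
    exact hne (by rwa [inv_mul_eq_one, eq_comm] at this)

lemma lattice_bound (hact : Continuous fun p : G × B => p.1 • p.2)
    (hqinv : ∀ g : G, ν.map (fun b : B => g • b) ≪ ν)
    (hlen : Stmt1.IsLengthFun 𝓛)
    (hproper : ∀ t : ℝ, IsCompact {g : G | 𝓛 g ≤ t})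
    (hG0_compact : IsCompact {g : G | 𝓛 g = 0})
    (hG0_open : IsOpen {g : G | 𝓛 g = 0})
    (hG0_trans : ∀ b b' : B, ∃ g : G, 𝓛 g = 0 ∧ g • b = b')
    (hG0_inv : ∀ g : G, 𝓛 g = 0 → ν.map (fun b : B => g • b) = ν)
    (hc_pos : ∀ g b, 0 < c g b)
    (hc_cont : Continuous fun p : G × B => c p.1 p.2)
    (hc_rn : ∀ g : G,
      (fun b => ENNReal.ofReal (c g b)) =ᵐ[ν] (ν.map (fun b : B => g⁻¹ • b)).rnDeriv ν)
    (hsupp : ν.IsOpenPosMeasure)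
    {Ξ : G → ℝ} (hΞ : ∀ g : G, Ξ g = ∫ b, Real.sqrt (c g⁻¹ b) ∂ν)
    (hΞ_cont : Continuous Ξ)
    {U : Set G} (hUopen : IsOpen U) (hU1 : (1 : G) ∈ U)
    (hUG0 : U ⊆ {g : G | 𝓛 g = 0})
    {Λ : Subgroup G}
    (hUdisj : ∀ γ₁ γ₂ : Λ, γ₁ ≠ γ₂ →
      Disjoint ((fun x : G => (γ₁ : G)⁻¹ * x) ⁻¹' U)
        ((fun x : G => (γ₂ : G)⁻¹ * x) ⁻¹' U))
    (s : Finset Λ) (n : ℝ) (hs : ∀ γ ∈ s, 𝓛 (γ : G) = n) (b : B) :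
    (∑ γ ∈ s, ENNReal.ofReal (Real.sqrt (c ((γ : G))⁻¹ b) / Ξ (γ : G))) * μG U
      ≤ μG {x : G | 𝓛 x = n} := by
  have hXipos : ∀ g : G, 0 < Ξ g := Xi_pos hc_pos hc_cont hΞ
  set f : G → ℝ≥0∞ := fun g => ENNReal.ofReal (Real.sqrt (c g⁻¹ b) / Ξ g) with hf
  set T : Λ → Set G := fun γ => (fun x : G => (γ : G)⁻¹ * x) ⁻¹' U with hT
  have hTmeas : ∀ γ : Λ, MeasurableSet (T γ) :=
    fun γ => (hUopen.preimage (continuous_const.mul continuous_id)).measurableSet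
  have hTμ : ∀ γ : Λ, μG (T γ) = μG U := fun γ => measure_preimage_mul μG _ U
  have hTsub : ∀ γ ∈ s, T γ ⊆ {x : G | 𝓛 x = n} := by
    intro γ hγ x hx
    have hu : (γ : G)⁻¹ * x ∈ U := hx
    have hu0 : 𝓛 ((γ : G)⁻¹ * x) = 0 := hUG0 hu
    have : 𝓛 ((γ : G) * ((γ : G)⁻¹ * x)) = 𝓛 (γ : G) := L_mul_right 𝓛 hlen hu0 _
    rw [mul_inv_cancel_left] at this
    rw [Set.mem_setOf_eq, this, hs γ hγ]
  have hconst : ∀ γ : Λ, ∀ x ∈ T γ, f x = f (γ : G) := by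
    intro γ x hx
    have hu : (γ : G)⁻¹ * x ∈ U := hx
    have hu0 : 𝓛 ((γ : G)⁻¹ * x) = 0 := hUG0 hu
    have hxeq : x = (γ : G) * ((γ : G)⁻¹ * x) := by rw [mul_inv_cancel_left]
    have hinvν : ν.map (fun b : B => ((γ : G)⁻¹ * x) • b) = ν := hG0_inv _ hu0
    have h1 : c x⁻¹ b = c ((γ : G))⁻¹ b := by
      conv_lhs => rw [hxeq]
      exact c_mul_right hact hqinv hc_pos hc_cont hc_rn hsupp hinvν (γ : G) b
    have h2 : Ξ x = Ξ (γ : G) := by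
      conv_lhs => rw [hxeq]
      exact Xi_mul_right hact hqinv hc_pos hc_cont hc_rn hsupp hΞ hinvν (γ : G)
    simp only [hf]
    rw [h1, h2]
  have hint : ∀ γ ∈ s, ∫⁻ x in T γ, f x ∂μG = f (γ : G) * μG U := by
    intro γ _
    calc ∫⁻ x in T γ, f x ∂μG = ∫⁻ _x in T γ, f (γ : G) ∂μG :=
        setLIntegral_congr_fun (hTmeas γ)
          (fun x hx => hconst γ x hx)
      _ = f (γ : G) * μG (T γ) := by rw [lintegral_const, Measure.restrict_apply_univ]
      _ = f (γ : G) * μG U := by rw [hTμ]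
  have hdisj : Set.PairwiseDisjoint (↑s : Set Λ) T := by
    intro γ₁ _ γ₂ _ hne
    exact hUdisj γ₁ γ₂ hne
  calc (∑ γ ∈ s, ENNReal.ofReal (Real.sqrt (c ((γ : G))⁻¹ b) / Ξ (γ : G))) * μG U
      = ∑ γ ∈ s, f (γ : G) * μG U := by rw [Finset.sum_mul]
    _ = ∑ γ ∈ s, ∫⁻ x in T γ, f x ∂μG := by
        refine Finset.sum_congr rfl fun γ hγ => (hint γ hγ).symm
    _ = ∫⁻ x in ⋃ γ ∈ s, T γ, f x ∂μG :=
        (lintegral_biUnion_finset hdisj (fun γ _ => hTmeas γ) f).symm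
    _ ≤ ∫⁻ x in {x : G | 𝓛 x = n}, f x ∂μG := by
        refine lintegral_mono_set ?_
        exact Set.iUnion₂_subset hTsub
    _ = μG {x : G | 𝓛 x = n} :=
        sphere_avg 𝓛 μG hact hqinv hlen hproper hG0_compact hG0_open hG0_trans
          hG0_inv hc_pos hc_cont hc_rn hsupp hΞ hΞ_cont n b

lemma sum_inv (hact : Continuous fun p : G × B => p.1 • p.2)
    (hqinv : ∀ g : G, ν.map (fun b : B => g • b) ≪ ν)
    (hlen : Stmt1.IsLengthFun 𝓛)
    (hc_pos : ∀ g b, 0 < c g b)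
    (hc_cont : Continuous fun p : G × B => c p.1 p.2)
    (hc_rn : ∀ g : G,
      (fun b => ENNReal.ofReal (c g b)) =ᵐ[ν] (ν.map (fun b : B => g⁻¹ • b)).rnDeriv ν)
    (hsupp : ν.IsOpenPosMeasure)
    {Ξ : G → ℝ} (hΞ : ∀ g : G, Ξ g = ∫ b, Real.sqrt (c g⁻¹ b) ∂ν)
    {Λ : Subgroup G} (hfin : ∀ n : ℕ, {γ : Λ | 𝓛 (γ : G) = n}.Finite)
    (n : ℕ) (b : B) :
    ∑ γ ∈ (hfin n).toFinset, Real.sqrt (c ((γ : G)) b) / Ξ (γ : G)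
      = ∑ γ ∈ (hfin n).toFinset, Real.sqrt (c ((γ : G))⁻¹ b) / Ξ (γ : G) := by
  refine Finset.sum_bij' (fun γ _ => γ⁻¹) (fun γ _ => γ⁻¹) ?_ ?_ ?_ ?_ ?_
  · intro γ hγ
    rw [Set.Finite.mem_toFinset, Set.mem_setOf_eq] at hγ
    simp only [Set.Finite.mem_toFinset, Set.mem_setOf_eq]
    show 𝓛 ((γ⁻¹ : Λ) : G) = n
    have hco : ((γ⁻¹ : Λ) : G) = ((γ : G))⁻¹ := rfl
    rw [hco, L_inv 𝓛 hlen, hγ]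
  · intro γ hγ
    rw [Set.Finite.mem_toFinset, Set.mem_setOf_eq] at hγ
    simp only [Set.Finite.mem_toFinset, Set.mem_setOf_eq]
    show 𝓛 ((γ⁻¹ : Λ) : G) = n
    have hco : ((γ⁻¹ : Λ) : G) = ((γ : G))⁻¹ := rfl
    rw [hco, L_inv 𝓛 hlen, hγ]
  · intro γ _; simp
  · intro γ _; simp
  · intro γ _
    have hcoe : ((γ⁻¹ : Λ) : G) = ((γ : G))⁻¹ := rfl
    rw [hcoe, inv_inv, Xi_inv hact hqinv hc_pos hc_cont hc_rn hsupp hΞ]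

lemma uniform_bound (hact : Continuous fun p : G × B => p.1 • p.2)
    (hqinv : ∀ g : G, ν.map (fun b : B => g • b) ≪ ν)
    (hlen : Stmt1.IsLengthFun 𝓛)
    (hproper : ∀ t : ℝ, IsCompact {g : G | 𝓛 g ≤ t})
    (hG0_compact : IsCompact {g : G | 𝓛 g = 0})
    (hG0_open : IsOpen {g : G | 𝓛 g = 0})
    (hG0_trans : ∀ b b' : B, ∃ g : G, 𝓛 g = 0 ∧ g • b = b')
    (hG0_inv : ∀ g : G, 𝓛 g = 0 → ν.map (fun b : B => g • b) = ν)
    (hc_pos : ∀ g b, 0 < c g b)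
    (hc_cont : Continuous fun p : G × B => c p.1 p.2)
    (hc_rn : ∀ g : G,
      (fun b => ENNReal.ofReal (c g b)) =ᵐ[ν] (ν.map (fun b : B => g⁻¹ • b)).rnDeriv ν)
    (hsupp : ν.IsOpenPosMeasure)
    {Ξ : G → ℝ} (hΞ : ∀ g : G, Ξ g = ∫ b, Real.sqrt (c g⁻¹ b) ∂ν)
    (hΞ_cont : Continuous Ξ)
    {Λ : Subgroup G} (hdisc : DiscreteTopology Λ)
    (hfin : ∀ n : ℕ, {γ : Λ | 𝓛 (γ : G) = n}.Finite)
    {c₀ : ℝ} {N : ℕ} (hgrowth : ∀ n : ℕ, N ≤ n →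
      μG {g : G | 𝓛 g = n} ≤ ENNReal.ofReal (c₀ * ((hfin n).toFinset.card : ℝ))) :
    ∃ M : ℝ, 0 ≤ M ∧ ∀ n : ℕ, ∀ b : B,
      (∑ γ ∈ (hfin n).toFinset, Real.sqrt (c ((γ : G))⁻¹ b) / Ξ (γ : G))
        ≤ M * ((hfin n).toFinset.card : ℝ) := by
  have hXipos : ∀ g : G, 0 < Ξ g := Xi_pos hc_pos hc_cont hΞ
  obtain ⟨U, hUopen, hU1, hUG0, hUdisj⟩ := exists_U 𝓛 hlen hG0_open Λ hdisc
  have hμU0 : μG U ≠ 0 := hUopen.measure_ne_zero μG ⟨1, hU1⟩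
  have hμUfin : μG U ≠ ∞ :=
    ((measure_mono hUG0).trans_lt hG0_compact.measure_lt_top).ne
  set u : ℝ := (μG U).toReal with hu
  have hupos : 0 < u := ENNReal.toReal_pos hμU0 hμUfin
  -- bound for small n via compactness
  haveI : Nonempty B := B_nonempty' ν
  obtain ⟨b₀⟩ := (inferInstance : Nonempty B)
  have hKc : IsCompact ({g : G | 𝓛 g ≤ (N : ℝ)} ×ˢ (Set.univ : Set B)) :=
    (hproper N).prod isCompact_univ
  have hKne : ({g : G | 𝓛 g ≤ (N : ℝ)} ×ˢ (Set.univ : Set B)).Nonempty := by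
    refine ⟨(1, b₀), ?_, Set.mem_univ _⟩
    rw [Set.mem_setOf_eq, hlen.1]
    positivity
  have hqcont : ContinuousOn (fun p : G × B => Real.sqrt (c p.1⁻¹ p.2) / Ξ p.1)
      ({g : G | 𝓛 g ≤ (N : ℝ)} ×ˢ (Set.univ : Set B)) := by
    refine Continuous.continuousOn ?_
    exact ((hc_cont.comp ((continuous_inv.comp continuous_fst).prodMk
      continuous_snd)).sqrt).div (hΞ_cont.comp continuous_fst)
      (fun p => (hXipos _).ne')
  obtain ⟨pmax, hpmax_mem, hpmax⟩ := hKc.exists_isMaxOn hKne hqcont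
  set Q : ℝ := Real.sqrt (c pmax.1⁻¹ pmax.2) / Ξ pmax.1 with hQ
  have hQ0 : 0 ≤ Q := div_nonneg (Real.sqrt_nonneg _) (hXipos _).le
  set M : ℝ := max (max c₀ 0 / u) Q with hM
  have hM0 : 0 ≤ M := le_trans hQ0 (le_max_right _ _)
  refine ⟨M, hM0, ?_⟩
  intro n b
  set s := (hfin n).toFinset with hsdef
  have hsmem : ∀ γ ∈ s, 𝓛 (γ : G) = n := by
    intro γ hγ
    rw [hsdef, Set.Finite.mem_toFinset, Set.mem_setOf_eq] at hγ
    exact hγ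
  have hterm0 : ∀ γ : Λ, 0 ≤ Real.sqrt (c ((γ : G))⁻¹ b) / Ξ (γ : G) :=
    fun γ => div_nonneg (Real.sqrt_nonneg _) (hXipos _).le
  by_cases hn : N ≤ n
  · -- use the growth condition
    have hlb := lattice_bound 𝓛 μG hact hqinv hlen hproper hG0_compact hG0_open
      hG0_trans hG0_inv hc_pos hc_cont hc_rn hsupp hΞ hΞ_cont hUopen hU1 hUG0
      hUdisj s n hsmem b
    have hsum := (ENNReal.ofReal_sum_of_nonneg
      (fun γ _ => hterm0 γ) (s := s)
      (f := fun γ => Real.sqrt (c ((γ : G))⁻¹ b) / Ξ (γ : G))).symm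
    rw [hsum] at hlb
    have hlb2 := hlb.trans (hgrowth n hn)
    set Sn : ℝ := ∑ γ ∈ s, Real.sqrt (c ((γ : G))⁻¹ b) / Ξ (γ : G) with hSn
    have hSn0 : 0 ≤ Sn := Finset.sum_nonneg fun γ _ => hterm0 γ
    have htr : Sn * u ≤ max (c₀ * (s.card : ℝ)) 0 := by
      have h1 : (ENNReal.ofReal Sn * μG U).toReal
          ≤ (ENNReal.ofReal (c₀ * (s.card : ℝ))).toReal := by
        refine ENNReal.toReal_mono ENNReal.ofReal_ne_top hlb2
      rw [ENNReal.toReal_mul, ENNReal.toReal_ofReal hSn0, ENNReal.toReal_ofReal'] at h1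
      exact h1
    have hmax : max (c₀ * (s.card : ℝ)) 0 = max c₀ 0 * (s.card : ℝ) := by
      rw [max_mul_of_nonneg _ _ (Nat.cast_nonneg s.card), zero_mul]
    rw [hmax] at htr
    calc Sn = Sn * u / u := by field_simp
      _ ≤ max c₀ 0 * (s.card : ℝ) / u := by gcongr
      _ = max c₀ 0 / u * (s.card : ℝ) := by ring
      _ ≤ M * (s.card : ℝ) := by
          apply mul_le_mul_of_nonneg_right (le_max_left _ _) (Nat.cast_nonneg _)
  · -- small n : use the compact bound
    push_neg at hn
    have hbound : ∀ γ ∈ s, Real.sqrt (c ((γ : G))⁻¹ b) / Ξ (γ : G) ≤ Q := by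
      intro γ hγ
      have hmem : ((γ : G), b) ∈ {g : G | 𝓛 g ≤ (N : ℝ)} ×ˢ (Set.univ : Set B) := by
        refine ⟨?_, Set.mem_univ _⟩
        rw [Set.mem_setOf_eq, hsmem γ hγ]
        exact_mod_cast le_of_lt hn
      exact hpmax hmem
    calc (∑ γ ∈ s, Real.sqrt (c ((γ : G))⁻¹ b) / Ξ (γ : G))
        ≤ s.card • Q := Finset.sum_le_card_nsmul s _ Q hbound
      _ = (s.card : ℝ) * Q := by rw [nsmul_eq_mul]
      _ ≤ (s.card : ℝ) * M := by
          apply mul_le_mul_of_nonneg_left (le_max_right _ _) (Nat.cast_nonneg _)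
      _ = M * (s.card : ℝ) := mul_comm _ _

end Haar

end St1Aux

/-- **Sufficient conditions for the uniform boundedness condition.**
`G` is a locally compact group with left Haar measure `μG` and a proper
integer-valued length function `𝓛`; `B` is a compact Hausdorff space with a
continuous `G`-action leaving a Borel probability measure `ν` quasi-invariant;
`c` is a continuous version of the Radon–Nikodym cocycle
`c(g,b) = d((g⁻¹)_*ν)/dν (b)` and the Harish-Chandra function
`Ξ(g) = ∫_B c(g⁻¹,b)^{1/2} dν(b)` is continuous; the subgroup
`G₀ = {g : 𝓛 g = 0}` is compact, open, acts transitively on `B` and leaves `ν`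
invariant. If `Λ` is a discrete subgroup of `G` with
`μ_G(C^G_n) ≤ c₀·|C^Λ_n|` for all large `n`, then the Koopman averages
`(1/|C^Λ_n|) Σ_{γ ∈ C^Λ_n} π(γ)/Ξ(γ)` are uniformly bounded on `L²(B,ν)`. -/
theorem statement1
    {G : Type*} [Group G] [TopologicalSpace G] [IsTopologicalGroup G]
    [LocallyCompactSpace G] [MeasurableSpace G] [BorelSpace G]
    (μG : Measure G) [μG.IsHaarMeasure]
    (𝓛 : G → ℝ) (hlen : Stmt1.IsLengthFun 𝓛)
    (hint : ∀ g : G, ∃ n : ℕ, 𝓛 g = n)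
    (hproper : ∀ t : ℝ, IsCompact {g : G | 𝓛 g ≤ t})
    {B : Type*} [TopologicalSpace B] [CompactSpace B] [T2Space B]
    [MeasurableSpace B] [BorelSpace B]
    (ν : Measure B) [IsProbabilityMeasure ν]
    [MulAction G B] (hact : Continuous fun p : G × B => p.1 • p.2)
    (hqinv : ∀ g : G, ν.map (fun b : B => g • b) ≪ ν)
    (c : G → B → ℝ) (hc_pos : ∀ g b, 0 < c g b)
    (hc_cont : Continuous fun p : G × B => c p.1 p.2)
    (hc_rn : ∀ g : G,
      (fun b => ENNReal.ofReal (c g b)) =ᵐ[ν] (ν.map (fun b : B => g⁻¹ • b)).rnDeriv ν)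
    (Ξ : G → ℝ) (hΞ : ∀ g : G, Ξ g = ∫ b, Real.sqrt (c g⁻¹ b) ∂ν)
    (hΞ_cont : Continuous Ξ)
    (hG0_compact : IsCompact {g : G | 𝓛 g = 0})
    (hG0_open : IsOpen {g : G | 𝓛 g = 0})
    (hG0_trans : ∀ b b' : B, ∃ g : G, 𝓛 g = 0 ∧ g • b = b')
    (hG0_inv : ∀ g : G, 𝓛 g = 0 → ν.map (fun b : B => g • b) = ν)
    (Λ : Subgroup G) (hdisc : DiscreteTopology Λ)
    (hfin : ∀ n : ℕ, {γ : Λ | 𝓛 (γ : G) = n}.Finite)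
    (hgrowth : ∃ (c₀ : ℝ) (N : ℕ), ∀ n : ℕ, N ≤ n →
      μG {g : G | 𝓛 g = n} ≤ ENNReal.ofReal (c₀ * ((hfin n).toFinset.card : ℝ))) :
    ∃ M : ℝ, ∀ n : ℕ, ((hfin n).toFinset).Nonempty →
      ∀ h : B → ℂ, MemLp h 2 ν →
        eLpNorm (fun b : B =>
            (((hfin n).toFinset.card : ℂ))⁻¹ *
              ∑ γ ∈ (hfin n).toFinset,
                ((Real.sqrt (c ((γ : G))⁻¹ b) : ℂ) * h (((γ : G))⁻¹ • b)) /
                  ((Ξ (γ : G) : ℝ) : ℂ))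
          2 ν ≤ ENNReal.ofReal M * eLpNorm h 2 ν := by
  classical
  obtain ⟨c₀, N, hgrowth⟩ := hgrowth
  -- full support of ν
  have hsupp : ν.IsOpenPosMeasure := by
    refine St1Aux.openPos hact ?_
    intro b b'
    obtain ⟨g, hg0, hgb⟩ := hG0_trans b b'
    have hg0' : 𝓛 g⁻¹ = 0 := by rw [St1Aux.L_inv 𝓛 hlen]; exact hg0
    exact ⟨g, hG0_inv g⁻¹ hg0', hgb⟩
  have hXipos : ∀ g : G, 0 < Ξ g := St1Aux.Xi_pos hc_pos hc_cont hΞ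
  obtain ⟨M₁, hM₁0, hbound⟩ := St1Aux.uniform_bound 𝓛 μG hact hqinv hlen hproper
    hG0_compact hG0_open hG0_trans hG0_inv hc_pos hc_cont hc_rn hsupp hΞ hΞ_cont
    hdisc hfin hgrowth
  refine ⟨M₁, ?_⟩
  intro n hne h hmem
  set s := (hfin n).toFinset with hsdef
  set m : ℕ := s.card with hmdef
  have hmpos : 0 < m := Finset.card_pos.2 hne
  have hmR : (0 : ℝ) < (m : ℝ) := by exact_mod_cast hmpos
  set w : Λ → B → ℝ := fun γ b => Real.sqrt (c ((γ : G))⁻¹ b) / Ξ (γ : G) with hw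
  set w' : Λ → B → ℝ := fun γ b => Real.sqrt (c ((γ : G)) b) / Ξ (γ : G) with hw'
  have hw0 : ∀ γ b, 0 ≤ w γ b :=
    fun γ b => div_nonneg (Real.sqrt_nonneg _) (hXipos _).le
  have hw'0 : ∀ γ b, 0 ≤ w' γ b :=
    fun γ b => div_nonneg (Real.sqrt_nonneg _) (hXipos _).le
  set T : B → ℂ := fun b =>
    (((m : ℕ) : ℂ))⁻¹ *
      ∑ γ ∈ s, ((Real.sqrt (c ((γ : G))⁻¹ b) : ℂ) * h (((γ : G))⁻¹ • b)) /
        ((Ξ (γ : G) : ℝ) : ℂ) with hT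
  set v : Λ → B → ℝ := fun γ b => ‖h (((γ : G))⁻¹ • b)‖ with hv
  have hv0 : ∀ γ b, 0 ≤ v γ b := fun γ b => norm_nonneg _
  -- pointwise norm bound
  have hTnorm : ∀ b : B, ‖T b‖ ≤ (m : ℝ)⁻¹ * ∑ γ ∈ s, w γ b * v γ b := by
    intro b
    rw [hT]
    simp only []
    rw [norm_mul, norm_inv, Complex.norm_natCast]
    refine mul_le_mul_of_nonneg_left ?_ (by positivity)
    refine (norm_sum_le _ _).trans ?_
    refine Finset.sum_le_sum fun γ _ => ?_
    rw [norm_div, norm_mul, Complex.norm_real, Complex.norm_real,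
      Real.norm_eq_abs, Real.norm_eq_abs, abs_of_nonneg (Real.sqrt_nonneg _),
      abs_of_pos (hXipos _), hw, hv]
    simp only []
    rw [div_mul_eq_mul_div, mul_div_assoc]
  -- Cauchy–Schwarz
  have hCS : ∀ b : B, (∑ γ ∈ s, w γ b * v γ b) ^ 2
      ≤ (M₁ * m) * ∑ γ ∈ s, w γ b * (v γ b * v γ b) := by
    intro b
    have h1 : (∑ γ ∈ s, w γ b * v γ b)
        = ∑ γ ∈ s, Real.sqrt (w γ b) * (Real.sqrt (w γ b) * v γ b) := by
      refine Finset.sum_congr rfl fun γ _ => ?_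
      rw [← mul_assoc, Real.mul_self_sqrt (hw0 γ b)]
    have h2 := Finset.sum_mul_sq_le_sq_mul_sq s (fun γ => Real.sqrt (w γ b))
      (fun γ => Real.sqrt (w γ b) * v γ b)
    have h3 : ∑ γ ∈ s, Real.sqrt (w γ b) ^ 2 = ∑ γ ∈ s, w γ b :=
      Finset.sum_congr rfl fun γ _ => Real.sq_sqrt (hw0 γ b)
    have h4 : ∑ γ ∈ s, (Real.sqrt (w γ b) * v γ b) ^ 2
        = ∑ γ ∈ s, w γ b * (v γ b * v γ b) := by
      refine Finset.sum_congr rfl fun γ _ => ?_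
      rw [mul_pow, Real.sq_sqrt (hw0 γ b), pow_two]
    rw [h1]
    refine h2.trans ?_
    rw [h3, h4]
    refine mul_le_mul_of_nonneg_right ((hbound n b).trans_eq (by rw [hmdef])) ?_
    exact Finset.sum_nonneg fun γ _ => mul_nonneg (hw0 γ b)
      (mul_nonneg (hv0 γ b) (hv0 γ b))
  -- real pointwise bound for the square
  have hptreal : ∀ b : B, ‖T b‖ ^ 2
      ≤ (M₁ * (m : ℝ)⁻¹) * ∑ γ ∈ s, w γ b * (v γ b * v γ b) := by
    intro b
    have h0 : 0 ≤ (m : ℝ)⁻¹ * ∑ γ ∈ s, w γ b * v γ b := by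
      refine mul_nonneg (by positivity) ?_
      exact Finset.sum_nonneg fun γ _ => mul_nonneg (hw0 γ b) (hv0 γ b)
    calc ‖T b‖ ^ 2 ≤ ((m : ℝ)⁻¹ * ∑ γ ∈ s, w γ b * v γ b) ^ 2 := by
          refine pow_le_pow_left₀ (norm_nonneg _) (hTnorm b) 2
      _ = ((m : ℝ)⁻¹) ^ 2 * (∑ γ ∈ s, w γ b * v γ b) ^ 2 := by ring
      _ ≤ ((m : ℝ)⁻¹) ^ 2 * ((M₁ * m) * ∑ γ ∈ s, w γ b * (v γ b * v γ b)) := by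
          refine mul_le_mul_of_nonneg_left (hCS b) (by positivity)
      _ = (M₁ * (m : ℝ)⁻¹) * ∑ γ ∈ s, w γ b * (v γ b * v γ b) := by
          field_simp

  -- measurability helpers
  have hae := hmem.1
  set m' : B → ℝ≥0∞ := fun b => ENNReal.ofReal (‖h b‖ * ‖h b‖) with hm'
  have hm'meas : AEMeasurable m' ν := by
    have hmm : AEMeasurable (fun b => ‖h b‖ * ‖h b‖) ν :=
      hae.norm.aemeasurable.mul hae.norm.aemeasurable
    exact ENNReal.measurable_ofReal.comp_aemeasurable hmm
  have hqmp : ∀ γ : Λ, Measure.QuasiMeasurePreserving (fun b : B => ((γ : G))⁻¹ • b) ν ν :=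
    fun γ => ⟨St1Aux.meas_smul hact _, hqinv _⟩
  have hm'comp : ∀ γ : Λ, AEMeasurable (fun b => m' (((γ : G))⁻¹ • b)) ν :=
    fun γ => hm'meas.comp_quasiMeasurePreserving (hqmp γ)
  have hwmeas : ∀ γ : Λ, Measurable (fun b => ENNReal.ofReal (w γ b)) := by
    intro γ
    refine (ENNReal.continuous_ofReal.comp ?_).measurable
    exact ((St1Aux.cont_c hc_cont ((γ : G))⁻¹).sqrt).div_const _
  have hw'meas : ∀ γ : Λ, Measurable (fun b => ENNReal.ofReal (w' γ b)) := by
    intro γ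
    refine (ENNReal.continuous_ofReal.comp ?_).measurable
    exact ((St1Aux.cont_c hc_cont ((γ : G))).sqrt).div_const _
  have hsq : ∀ x : ℝ, 0 ≤ x → (ENNReal.ofReal x) ^ (2 : ℝ) = ENNReal.ofReal (x ^ 2) := by
    intro x hx
    rw [ENNReal.ofReal_rpow_of_nonneg hx (by norm_num : (0:ℝ) ≤ 2)]
    congr 1
    rw [show ((2:ℝ)) = ((2:ℕ):ℝ) by norm_num, Real.rpow_natCast]
  -- pointwise ENNReal bound
  have hTe : ∀ b : B, (‖T b‖₊ : ℝ≥0∞) ^ (2 : ℝ)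
      ≤ ENNReal.ofReal (M₁ * (m : ℝ)⁻¹) *
        ∑ γ ∈ s, ENNReal.ofReal (w γ b) * m' (((γ : G))⁻¹ • b) := by
    intro b
    rw [show (‖T b‖₊ : ℝ≥0∞) = ENNReal.ofReal ‖T b‖ from (ofReal_norm _).symm, hsq _ (norm_nonneg _)]
    calc ENNReal.ofReal (‖T b‖ ^ 2)
        ≤ ENNReal.ofReal ((M₁ * (m : ℝ)⁻¹) * ∑ γ ∈ s, w γ b * (v γ b * v γ b)) :=
          ENNReal.ofReal_le_ofReal (hptreal b)
      _ = ENNReal.ofReal (M₁ * (m : ℝ)⁻¹) *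
            ENNReal.ofReal (∑ γ ∈ s, w γ b * (v γ b * v γ b)) := by
          rw [ENNReal.ofReal_mul (by positivity)]
      _ = ENNReal.ofReal (M₁ * (m : ℝ)⁻¹) *
            ∑ γ ∈ s, ENNReal.ofReal (w γ b) * m' (((γ : G))⁻¹ • b) := by
          congr 1
          rw [ENNReal.ofReal_sum_of_nonneg
            (fun γ _ => mul_nonneg (hw0 γ b) (mul_nonneg (hv0 γ b) (hv0 γ b)))]
          refine Finset.sum_congr rfl fun γ _ => ?_
          rw [ENNReal.ofReal_mul (hw0 γ b)]
  have hIT : ∫⁻ b, (‖T b‖₊ : ℝ≥0∞) ^ (2 : ℝ) ∂ν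
      ≤ ENNReal.ofReal (M₁ * (m : ℝ)⁻¹) *
        ∑ γ ∈ s, ∫⁻ b, ENNReal.ofReal (w γ b) * m' (((γ : G))⁻¹ • b) ∂ν := by
    calc ∫⁻ b, (‖T b‖₊ : ℝ≥0∞) ^ (2 : ℝ) ∂ν
        ≤ ∫⁻ b, ENNReal.ofReal (M₁ * (m : ℝ)⁻¹) *
            ∑ γ ∈ s, ENNReal.ofReal (w γ b) * m' (((γ : G))⁻¹ • b) ∂ν :=
          lintegral_mono hTe
      _ = ENNReal.ofReal (M₁ * (m : ℝ)⁻¹) *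
            ∫⁻ b, ∑ γ ∈ s, ENNReal.ofReal (w γ b) * m' (((γ : G))⁻¹ • b) ∂ν :=
          lintegral_const_mul' _ _ ENNReal.ofReal_ne_top
      _ = ENNReal.ofReal (M₁ * (m : ℝ)⁻¹) *
            ∑ γ ∈ s, ∫⁻ b, ENNReal.ofReal (w γ b) * m' (((γ : G))⁻¹ • b) ∂ν := by
          rw [lintegral_finset_sum' s
            (f := fun γ b => ENNReal.ofReal (w γ b) * m' (((γ : G))⁻¹ • b))
            (fun γ _ => ((hwmeas γ).aemeasurable.mul (hm'comp γ)))]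
  have hterm : ∀ γ ∈ s, ∫⁻ b, ENNReal.ofReal (w γ b) * m' (((γ : G))⁻¹ • b) ∂ν
      = ∫⁻ b, ENNReal.ofReal (w' γ b) * m' b ∂ν := by
    intro γ _
    have e1 : ∀ b, ENNReal.ofReal (w γ b) * m' (((γ : G))⁻¹ • b)
        = ENNReal.ofReal ((Ξ ((γ : G)))⁻¹) *
          (ENNReal.ofReal (Real.sqrt (c ((γ : G))⁻¹ b)) * m' (((γ : G))⁻¹ • b)) := by
      intro b
      rw [hw]
      simp only []
      rw [div_eq_mul_inv, ENNReal.ofReal_mul (Real.sqrt_nonneg _)]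
      ring
    have e2 : ∀ b, ENNReal.ofReal (w' γ b) * m' b
        = ENNReal.ofReal ((Ξ ((γ : G)))⁻¹) *
          (ENNReal.ofReal (Real.sqrt (c ((γ : G)) b)) * m' b) := by
      intro b
      rw [hw']
      simp only []
      rw [div_eq_mul_inv, ENNReal.ofReal_mul (Real.sqrt_nonneg _)]
      ring
    simp only [e1, e2]
    rw [lintegral_const_mul' _ _ ENNReal.ofReal_ne_top,
      lintegral_const_mul' _ _ ENNReal.ofReal_ne_top,
      St1Aux.change_var hact hqinv hc_pos hc_cont hc_rn hsupp ((γ : G)) hm'meas]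
  have hsum2 : ∑ γ ∈ s, ∫⁻ b, ENNReal.ofReal (w' γ b) * m' b ∂ν
      ≤ ENNReal.ofReal (M₁ * (m : ℝ)) * ∫⁻ b, m' b ∂ν := by
    rw [← lintegral_finset_sum' s (f := fun γ b => ENNReal.ofReal (w' γ b) * m' b)
      (fun γ _ => ((hw'meas γ).aemeasurable.mul hm'meas))]
    calc ∫⁻ b, ∑ γ ∈ s, ENNReal.ofReal (w' γ b) * m' b ∂ν
        ≤ ∫⁻ b, ENNReal.ofReal (M₁ * (m : ℝ)) * m' b ∂ν := by
          refine lintegral_mono fun b => ?_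
          rw [← Finset.sum_mul]
          refine mul_le_mul_left ?_ (m' b)
          have hofr : (∑ γ ∈ s, ENNReal.ofReal (w' γ b))
              = ENNReal.ofReal (∑ γ ∈ s, w' γ b) :=
            (ENNReal.ofReal_sum_of_nonneg fun γ _ => hw'0 γ b).symm
          rw [hofr]
          refine ENNReal.ofReal_le_ofReal ?_
          have hsi := St1Aux.sum_inv 𝓛 hact hqinv hlen hc_pos hc_cont hc_rn hsupp hΞ
            hfin n b
          calc ∑ γ ∈ s, w' γ b
              = ∑ γ ∈ s, w γ b := by
                rw [hw', hw]
                simp only []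
                exact hsi
            _ ≤ M₁ * (m : ℝ) := hbound n b
      _ = ENNReal.ofReal (M₁ * (m : ℝ)) * ∫⁻ b, m' b ∂ν :=
          lintegral_const_mul' _ _ ENNReal.ofReal_ne_top
  have hIT2 : ∫⁻ b, (‖T b‖₊ : ℝ≥0∞) ^ (2 : ℝ) ∂ν
      ≤ ENNReal.ofReal (M₁ ^ 2) * ∫⁻ b, m' b ∂ν := by
    refine hIT.trans ?_
    rw [Finset.sum_congr rfl hterm]
    calc ENNReal.ofReal (M₁ * (m : ℝ)⁻¹) *
          ∑ γ ∈ s, ∫⁻ b, ENNReal.ofReal (w' γ b) * m' b ∂ν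
        ≤ ENNReal.ofReal (M₁ * (m : ℝ)⁻¹) *
          (ENNReal.ofReal (M₁ * (m : ℝ)) * ∫⁻ b, m' b ∂ν) :=
          mul_le_mul_right hsum2 _
      _ = ENNReal.ofReal (M₁ ^ 2) * ∫⁻ b, m' b ∂ν := by
          rw [← mul_assoc, ← ENNReal.ofReal_mul (by positivity)]
          congr 2
          field_simp
  have hhsq : ∀ b : B, (‖h b‖₊ : ℝ≥0∞) ^ (2 : ℝ) = m' b := by
    intro b
    rw [show (‖h b‖₊ : ℝ≥0∞) = ENNReal.ofReal ‖h b‖ from (ofReal_norm _).symm, hsq _ (norm_nonneg _), hm']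
    simp only []
    rw [pow_two]
  rw [eLpNorm_eq_lintegral_rpow_enorm_toReal two_ne_zero ENNReal.ofNat_ne_top,
    eLpNorm_eq_lintegral_rpow_enorm_toReal two_ne_zero ENNReal.ofNat_ne_top]
  simp only [ENNReal.toReal_ofNat]
  have hint_eq : ∫⁻ b, (‖h b‖₊ : ℝ≥0∞) ^ (2 : ℝ) ∂ν = ∫⁻ b, m' b ∂ν :=
    lintegral_congr fun b => hhsq b
  calc (∫⁻ b, (‖T b‖₊ : ℝ≥0∞) ^ (2 : ℝ) ∂ν) ^ (1 / 2 : ℝ)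
      ≤ (ENNReal.ofReal (M₁ ^ 2) * ∫⁻ b, m' b ∂ν) ^ (1 / 2 : ℝ) :=
        ENNReal.rpow_le_rpow hIT2 (by norm_num)
    _ = (ENNReal.ofReal (M₁ ^ 2)) ^ (1 / 2 : ℝ) *
        (∫⁻ b, m' b ∂ν) ^ (1 / 2 : ℝ) :=
        ENNReal.mul_rpow_of_nonneg _ _ (by norm_num)
    _ = ENNReal.ofReal M₁ * (∫⁻ b, m' b ∂ν) ^ (1 / 2 : ℝ) := by
        congr 1
        rw [← hsq M₁ hM₁0, ← ENNReal.rpow_mul]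
        norm_num
    _ = ENNReal.ofReal M₁ * (∫⁻ b, (‖h b‖₊ : ℝ≥0∞) ^ (2 : ℝ) ∂ν) ^ (1 / 2 : ℝ) := by
        rw [hint_eq]
end

section
/- Let G be a locally compact topological group with left Haar measure μ_G, acting continuously on a compact Hausdorff space B, let ν be a quasi-invariant Borel probability measure on B with continuous Radon–Nikodym cocycle c : G × B → (0,∞), c(g,b) := (d((g⁻¹)_*ν)/dν)(b), satisfying the cocycle identity c(g₁g₂,b) = c(g₁,g₂b)·c(g₂,b), and set Ξ(g) := ∫_B c(g⁻¹,b)^{1/2} dν(b). Let Λ be a discrete subgroup of G. Then there exist a relatively compact neighborhood U of the identity with Λ ∩ U = {e} and a constant C such that for every finite subset A ⊆ Λ and every b ∈ B: Σ_{γ∈A} c(γ⁻¹,b)^{1/2}/Ξ(γ) ≤ C · ∫_{AU} c(g⁻¹,b)^{1/2}/Ξ(g) dμ_G(g), where AU := {γu : γ ∈ A, u ∈ U}. -/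
open MeasureTheory
open scoped ENNReal

/-- **Discrete-to-continuous comparison.** With `G` locally compact with left
Haar measure `μG`, acting continuously on the compact Hausdorff space `B` with
quasi-invariant Borel probability measure `ν`, continuous positive cocycle `c`
satisfying the cocycle identity and `Ξ(g) = ∫_B c(g⁻¹,b)^{1/2} dν`, and `Λ` a
discrete subgroup: there are a relatively compact neighborhood `U` of `e` with
`Λ ∩ U = {e}` and a constant `C` such that for every finite `A ⊆ Λ` and `b ∈ B`,
`Σ_{γ∈A} c(γ⁻¹,b)^{1/2}/Ξ(γ) ≤ C·∫_{AU} c(g⁻¹,b)^{1/2}/Ξ(g) dμG(g)`. -/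
theorem statement7
    {G : Type*} [Group G] [TopologicalSpace G] [IsTopologicalGroup G]
    [LocallyCompactSpace G] [MeasurableSpace G] [BorelSpace G]
    (μG : Measure G) [μG.IsHaarMeasure]
    {B : Type*} [TopologicalSpace B] [CompactSpace B] [T2Space B]
    [MeasurableSpace B] [BorelSpace B]
    (ν : Measure B) [IsProbabilityMeasure ν]
    [MulAction G B] (hact : Continuous fun p : G × B => p.1 • p.2)
    (hqinv : ∀ g : G, ν.map (fun b : B => g • b) ≪ ν)
    (c : G → B → ℝ) (hc_pos : ∀ g b, 0 < c g b)
    (hc_cont : Continuous fun p : G × B => c p.1 p.2)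
    (hc_rn : ∀ g : G,
      (fun b => ENNReal.ofReal (c g b)) =ᵐ[ν] (ν.map (fun b : B => g⁻¹ • b)).rnDeriv ν)
    (hc_cocycle : ∀ g₁ g₂ : G, ∀ b : B, c (g₁ * g₂) b = c g₁ (g₂ • b) * c g₂ b)
    (Ξ : G → ℝ) (hΞ : ∀ g : G, Ξ g = ∫ b, Real.sqrt (c g⁻¹ b) ∂ν)
    (Λ : Subgroup G) (hdisc : DiscreteTopology Λ) :
    ∃ U : Set G, U ∈ nhds (1 : G) ∧ IsCompact (closure U) ∧
      (Λ : Set G) ∩ U = {1} ∧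
      ∃ C : ℝ, ∀ (A : Finset Λ) (b : B),
        ∑ γ ∈ A, Real.sqrt (c ((γ : G))⁻¹ b) / Ξ (γ : G) ≤
          C * ∫ g in Set.image2 (fun (γ : Λ) (u : G) => (γ : G) * u) (A : Set Λ) U,
                Real.sqrt (c g⁻¹ b) / Ξ g ∂μG := by
  classical
  -- B is nonempty
  have hBne : Nonempty B := by
    rcases isEmpty_or_nonempty B with h | h
    · exfalso
      have h1 : ν Set.univ = 1 := measure_univ
      rw [Set.univ_eq_empty_iff.mpr h] at h1
      simp at h1
    · exact h
  -- continuity of the integrand in each variable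
  have hcsq : Continuous fun p : G × B => Real.sqrt (c p.1⁻¹ p.2) := by
    exact (hc_cont.comp ((continuous_inv.comp continuous_fst).prodMk continuous_snd)).sqrt
  have hcont1 : ∀ b : B, Continuous fun g : G => Real.sqrt (c g⁻¹ b) := fun b =>
    hcsq.comp (continuous_id.prodMk continuous_const)
  have hcontB : ∀ g : G, Continuous fun b : B => Real.sqrt (c g⁻¹ b) := fun g =>
    hcsq.comp (continuous_const.prodMk continuous_id)
  -- integrability over B
  have hintB : ∀ g : G, Integrable (fun b : B => Real.sqrt (c g⁻¹ b)) ν := fun g => by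
    have := ((hcontB g).continuousOn (s := Set.univ)).integrableOn_compact
      (μ := ν) isCompact_univ
    rwa [integrableOn_univ] at this
  -- Ξ is positive
  have hΞpos : ∀ g : G, 0 < Ξ g := by
    intro g
    obtain ⟨b₀, -, hb₀'⟩ := isCompact_univ.exists_isMinOn (f := fun b : B => Real.sqrt (c g⁻¹ b))
      (Set.univ_nonempty) (hcontB g).continuousOn
    have hb₀ := isMinOn_iff.mp hb₀'
    have h1 : (0 : ℝ) < Real.sqrt (c g⁻¹ b₀) := Real.sqrt_pos.2 (hc_pos _ _)
    have h2 : Real.sqrt (c g⁻¹ b₀) ≤ Ξ g := by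
      rw [hΞ g]
      calc Real.sqrt (c g⁻¹ b₀) = ∫ _ : B, Real.sqrt (c g⁻¹ b₀) ∂ν := by
            simp [integral_const]
        _ ≤ ∫ b, Real.sqrt (c g⁻¹ b) ∂ν :=
            integral_mono (integrable_const _) (hintB g) fun b => hb₀ b trivial
    linarith
  -- Ξ is continuous
  have hintC : ∀ h : C(B, ℝ), Integrable (fun b => h b) ν := by
    intro h
    have := (h.continuous.continuousOn (s := Set.univ)).integrableOn_compact
      (μ := ν) isCompact_univ
    rwa [integrableOn_univ] at this
  have hΞcont : Continuous Ξ := by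
    set Φ : C(G × B, ℝ) := ⟨fun p => Real.sqrt (c p.1⁻¹ p.2), hcsq⟩ with hΦdef
    have hψ : LipschitzWith 1 (fun h : C(B, ℝ) => ∫ b, h b ∂ν) := by
      refine LipschitzWith.of_dist_le_mul fun h₁ h₂ => ?_
      rw [NNReal.coe_one, one_mul, Real.dist_eq, ← integral_sub (hintC h₁) (hintC h₂)]
      calc |∫ b, (h₁ b - h₂ b) ∂ν| ≤ ∫ b, |h₁ b - h₂ b| ∂ν := by
            simpa [Real.norm_eq_abs] using
              norm_integral_le_integral_norm (μ := ν) (fun b => h₁ b - h₂ b)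
        _ ≤ ∫ _ : B, dist h₁ h₂ ∂ν := by
            refine integral_mono ((hintC h₁).sub (hintC h₂)).abs (integrable_const _)
              fun b => ?_
            rw [← Real.dist_eq]
            exact ContinuousMap.dist_apply_le_dist b
        _ = dist h₁ h₂ := by simp [integral_const]
    have hΞeq : Ξ = (fun h : C(B, ℝ) => ∫ b, h b ∂ν) ∘ (ContinuousMap.curry Φ) := by
      funext g
      simp only [Function.comp_apply, ContinuousMap.curry_apply, ContinuousMap.coe_mk, hΦdef]
      exact hΞ g
    rw [hΞeq]
    exact hψ.continuous.comp (ContinuousMap.curry Φ).continuous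
  -- discreteness: a neighborhood of 1 meeting Λ only in 1
  obtain ⟨W, hWopen, hWΛ⟩ : ∃ W : Set G, IsOpen W ∧ (Subtype.val ⁻¹' W : Set Λ) = {1} := by
    have : IsOpen ({1} : Set Λ) := isOpen_discrete _
    exact isOpen_induced_iff.mp this
  have hW1 : (1 : G) ∈ W := by
    have : (1 : Λ) ∈ (Subtype.val ⁻¹' W : Set Λ) := by rw [hWΛ]; rfl
    exact this
  have hWonly : ∀ x : Λ, (x : G) ∈ W → x = 1 := by
    intro x hx
    have : x ∈ (Subtype.val ⁻¹' W : Set Λ) := hx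
    rwa [hWΛ] at this
  -- V with V * V⁻¹ ⊆ W
  obtain ⟨V, hVopen, hV1, hVV⟩ := exists_open_nhds_one_mul_subset (hWopen.mem_nhds hW1)
  set V' : Set G := V ∩ V⁻¹ with hV'def
  have hV'open : IsOpen V' := hVopen.inter hVopen.inv
  have hV'1 : (1 : G) ∈ V' := ⟨hV1, by simpa using hV1⟩
  have hV'mul : ∀ a ∈ V', ∀ b ∈ V', a * b⁻¹ ∈ W := by
    intro a ha b hb
    exact hVV (Set.mul_mem_mul ha.1 (by simpa using hb.2))
  -- compact closed neighborhood
  obtain ⟨K, hKn, hKcomp, hKclosed⟩ := exists_mem_nhds_isCompact_isClosed (1 : G)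
  -- the neighborhood U
  set U : Set G := V' ∩ interior K with hUdef
  have hUopen : IsOpen U := hV'open.inter isOpen_interior
  have hU1 : (1 : G) ∈ U := ⟨hV'1, mem_interior_iff_mem_nhds.2 hKn⟩
  have hUnhds : U ∈ nhds (1 : G) := hUopen.mem_nhds hU1
  have hUK : U ⊆ K := fun x hx => interior_subset hx.2
  have hclU : closure U ⊆ K := by
    have := closure_mono hUK
    rwa [hKclosed.closure_eq] at this
  have hclUcomp : IsCompact (closure U) :=
    hKcomp.of_isClosed_subset isClosed_closure hclU
  have hΛU : (Λ : Set G) ∩ U = {1} := by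
    ext x
    constructor
    · rintro ⟨hxΛ, hxU⟩
      have hxW : x ∈ W := by
        have : x * 1 ∈ W := hVV (Set.mul_mem_mul hxU.1.1 hV1)
        simpa using this
      have := hWonly ⟨x, hxΛ⟩ hxW
      simpa using congrArg Subtype.val this
    · rintro rfl
      exact ⟨Λ.one_mem, hU1⟩
  refine ⟨U, hUnhds, hclUcomp, hΛU, ?_⟩
  -- disjointness of translates
  have hdisj : ∀ γ₁ γ₂ : Λ, γ₁ ≠ γ₂ →
      Disjoint ((fun u => (γ₁ : G) * u) '' U) ((fun u => (γ₂ : G) * u) '' U) := by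
    intro γ₁ γ₂ hne
    rw [Set.disjoint_left]
    rintro g ⟨u₁, hu₁, rfl⟩ ⟨u₂, hu₂, h⟩
    have h' : (γ₂ : G) * u₂ = (γ₁ : G) * u₁ := h
    have key : (γ₂ : G)⁻¹ * (γ₁ : G) = u₂ * u₁⁻¹ := by
      have h1 : (γ₁ : G) = (γ₂ : G) * u₂ * u₁⁻¹ := by rw [h']; group
      rw [h1]; group
    have hmem : ((γ₂⁻¹ * γ₁ : Λ) : G) ∈ W := by
      push_cast
      rw [key]
      exact hV'mul u₂ hu₂.1 u₁ hu₁.1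
    have h21 : γ₂⁻¹ * γ₁ = 1 := hWonly _ hmem
    rw [inv_mul_eq_one] at h21
    exact hne h21.symm
  -- extremal constants on (closure U)⁻¹ × B
  have hSc : IsCompact ((closure U)⁻¹ ×ˢ (Set.univ : Set B)) :=
    (hclUcomp.inv).prod isCompact_univ
  have hSne : ((closure U)⁻¹ ×ˢ (Set.univ : Set B)).Nonempty :=
    ⟨(1, Classical.arbitrary B), ⟨by simpa using subset_closure hU1, trivial⟩⟩
  have hf2cont : Continuous fun p : G × B => Real.sqrt (c p.1 p.2) := hc_cont.sqrt
  obtain ⟨pm, -, hpm'⟩ := hSc.exists_isMinOn hSne hf2cont.continuousOn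
  obtain ⟨pM, -, hpM'⟩ := hSc.exists_isMaxOn hSne hf2cont.continuousOn
  have hpm := isMinOn_iff.mp hpm'
  have hpM := isMaxOn_iff.mp hpM'
  set m : ℝ := Real.sqrt (c pm.1 pm.2) with hmdef
  set M : ℝ := Real.sqrt (c pM.1 pM.2) with hMdef
  have hm_pos : 0 < m := Real.sqrt_pos.2 (hc_pos _ _)
  have hboundl : ∀ u ∈ closure U, ∀ x : B, m ≤ Real.sqrt (c u⁻¹ x) := fun u hu x =>
    hpm (u⁻¹, x) ⟨Set.inv_mem_inv.2 hu, trivial⟩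
  have hboundu : ∀ u ∈ closure U, ∀ x : B, Real.sqrt (c u⁻¹ x) ≤ M := fun u hu x =>
    hpM (u⁻¹, x) ⟨Set.inv_mem_inv.2 hu, trivial⟩
  have hmM : m ≤ M := by
    have := hboundl 1 (subset_closure hU1) (Classical.arbitrary B)
    have h2 := hboundu 1 (subset_closure hU1) (Classical.arbitrary B)
    linarith
  have hM_pos : 0 < M := lt_of_lt_of_le hm_pos hmM
  -- cocycle splitting
  have hsplit : ∀ (γ u : G) (x : B),
      Real.sqrt (c (γ * u)⁻¹ x) = Real.sqrt (c u⁻¹ (γ⁻¹ • x)) * Real.sqrt (c γ⁻¹ x) := by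
    intro γ u x
    rw [mul_inv_rev, hc_cocycle u⁻¹ γ⁻¹ x,
      Real.sqrt_mul (le_of_lt (hc_pos _ _))]
  -- upper bound on Ξ(γu)
  have hΞub : ∀ (γ : G), ∀ u ∈ closure U, Ξ (γ * u) ≤ M * Ξ γ := by
    intro γ u hu
    rw [hΞ (γ * u), hΞ γ, ← integral_const_mul]
    refine integral_mono (hintB _) ((hintB γ).const_mul M) fun x => ?_
    rw [hsplit γ u x]
    exact mul_le_mul_of_nonneg_right (hboundu u hu _) (Real.sqrt_nonneg _)
  -- measure of U
  have hUmeas_pos : 0 < μG U := hUopen.measure_pos μG ⟨1, hU1⟩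
  have hUmeas_fin : μG U < ⊤ :=
    lt_of_le_of_lt (measure_mono hUK) hKcomp.measure_lt_top
  set β : ℝ := (μG U).toReal with hβdef
  have hβpos : 0 < β := ENNReal.toReal_pos hUmeas_pos.ne' hUmeas_fin.ne
  refine ⟨M / (m * β), ?_⟩
  intro A b
  set f : G → ℝ := fun g => Real.sqrt (c g⁻¹ b) / Ξ g with hfdef
  have hfcont : Continuous f := (hcont1 b).div hΞcont fun g => (hΞpos g).ne'
  -- rewrite the region as a finite union
  have hregion : Set.image2 (fun (γ : Λ) (u : G) => (γ : G) * u) (A : Set Λ) U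
      = ⋃ γ ∈ A, (fun u => (γ : G) * u) '' U := by
    rw [← Set.iUnion_image_left]
    simp
  -- translates: measurable and integrable
  have htmeas : ∀ γ : Λ, MeasurableSet ((fun u => (γ : G) * u) '' U) :=
    fun γ => ((Homeomorph.mulLeft (γ : G)).isOpen_image.2 hUopen).measurableSet
  have htint : ∀ γ : Λ, IntegrableOn f ((fun u => (γ : G) * u) '' U) μG := by
    intro γ
    have hKim : IsCompact ((fun u => (γ : G) * u) '' K) :=
      hKcomp.image (continuous_mul_left _)
    have hKimcl : MeasurableSet ((fun u => (γ : G) * u) '' K) :=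
      (((Homeomorph.mulLeft (γ : G)).isClosedMap) K hKclosed).measurableSet
    have := (hfcont.continuousOn (s := (fun u => (γ : G) * u) '' K)).integrableOn_compact'
      (μ := μG) hKim hKimcl
    exact this.mono_set (Set.image_mono hUK)
  -- measure of a translate
  have htvol : ∀ γ : Λ, μG ((fun u => (γ : G) * u) '' U) = μG U := by
    intro γ
    have him : (fun u => (γ : G) * u) '' U = (fun g => (γ : G)⁻¹ * g) ⁻¹' U := by
      ext g
      constructor
      · rintro ⟨u, hu, rfl⟩
        simpa using hu
      · intro hg
        exact ⟨(γ : G)⁻¹ * g, hg, by group⟩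
    rw [him, measure_preimage_mul]
  -- key lower bound on each translate integral
  have hkey : ∀ γ : Λ, Real.sqrt (c ((γ : G))⁻¹ b) / Ξ (γ : G) ≤
      (M / (m * β)) * ∫ g in (fun u => (γ : G) * u) '' U, f g ∂μG := by
    intro γ
    set s : ℝ := Real.sqrt (c ((γ : G))⁻¹ b) with hsdef
    have hs_nonneg : 0 ≤ s := Real.sqrt_nonneg _
    have hconst : ∀ g ∈ (fun u => (γ : G) * u) '' U,
        (m * s) / (M * Ξ (γ : G)) ≤ f g := by
      rintro g ⟨u, hu, rfl⟩
      have huc : u ∈ closure U := subset_closure hu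
      refine div_le_div₀ ?_ ?_ (hΞpos _) (hΞub _ u huc)
      · exact Real.sqrt_nonneg _
      · rw [hsplit (γ : G) u b]
        exact mul_le_mul_of_nonneg_right (hboundl u huc _) hs_nonneg
    have hcfin : μG ((fun u => (γ : G) * u) '' U) < ⊤ := by
      rw [htvol γ]; exact hUmeas_fin
    have hlow : (m * s) / (M * Ξ (γ : G)) * β ≤
        ∫ g in (fun u => (γ : G) * u) '' U, f g ∂μG := by
      have hmono := setIntegral_mono_on (integrableOn_const hcfin.ne) (htint γ)
        (htmeas γ) hconst
      rw [setIntegral_const, measureReal_def, htvol γ, smul_eq_mul, mul_comm] at hmono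
      exact hmono
    have heq : (M / (m * β)) * ((m * s) / (M * Ξ (γ : G)) * β) = s / Ξ (γ : G) := by
      have h1 : m ≠ 0 := hm_pos.ne'
      have h2 : M ≠ 0 := hM_pos.ne'
      have h3 : β ≠ 0 := hβpos.ne'
      have h4 : Ξ ((γ : Λ) : G) ≠ 0 := (hΞpos _).ne'
      field_simp
    calc s / Ξ (γ : G)
        = (M / (m * β)) * ((m * s) / (M * Ξ (γ : G)) * β) := heq.symm
      _ ≤ (M / (m * β)) * ∫ g in (fun u => (γ : G) * u) '' U, f g ∂μG := by
          refine mul_le_mul_of_nonneg_left hlow ?_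
          positivity
  -- assemble
  have hsum : ∫ g in ⋃ γ ∈ A, (fun u => (γ : G) * u) '' U, f g ∂μG
      = ∑ γ ∈ A, ∫ g in (fun u => (γ : G) * u) '' U, f g ∂μG := by
    refine integral_biUnion_finset A (fun γ _ => htmeas γ) ?_ (fun γ _ => htint γ)
    intro γ₁ h₁ γ₂ h₂ hne
    exact hdisj γ₁ γ₂ hne
  calc ∑ γ ∈ A, Real.sqrt (c ((γ : G))⁻¹ b) / Ξ (γ : G)
      ≤ ∑ γ ∈ A, (M / (m * β)) * ∫ g in (fun u => (γ : G) * u) '' U, f g ∂μG :=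
        Finset.sum_le_sum fun γ _ => hkey γ
    _ = (M / (m * β)) * ∑ γ ∈ A, ∫ g in (fun u => (γ : G) * u) '' U, f g ∂μG := by
        rw [Finset.mul_sum]
    _ = (M / (m * β)) * ∫ g in Set.image2 (fun (γ : Λ) (u : G) => (γ : G) * u) (A : Set Λ) U,
          f g ∂μG := by rw [hregion, hsum]
end

section
/- Let G be a locally compact group with left Haar measure μ_G and a proper, integer-valued length function 𝓛, with C^G_n := {g : 𝓛(g)=n}, and suppose the subgroup G₀ := {g : 𝓛(g)=0} is open. Let G act continuously on a compact Hausdorff space B, let ν be a quasi-invariant Borel probability measure with continuous Radon–Nikodym cocycle c : G × B → (0,∞), c(g,b) := (d((g⁻¹)_*ν)/dν)(b), satisfying the cocycle identity, and set Ξ(g) := ∫_B c(g⁻¹,b)^{1/2} dν(b). Let Λ be a discrete subgroup with C^Λ_n := {γ ∈ Λ : 𝓛(γ)=n}, and assume there is c₀ ∈ ℝ and m > 0 such that for all sufficiently large n, m·μ_G(C^G_n) ≤ c₀·|C^Λ_n|. Then there is a constant C such that for all sufficiently large n with C^Λ_n ≠ ∅ and 0 < μ_G(C^G_n) < ∞,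 and all b ∈ B: 0 ≤ (1/|C^Λ_n|) Σ_{γ∈C^Λ_n} c(γ⁻¹,b)^{1/2}/Ξ(γ) ≤ C · (1/μ_G(C^G_n)) ∫_{C^G_n} c(g⁻¹,b)^{1/2}/Ξ(g) dμ_G(g). -/
open scoped Pointwise


open MeasureTheory
open scoped ENNReal

namespace Stmt8

def IsLengthFun {G : Type*} [Group G] (L : G → ℝ) : Prop :=
  L 1 = 0 ∧ (∀ g, 0 ≤ L g) ∧ (∀ g, L g⁻¹ = L g) ∧ ∀ g h, L (g * h) ≤ L g + L h

end Stmt8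

set_option maxHeartbeats 2000000 in
/-- **Comparison of the discrete and continuous Koopman means applied to `1_B`.**
`G` is a locally compact group with left Haar measure `μG` and a proper
integer-valued length function `𝓛` whose level-zero subgroup `G₀` is open;
`B` is a compact Hausdorff space with a continuous `G`-action, `ν` a
quasi-invariant Borel probability measure with continuous positive cocycle `c`
satisfying the cocycle identity, `Ξ(g) = ∫_B c(g⁻¹,b)^{1/2} dν`, and `Λ` a
discrete subgroup whose spheres `C^Λ_n` eventually satisfy
`m·μG(C^G_n) ≤ c₀·|C^Λ_n|`. Then there is `C` such that for all large `n` with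
`C^Λ_n ≠ ∅` and `0 < μG(C^G_n) < ∞` and all `b ∈ B`,
`0 ≤ (1/|C^Λ_n|) Σ_{γ∈C^Λ_n} c(γ⁻¹,b)^{1/2}/Ξ(γ)
   ≤ C·(1/μG(C^G_n)) ∫_{C^G_n} c(g⁻¹,b)^{1/2}/Ξ(g) dμG`. -/
theorem statement8
    {G : Type*} [Group G] [TopologicalSpace G] [IsTopologicalGroup G]
    [LocallyCompactSpace G] [MeasurableSpace G] [BorelSpace G]
    (μG : Measure G) [μG.IsHaarMeasure]
    (𝓛 : G → ℝ) (hlen : Stmt8.IsLengthFun 𝓛)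
    (hint : ∀ g : G, ∃ n : ℕ, 𝓛 g = n)
    (hproper : ∀ t : ℝ, IsCompact {g : G | 𝓛 g ≤ t})
    (hG0_open : IsOpen {g : G | 𝓛 g = 0})
    {B : Type*} [TopologicalSpace B] [CompactSpace B] [T2Space B]
    [MeasurableSpace B] [BorelSpace B]
    (ν : Measure B) [IsProbabilityMeasure ν]
    [MulAction G B] (hact : Continuous fun p : G × B => p.1 • p.2)
    (hqinv : ∀ g : G, ν.map (fun b : B => g • b) ≪ ν)
    (c : G → B → ℝ) (hc_pos : ∀ g b, 0 < c g b)
    (hc_cont : Continuous fun p : G × B => c p.1 p.2)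
    (hc_rn : ∀ g : G,
      (fun b => ENNReal.ofReal (c g b)) =ᵐ[ν] (ν.map (fun b : B => g⁻¹ • b)).rnDeriv ν)
    (hc_cocycle : ∀ g₁ g₂ : G, ∀ b : B, c (g₁ * g₂) b = c g₁ (g₂ • b) * c g₂ b)
    (Ξ : G → ℝ) (hΞ : ∀ g : G, Ξ g = ∫ b, Real.sqrt (c g⁻¹ b) ∂ν)
    (Λ : Subgroup G) (hdisc : DiscreteTopology Λ)
    (hfin : ∀ n : ℕ, {γ : Λ | 𝓛 (γ : G) = n}.Finite)
    (c₀ : ℝ) (m : ℝ) (hm : 0 < m)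
    (hgrowth : ∃ N : ℕ, ∀ n : ℕ, N ≤ n →
      ENNReal.ofReal m * μG {g : G | 𝓛 g = n} ≤
        ENNReal.ofReal (c₀ * ((hfin n).toFinset.card : ℝ))) :
    ∃ (C : ℝ) (N : ℕ), ∀ n : ℕ, N ≤ n →
      ((hfin n).toFinset).Nonempty →
      0 < μG {g : G | 𝓛 g = n} → μG {g : G | 𝓛 g = n} < ⊤ →
      ∀ b : B,
        0 ≤ (((hfin n).toFinset.card : ℝ))⁻¹ *
              ∑ γ ∈ (hfin n).toFinset, Real.sqrt (c ((γ : G))⁻¹ b) / Ξ (γ : G) ∧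
        (((hfin n).toFinset.card : ℝ))⁻¹ *
              ∑ γ ∈ (hfin n).toFinset, Real.sqrt (c ((γ : G))⁻¹ b) / Ξ (γ : G) ≤
          C * ((μG {g : G | 𝓛 g = n}).toReal)⁻¹ *
            ∫ g in {g : G | 𝓛 g = n}, Real.sqrt (c g⁻¹ b) / Ξ g ∂μG := by
  classical
  obtain ⟨hL1, hLnn, hLinv, hLmul⟩ := hlen
  obtain ⟨N, hN⟩ := hgrowth
  -- B is nonempty
  have hBne : Nonempty B := by
    by_contra h
    rw [not_nonempty_iff] at h
    have h1 : ν Set.univ = 1 := measure_univ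
    rw [Set.univ_eq_empty_iff.mpr h, measure_empty] at h1
    exact zero_ne_one h1
  obtain ⟨b₀⟩ := id hBne
  set G₀ : Set G := {g : G | 𝓛 g = 0} with hG₀def
  have hG₀eq : G₀ = {g : G | 𝓛 g ≤ 0} := by
    ext g
    simp only [hG₀def, Set.mem_setOf_eq]
    exact ⟨fun h => h.le, fun h => le_antisymm h (hLnn g)⟩
  have h1G₀ : (1 : G) ∈ G₀ := hL1
  have hG₀inv : ∀ g ∈ G₀, g⁻¹ ∈ G₀ := by
    intro g hg
    simp only [hG₀def, Set.mem_setOf_eq] at hg ⊢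
    rw [hLinv]; exact hg
  have hG₀compact : IsCompact G₀ := hG₀eq ▸ hproper 0
  -- sublevel sets are closed
  have hsub_closed : ∀ t : ℝ, IsClosed {g : G | 𝓛 g ≤ t} := by
    intro t
    apply isClosed_of_closure_subset
    intro x hx
    have hxopen : IsOpen (x • G₀) := hG0_open.smul x
    have hxmem : x ∈ x • G₀ := ⟨1, h1G₀, mul_one x⟩
    rcases mem_closure_iff.1 hx (x • G₀) hxopen hxmem with ⟨y, hy1, hy2⟩
    rcases hy1 with ⟨k, hk, hky⟩
    have hky' : x * k = y := hky
    have hx' : x = y * k⁻¹ := by rw [← hky']; group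
    have hk0 : 𝓛 k = 0 := hk
    have : 𝓛 x ≤ 𝓛 y + 𝓛 k⁻¹ := hx' ▸ hLmul y k⁻¹
    rw [hLinv, hk0, add_zero] at this
    exact this.trans hy2
  -- spheres are measurable
  have hsphere_meas : ∀ k : ℕ, MeasurableSet {g : G | 𝓛 g = (k : ℝ)} := by
    intro k
    have hEq : {g : G | 𝓛 g = (k : ℝ)}
        = {g : G | 𝓛 g ≤ (k : ℝ)} \ {g : G | 𝓛 g ≤ (k : ℝ) - 2⁻¹} := by
      ext g
      simp only [Set.mem_setOf_eq, Set.mem_diff, not_le]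
      constructor
      · intro h
        rw [h]
        exact ⟨le_refl _, by norm_num⟩
      · rintro ⟨h1, h2⟩
        obtain ⟨j, hj⟩ := hint g
        rw [hj] at h1 h2 ⊢
        have hjk : j ≤ k := by exact_mod_cast h1
        have hkj : k ≤ j := by
          by_contra hlt'
        
          push_neg at hlt'
          have : (j : ℝ) + 1 ≤ (k : ℝ) := by exact_mod_cast hlt'
          linarith
        norm_cast
        omega
    rw [hEq]
    exact ((hsub_closed _).measurableSet).diff ((hsub_closed _).measurableSet)
  -- min and max of the cocycle on G₀ × B
  have hG₀B : IsCompact (G₀ ×ˢ (Set.univ : Set B)) := hG₀compact.prod isCompact_univ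
  have hG₀Bne : (G₀ ×ˢ (Set.univ : Set B)).Nonempty := ⟨(1, b₀), ⟨h1G₀, trivial⟩⟩
  obtain ⟨pa, hpa, hpamin⟩ := hG₀B.exists_isMinOn hG₀Bne hc_cont.continuousOn
  obtain ⟨pA, hpA, hpAmax⟩ := hG₀B.exists_isMaxOn hG₀Bne hc_cont.continuousOn
  set a : ℝ := c pa.1 pa.2 with hadef
  set A : ℝ := c pA.1 pA.2 with hAdef
  have ha_pos : 0 < a := hc_pos _ _
  have hbound : ∀ k ∈ G₀, ∀ b : B, a ≤ c k b ∧ c k b ≤ A := by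
    intro k hk b
    exact ⟨hpamin (Set.mk_mem_prod hk trivial), hpAmax (Set.mk_mem_prod hk trivial)⟩
  have hA_pos : 0 < A := lt_of_lt_of_le (hc_pos 1 b₀) (hbound 1 h1G₀ b₀).2
  -- integrability over B
  have hintB : ∀ g : G, Integrable (fun b => Real.sqrt (c g b)) ν := by
    intro g
    have hcont : Continuous fun b : B => Real.sqrt (c g b) :=
      Real.continuous_sqrt.comp (hc_cont.comp (continuous_const.prodMk continuous_id))
    exact integrableOn_univ.mp (hcont.continuousOn.integrableOn_compact isCompact_univ)
  -- positivity of Ξ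
  have hΞ_pos : ∀ g : G, 0 < Ξ g := by
    intro g
    rw [hΞ g]
    have hcont : Continuous fun b : B => c g⁻¹ b :=
      hc_cont.comp (continuous_const.prodMk continuous_id)
    obtain ⟨bm, _, hbm⟩ := isCompact_univ.exists_isMinOn
      (Set.univ_nonempty (α := B)) hcont.continuousOn
    have he : 0 < c g⁻¹ bm := hc_pos _ _
    have hpt : ∀ b : B, Real.sqrt (c g⁻¹ bm) ≤ Real.sqrt (c g⁻¹ b) := fun b =>
      Real.sqrt_le_sqrt (hbm (Set.mem_univ b))
    calc (0:ℝ) < Real.sqrt (c g⁻¹ bm) := Real.sqrt_pos.2 he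
      _ = ∫ _b, Real.sqrt (c g⁻¹ bm) ∂ν := by simp
      _ ≤ ∫ b, Real.sqrt (c g⁻¹ b) ∂ν := integral_mono (integrable_const _) (hintB g⁻¹) hpt
  -- integrability of continuous functions on B
  have hintC : ∀ φ : C(B, ℝ), Integrable (fun b => φ b) ν := fun φ =>
    integrableOn_univ.mp (φ.continuous.continuousOn.integrableOn_compact isCompact_univ)
  -- continuity of Ξ
  have hΞcont : Continuous Ξ := by
    have hEq : Ξ = fun g => ∫ b, Real.sqrt (c g⁻¹ b) ∂ν := funext hΞ
    rw [hEq]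
    set Fc : C(G × B, ℝ) := ⟨fun p => Real.sqrt (c p.1⁻¹ p.2),
      Real.continuous_sqrt.comp (hc_cont.comp
        ((continuous_inv.comp continuous_fst).prodMk continuous_snd))⟩ with hFcdef
    have hLip : LipschitzWith 1 (fun φ : C(B, ℝ) => ∫ b, φ b ∂ν) := by
      apply LipschitzWith.of_dist_le_mul
      intro φ ψ
      rw [NNReal.coe_one, one_mul, Real.dist_eq, ← integral_sub (hintC φ) (hintC ψ)]
      calc |∫ b, (φ b - ψ b) ∂ν| ≤ ∫ b, |φ b - ψ b| ∂ν := by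
            simpa [Real.norm_eq_abs] using
              norm_integral_le_integral_norm (fun b => φ b - ψ b)
        _ ≤ ∫ _b, dist φ ψ ∂ν := by
            apply integral_mono ((hintC φ).sub (hintC ψ)).abs (integrable_const _)
            intro b
            simpa [Real.dist_eq] using ContinuousMap.dist_apply_le_dist (f := φ) (g := ψ) b
        _ = dist φ ψ := by simp
    have hcomp2 : (fun g => ∫ b, Real.sqrt (c g⁻¹ b) ∂ν)
        = (fun φ : C(B, ℝ) => ∫ b, φ b ∂ν) ∘ (fun g => Fc.curry g) := by
      funext g
      simp [hFcdef, ContinuousMap.curry_apply]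
    rw [hcomp2]
    exact hLip.continuous.comp Fc.curry.continuous
  have hΞmeas : Measurable Ξ := hΞcont.measurable
  -- comparison of the cocycle on a coset
  have hcomp : ∀ γ : G, ∀ g ∈ γ • G₀, ∀ b : B,
      a * c γ⁻¹ b ≤ c g⁻¹ b ∧ c g⁻¹ b ≤ A * c γ⁻¹ b := by
    intro γ g hg b
    rcases hg with ⟨k, hk, hkg⟩
    have hkg' : γ * k = g := hkg
    have hginv : g⁻¹ = k⁻¹ * γ⁻¹ := by rw [← hkg']; group
    have hcoc := hc_cocycle k⁻¹ γ⁻¹ b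
    rw [hginv, hcoc]
    have hk' := hbound k⁻¹ (hG₀inv k hk) (γ⁻¹ • b)
    have hcb := (hc_pos γ⁻¹ b).le
    exact ⟨mul_le_mul_of_nonneg_right hk'.1 hcb, mul_le_mul_of_nonneg_right hk'.2 hcb⟩
  -- comparison of Ξ on a coset
  have hΞcomp : ∀ γ : G, ∀ g ∈ γ • G₀, Ξ g ≤ Real.sqrt A * Ξ γ := by
    intro γ g hg
    rw [hΞ g, hΞ γ, ← integral_const_mul]
    apply integral_mono (hintB g⁻¹) ((hintB γ⁻¹).const_mul _)
    intro b
    calc Real.sqrt (c g⁻¹ b) ≤ Real.sqrt (A * c γ⁻¹ b) :=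
          Real.sqrt_le_sqrt (hcomp γ g hg b).2
      _ = Real.sqrt A * Real.sqrt (c γ⁻¹ b) := Real.sqrt_mul hA_pos.le _
  set δ : ℝ := Real.sqrt a / Real.sqrt A with hδdef
  have hδ_pos : 0 < δ := div_pos (Real.sqrt_pos.2 ha_pos) (Real.sqrt_pos.2 hA_pos)
  -- pointwise comparison of φ on a coset
  have hφcomp : ∀ γ : G, ∀ g ∈ γ • G₀, ∀ b : B,
      δ * (Real.sqrt (c γ⁻¹ b) / Ξ γ) ≤ Real.sqrt (c g⁻¹ b) / Ξ g := by
    intro γ g hg b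
    have hnum : Real.sqrt a * Real.sqrt (c γ⁻¹ b) ≤ Real.sqrt (c g⁻¹ b) := by
      rw [← Real.sqrt_mul ha_pos.le]
      exact Real.sqrt_le_sqrt (hcomp γ g hg b).1
    have h1 : Real.sqrt a * Real.sqrt (c γ⁻¹ b) / (Real.sqrt A * Ξ γ)
        ≤ Real.sqrt (c g⁻¹ b) / Ξ g :=
      div_le_div₀ (Real.sqrt_nonneg _) hnum (hΞ_pos g) (hΞcomp γ g hg)
    calc δ * (Real.sqrt (c γ⁻¹ b) / Ξ γ)
        = Real.sqrt a * Real.sqrt (c γ⁻¹ b) / (Real.sqrt A * Ξ γ) := by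
          rw [hδdef, div_mul_div_comm]
      _ ≤ _ := h1
  -- Haar measure facts
  have hG₀meas : MeasurableSet G₀ := hG₀eq ▸ (hsub_closed 0).measurableSet
  have hμG₀_pos : 0 < μG G₀ := hG0_open.measure_pos μG ⟨1, h1G₀⟩
  have hμG₀_lt : μG G₀ < ⊤ := hG₀compact.measure_lt_top
  set h₀ : ℝ := (μG G₀).toReal with hh₀def
  have hh₀ : 0 < h₀ := ENNReal.toReal_pos hμG₀_pos.ne' hμG₀_lt.ne
  -- coset measurability and measure
  have hSmeas : ∀ γ : G, MeasurableSet (γ • G₀) := by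
    intro γ
    have : γ • G₀ = (fun x => γ⁻¹ * x) ⁻¹' G₀ := by
      ext x
      rw [Set.mem_smul_set_iff_inv_smul_mem]
      rfl
    rw [this]
    exact (measurable_const_mul γ⁻¹) hG₀meas
  have hμS : ∀ γ : G, μG (γ • G₀) = μG G₀ := by
    intro γ
    have : γ • G₀ = (fun x => γ⁻¹ * x) ⁻¹' G₀ := by
      ext x
      rw [Set.mem_smul_set_iff_inv_smul_mem]
      rfl
    rw [this]
    exact measure_preimage_mul μG γ⁻¹ G₀
  set M : ℕ := (hfin 0).toFinset.card with hMdef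
  refine ⟨(M : ℝ) * c₀ / (δ * h₀ * m), N, ?_⟩
  intro n hn hne hpos hlt b
  set F := (hfin n).toFinset with hFdef
  have hCn_meas : MeasurableSet {g : G | 𝓛 g = (n : ℝ)} := hsphere_meas n
  -- cosets of sphere elements sit inside the sphere
  have hcoset_sub : ∀ γ : ↥Λ, γ ∈ F → ((γ : G) • G₀) ⊆ {g : G | 𝓛 g = (n : ℝ)} := by
    intro γ hγ g hg
    have hγn : 𝓛 (γ : G) = n := by
      have := (Set.Finite.mem_toFinset (hfin n)).1 hγ
      exact this
    rcases hg with ⟨k, hk, hkg⟩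
    have hkg' : (γ : G) * k = g := hkg
    have hk0 : 𝓛 k = 0 := hk
    have h1 : 𝓛 g ≤ (n : ℝ) := by
      have := hLmul (γ : G) k
      rw [hkg', hγn, hk0, add_zero] at this
      exact this
    have h2 : (n : ℝ) ≤ 𝓛 g := by
      have hγg : (γ : G) = g * k⁻¹ := by rw [← hkg']; group
      have := hLmul g k⁻¹
      rw [← hγg, hγn, hLinv, hk0, add_zero] at this
      exact this
    exact le_antisymm h1 h2
  -- the function φb
  set φb : G → ℝ := fun g => Real.sqrt (c g⁻¹ b) / Ξ g with hφbdef
  have hφb_meas : Measurable φb := by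
    have hcont : Continuous fun g : G => Real.sqrt (c g⁻¹ b) :=
      Real.continuous_sqrt.comp (hc_cont.comp (continuous_inv.prodMk continuous_const))
    exact hcont.measurable.div hΞmeas
  have hφb_nonneg : ∀ g, 0 ≤ φb g := fun g => div_nonneg (Real.sqrt_nonneg _) (hΞ_pos g).le
  -- boundedness of φb on the sphere
  have hKn : IsCompact ({g : G | 𝓛 g ≤ (n : ℝ)} ×ˢ (Set.univ : Set B)) :=
    (hproper n).prod isCompact_univ
  have hKnne : ({g : G | 𝓛 g ≤ (n : ℝ)} ×ˢ (Set.univ : Set B)).Nonempty :=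
    ⟨(1, b₀), ⟨by simp only [Set.mem_setOf_eq, hL1]; positivity, trivial⟩⟩
  obtain ⟨qa, hqa, hqamin⟩ := hKn.exists_isMinOn hKnne hc_cont.continuousOn
  obtain ⟨qA, hqA, hqAmax⟩ := hKn.exists_isMaxOn hKnne hc_cont.continuousOn
  have han_pos : 0 < c qa.1 qa.2 := hc_pos _ _
  have hmemKn : ∀ g : G, g ∈ {g : G | 𝓛 g = (n : ℝ)} → g⁻¹ ∈ {g : G | 𝓛 g ≤ (n : ℝ)} := by
    intro g hg
    simp only [Set.mem_setOf_eq] at hg ⊢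
    rw [hLinv, hg]
  have hφb_bdd : ∀ g ∈ {g : G | 𝓛 g = (n : ℝ)},
      φb g ≤ Real.sqrt (c qA.1 qA.2) / Real.sqrt (c qa.1 qa.2) := by
    intro g hg
    have hginv := hmemKn g hg
    have hnum : Real.sqrt (c g⁻¹ b) ≤ Real.sqrt (c qA.1 qA.2) :=
      Real.sqrt_le_sqrt (hqAmax (Set.mk_mem_prod hginv trivial))
    have hden : Real.sqrt (c qa.1 qa.2) ≤ Ξ g := by
      rw [hΞ g]
      have hpt : ∀ b' : B, Real.sqrt (c qa.1 qa.2) ≤ Real.sqrt (c g⁻¹ b') := fun b' =>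
        Real.sqrt_le_sqrt (hqamin (Set.mk_mem_prod hginv trivial))
      calc Real.sqrt (c qa.1 qa.2) = ∫ _b', Real.sqrt (c qa.1 qa.2) ∂ν := by simp
        _ ≤ ∫ b', Real.sqrt (c g⁻¹ b') ∂ν := integral_mono (integrable_const _) (hintB g⁻¹) hpt
    exact div_le_div₀ (Real.sqrt_nonneg _) hnum (Real.sqrt_pos.2 han_pos) hden
  -- integrability of φb on the sphere
  have hInt : IntegrableOn φb {g : G | 𝓛 g = (n : ℝ)} μG := by
    apply Integrable.mono' (integrableOn_const (C := Real.sqrt (c qA.1 qA.2) / Real.sqrt (c qa.1 qa.2)) hlt.ne)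
      hφb_meas.aestronglyMeasurable.restrict
    refine (ae_restrict_iff' hCn_meas).2 (ae_of_all _ ?_)
    intro g hg
    rw [Real.norm_eq_abs, abs_of_nonneg (hφb_nonneg g)]
    exact hφb_bdd g hg
  have hIntS : ∀ γ : ↥Λ, γ ∈ F → IntegrableOn φb ((γ : G) • G₀) μG := fun γ hγ =>
    hInt.mono_set (hcoset_sub γ hγ)
  -- Step 1 : lower bound for the coset integrals
  have hstep1 : ∀ γ : ↥Λ, γ ∈ F →
      δ * h₀ * φb (γ : G) ≤ ∫ g in ((γ : G) • G₀), φb g ∂μG := by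
    intro γ hγ
    have hconst : IntegrableOn (fun _ : G => δ * φb (γ : G)) ((γ : G) • G₀) μG :=
      integrableOn_const (by rw [hμS]; exact hμG₀_lt.ne)
    have hmono := setIntegral_mono_on hconst (hIntS γ hγ) (hSmeas (γ : G))
      (fun g hg => hφcomp (γ : G) g hg b)
    rw [setIntegral_const, measureReal_def, hμS] at hmono
    calc δ * h₀ * φb (γ : G) = h₀ • (δ * φb (γ : G)) := by rw [smul_eq_mul]; ring
      _ ≤ _ := hmono
  -- Step 2 : bounded multiplicity
  set f : G → ℝ≥0∞ := fun g => ENNReal.ofReal (φb g) with hfdef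
  have hfmeas : Measurable f := hφb_meas.ennreal_ofReal
  have hmult : ∀ g : G, (∑ γ ∈ F, ((γ : G) • G₀).indicator f g)
      ≤ (M : ℝ≥0∞) * ({g : G | 𝓛 g = (n : ℝ)}).indicator f g := by
    intro g
    have hind : ∀ γ : ↥Λ, ((γ : G) • G₀).indicator f g
        = if g ∈ (γ : G) • G₀ then f g else 0 := fun γ => Set.indicator_apply _ _ _
    simp_rw [hind]
    rw [← Finset.sum_filter, Finset.sum_const, nsmul_eq_mul]
    set T := F.filter (fun γ : ↥Λ => g ∈ (γ : G) • G₀) with hTdef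
    rcases T.eq_empty_or_nonempty with hT | hT
    · rw [hT]
      simp
    · obtain ⟨γ₀, hγ₀⟩ := hT
      have hγ₀F : γ₀ ∈ F := (Finset.mem_filter.1 hγ₀).1
      have hgS₀ : g ∈ (γ₀ : G) • G₀ := (Finset.mem_filter.1 hγ₀).2
      have hgCn : g ∈ {g : G | 𝓛 g = (n : ℝ)} := hcoset_sub γ₀ hγ₀F hgS₀
      rw [Set.indicator_of_mem hgCn]
      apply mul_le_mul_left
      have hcard : T.card ≤ M := by
        apply Finset.card_le_card_of_injOn (fun γ => γ₀⁻¹ * γ)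
        · intro γ hγ
          rw [Finset.mem_coe, Set.Finite.mem_toFinset]
          have hgS : g ∈ (γ : G) • G₀ := (Finset.mem_filter.1 hγ).2
          rcases hgS₀ with ⟨k₀, hk₀, hk₀g⟩
          rcases hgS with ⟨k, hk, hkg⟩
          have hk₀g' : (γ₀ : G) * k₀ = g := hk₀g
          have hkg' : (γ : G) * k = g := hkg
          have hval : ((γ₀⁻¹ * γ : ↥Λ) : G) = k₀ * k⁻¹ := by
            push_cast
            have h1 : (γ₀ : G)⁻¹ = k₀ * g⁻¹ := by rw [← hk₀g']; group
            have h2 : (γ : G) = g * k⁻¹ := by rw [← hkg']; group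
            rw [h1, h2]; group
          show 𝓛 ((γ₀⁻¹ * γ : ↥Λ) : G) = ((0 : ℕ) : ℝ)
          rw [hval, Nat.cast_zero]
          have hle : 𝓛 (k₀ * k⁻¹) ≤ 0 := by
            have := hLmul k₀ k⁻¹
            rw [hLinv] at this
            have hk₀0 : 𝓛 k₀ = 0 := hk₀
            have hk0 : 𝓛 k = 0 := hk
            rw [hk₀0, hk0, add_zero] at this
            exact this
          exact le_antisymm hle (hLnn _)
        · intro x _ y _ hxy
          exact mul_left_cancel hxy
      exact_mod_cast hcard
  have hsum_le : (∑ γ ∈ F, ∫⁻ g in ((γ : G) • G₀), f g ∂μG)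
      ≤ (M : ℝ≥0∞) * ∫⁻ g in {g : G | 𝓛 g = (n : ℝ)}, f g ∂μG := by
    calc (∑ γ ∈ F, ∫⁻ g in ((γ : G) • G₀), f g ∂μG)
        = ∑ γ ∈ F, ∫⁻ g, ((γ : G) • G₀).indicator f g ∂μG := by
          refine Finset.sum_congr rfl fun γ _ => ?_
          rw [lintegral_indicator (hSmeas (γ : G)) f]
      _ = ∫⁻ g, (∑ γ ∈ F, ((γ : G) • G₀).indicator f g) ∂μG :=
          (lintegral_finset_sum (f := fun (γ : ↥Λ) => ((γ : G) • G₀).indicator f) F (fun γ _ => hfmeas.indicator (hSmeas (γ : G)))).symm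
      _ ≤ ∫⁻ g, (M : ℝ≥0∞) * ({g : G | 𝓛 g = (n : ℝ)}).indicator f g ∂μG :=
          lintegral_mono hmult
      _ = (M : ℝ≥0∞) * ∫⁻ g, ({g : G | 𝓛 g = (n : ℝ)}).indicator f g ∂μG :=
          lintegral_const_mul _ (hfmeas.indicator hCn_meas)
      _ = _ := by rw [lintegral_indicator hCn_meas f]
  -- Step 2 in real form
  have hI_nn : 0 ≤ ∫ g in {g : G | 𝓛 g = (n : ℝ)}, φb g ∂μG :=
    setIntegral_nonneg hCn_meas (fun g _ => hφb_nonneg g)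
  have hkey2 : (∑ γ ∈ F, ∫ g in ((γ : G) • G₀), φb g ∂μG)
      ≤ (M : ℝ) * ∫ g in {g : G | 𝓛 g = (n : ℝ)}, φb g ∂μG := by
    have hRHSnn : 0 ≤ (M : ℝ) * ∫ g in {g : G | 𝓛 g = (n : ℝ)}, φb g ∂μG :=
      mul_nonneg (Nat.cast_nonneg _) hI_nn
    rw [← ENNReal.ofReal_le_ofReal_iff hRHSnn]
    have hSnn : ∀ γ ∈ F, 0 ≤ ∫ g in ((γ : G) • G₀), φb g ∂μG := fun γ _ =>
      setIntegral_nonneg (hSmeas (γ : G)) (fun g _ => hφb_nonneg g)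
    have e1 : ∀ γ ∈ F, ENNReal.ofReal (∫ g in ((γ : G) • G₀), φb g ∂μG)
        = ∫⁻ g in ((γ : G) • G₀), f g ∂μG := fun γ hγ =>
      ofReal_integral_eq_lintegral_ofReal (hIntS γ hγ) (ae_of_all _ hφb_nonneg)
    have e2 : ENNReal.ofReal (∫ g in {g : G | 𝓛 g = (n : ℝ)}, φb g ∂μG)
        = ∫⁻ g in {g : G | 𝓛 g = (n : ℝ)}, f g ∂μG :=
      ofReal_integral_eq_lintegral_ofReal hInt (ae_of_all _ hφb_nonneg)
    calc ENNReal.ofReal (∑ γ ∈ F, ∫ g in ((γ : G) • G₀), φb g ∂μG)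
        = ∑ γ ∈ F, ENNReal.ofReal (∫ g in ((γ : G) • G₀), φb g ∂μG) :=
          ENNReal.ofReal_sum_of_nonneg hSnn
      _ = ∑ γ ∈ F, ∫⁻ g in ((γ : G) • G₀), f g ∂μG := Finset.sum_congr rfl e1
      _ ≤ (M : ℝ≥0∞) * ∫⁻ g in {g : G | 𝓛 g = (n : ℝ)}, f g ∂μG := hsum_le
      _ = ENNReal.ofReal ((M : ℝ) * ∫ g in {g : G | 𝓛 g = (n : ℝ)}, φb g ∂μG) := by
          rw [ENNReal.ofReal_mul (Nat.cast_nonneg _), e2, ENNReal.ofReal_natCast]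
  -- combine steps
  set I : ℝ := ∫ g in {g : G | 𝓛 g = (n : ℝ)}, φb g ∂μG with hIdef
  set Sφ : ℝ := ∑ γ ∈ F, φb (γ : G) with hSdef
  have hS1 : δ * h₀ * Sφ ≤ (M : ℝ) * I := by
    calc δ * h₀ * Sφ = ∑ γ ∈ F, δ * h₀ * φb (γ : G) := by rw [hSdef, Finset.mul_sum]
      _ ≤ ∑ γ ∈ F, ∫ g in ((γ : G) • G₀), φb g ∂μG := Finset.sum_le_sum hstep1
      _ ≤ (M : ℝ) * I := hkey2
  -- growth estimate
  set V : ℝ := (μG {g : G | 𝓛 g = (n : ℝ)}).toReal with hVdef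
  have hV : 0 < V := ENNReal.toReal_pos hpos.ne' hlt.ne
  set q : ℝ := (F.card : ℝ) with hqdef
  have hq : 0 < q := by
    rw [hqdef]
    exact_mod_cast Finset.card_pos.2 hne
  have hgrw := hN n hn
  have hlhs_pos : 0 < ENNReal.ofReal m * μG {g : G | 𝓛 g = (n : ℝ)} :=
    ENNReal.mul_pos (ENNReal.ofReal_pos.2 hm).ne' hpos.ne'
  have hc₀q_pos : 0 < c₀ * q := ENNReal.ofReal_pos.1 (lt_of_lt_of_le hlhs_pos hgrw)
  have hmV : m * V ≤ c₀ * q := by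
    have := ENNReal.toReal_mono ENNReal.ofReal_ne_top hgrw
    rwa [ENNReal.toReal_mul, ENNReal.toReal_ofReal hm.le,
      ENNReal.toReal_ofReal hc₀q_pos.le] at this
  -- final arithmetic
  have hSnn2 : 0 ≤ Sφ := Finset.sum_nonneg (fun γ _ => hφb_nonneg _)
  refine ⟨mul_nonneg (inv_nonneg.2 hq.le) hSnn2, ?_⟩
  show q⁻¹ * Sφ ≤ (M : ℝ) * c₀ / (δ * h₀ * m) * V⁻¹ * I
  have hδh : 0 < δ * h₀ := mul_pos hδ_pos hh₀
  have hmVpos : 0 < m * V := mul_pos hm hV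
  rw [inv_mul_le_iff₀ hq]
  have h2 : Sφ ≤ (M : ℝ) * I / (δ * h₀) := by
    rw [le_div_iff₀ hδh]
    nlinarith [hS1]
  refine h2.trans ?_
  rw [div_le_iff₀ hδh]
  have expand : q * ((M : ℝ) * c₀ / (δ * h₀ * m) * V⁻¹ * I) * (δ * h₀)
      = (c₀ * q) * ((M : ℝ) * I) / (m * V) := by
    field_simp
  rw [expand, le_div_iff₀ hmVpos]
  have hMI : 0 ≤ (M : ℝ) * I := mul_nonneg (Nat.cast_nonneg _) hI_nn
  nlinarith [mul_le_mul_of_nonneg_left hmV hMI]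
end
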